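/- arXiv:2402.04799 — 10 statements merged into one kernel-verified Lean document; each statement's English description precedes it below -/
import Mathlib

section
/- Let U ∈ ℝ^{d×n} be a frame, z ∈ ℝ^n a positive vector, and T ⊆ [n] a subset. For α > 0 let z(α) := z ∘ (1_{T^c} + α·1_T) denote the vector obtained from z by multiplying the coordinates in T by α. Then for each j ∈ T the function α ↦ lev^U_j(z(α)) is non-decreasing on (0,∞), and for each j ∉ T the function α ↦ lev^U_j(z(α)) is non-increasing on (0,∞). -/
open Matrix BigOperators

/-- Leverage scores: `lev^U_j(z) = z_j · u_jᵀ (U Z Uᵀ)⁻¹ u_j`. -/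
noncomputable def lev {d n : ℕ} (U : Matrix (Fin d) (Fin n) ℝ) (z : Fin n → ℝ)
    (j : Fin n) : ℝ :=
  z j * ((fun i => U i j) ⬝ᵥ ((U * Matrix.diagonal z * Uᵀ)⁻¹ *ᵥ fun i => U i j))

/-- `scale z T α = z ∘ (1_{Tᶜ} + α·1_T)`: multiply the coordinates of `z` in `T` by `α`. -/
def scale {n : ℕ} (z : Fin n → ℝ) (T : Finset (Fin n)) (α : ℝ) : Fin n → ℝ :=
  fun j => if j ∈ T then α * z j else z j

section helpers

variable {d n : ℕ}

private lemma quad_sandwich (U : Matrix (Fin d) (Fin n) ℝ) (w : Fin n → ℝ) (x : Fin d → ℝ) :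
    x ⬝ᵥ ((U * Matrix.diagonal w * Uᵀ) *ᵥ x) = ∑ j, w j * ((Uᵀ *ᵥ x) j) ^ 2 := by
  have h1 : (U * Matrix.diagonal w * Uᵀ) *ᵥ x
      = U *ᵥ (Matrix.diagonal w *ᵥ (Uᵀ *ᵥ x)) := by
    simp [mulVec_mulVec, Matrix.mul_assoc]
  rw [h1, dotProduct_mulVec, ← Matrix.mulVec_transpose]
  simp [dotProduct, Matrix.mulVec_diagonal, pow_two]
  ring_nf
  exact Finset.sum_congr rfl fun j _ => by ring

private lemma sandwich_posSemidef (U : Matrix (Fin d) (Fin n) ℝ) (w : Fin n → ℝ)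
    (hw : ∀ j, 0 ≤ w j) : (U * Matrix.diagonal w * Uᵀ).PosSemidef := by
  refine Matrix.posSemidef_iff_dotProduct_mulVec.mpr ⟨?_, ?_⟩
  · have h := ((Matrix.posSemidef_diagonal_iff.mpr
      (fun j => by simpa using hw j)).mul_mul_conjTranspose_same U).1
    simpa using h
  · intro x
    have := quad_sandwich U w x
    simp only [star_trivial] at *
    rw [this]
    exact Finset.sum_nonneg fun j _ => mul_nonneg (hw j) (sq_nonneg _)

private lemma rows_linearIndependent (U : Matrix (Fin d) (Fin n) ℝ) (hU : U.rank = d) :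
    LinearIndependent ℝ (fun i => U i) := by
  rw [linearIndependent_iff_card_eq_finrank_span]
  have h2 := U.rank_eq_finrank_span_row
  rw [hU] at h2
  rw [Fintype.card_fin]
  exact h2

private lemma sandwich_posDef (U : Matrix (Fin d) (Fin n) ℝ) (hU : U.rank = d)
    (w : Fin n → ℝ) (hw : ∀ j, 0 < w j) : (U * Matrix.diagonal w * Uᵀ).PosDef := by
  refine Matrix.posDef_iff_dotProduct_mulVec.mpr ⟨(sandwich_posSemidef U w fun j => (hw j).le).1, fun x hx => ?_⟩
  have hy : Uᵀ *ᵥ x ≠ 0 := by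
    have hinj : Function.Injective (Uᵀ.mulVec) := by
      rw [Matrix.mulVec_injective_iff]
      exact rows_linearIndependent U hU
    intro h
    exact hx (hinj (by simpa using h))
  simp only [star_trivial]
  rw [quad_sandwich]
  obtain ⟨j, hj⟩ := Function.ne_iff.mp hy
  rw [Pi.zero_apply] at hj
  refine Finset.sum_pos' (fun k _ => mul_nonneg (hw k).le (sq_nonneg _)) ⟨j, Finset.mem_univ j, ?_⟩
  exact mul_pos (hw j) (sq_pos_of_ne_zero hj)

private lemma quad_lower_bound {M : Matrix (Fin d) (Fin d) ℝ} (hM : M.PosDef)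
    (x y : Fin d → ℝ) :
    2 * (y ⬝ᵥ x) - y ⬝ᵥ (M *ᵥ y) ≤ x ⬝ᵥ (M⁻¹ *ᵥ x) := by
  have hdet : IsUnit M.det := (isUnit_iff_ne_zero.mpr hM.det_pos.ne')
  have hMM : M * M⁻¹ = 1 := Matrix.mul_nonsing_inv M hdet
  have hsymm : Mᵀ = M := by
    have := hM.1
    simpa using congrArg id this
  have hsym' : (M⁻¹)ᵀ = M⁻¹ := by
    rw [Matrix.transpose_nonsing_inv, hsymm]
  set w : Fin d → ℝ := y - M⁻¹ *ᵥ x with hw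
  have h0 : 0 ≤ w ⬝ᵥ (M *ᵥ w) := by
    have := hM.posSemidef.dotProduct_mulVec_nonneg w
    simpa using this
  have hexp : w ⬝ᵥ (M *ᵥ w)
      = y ⬝ᵥ (M *ᵥ y) - 2 * (y ⬝ᵥ x) + x ⬝ᵥ (M⁻¹ *ᵥ x) := by
    have e1 : M *ᵥ (M⁻¹ *ᵥ x) = x := by
      rw [Matrix.mulVec_mulVec, hMM, Matrix.one_mulVec]
    have e2 : y ⬝ᵥ (M *ᵥ (M⁻¹ *ᵥ x)) = y ⬝ᵥ x := by rw [e1]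
    have e3 : (M⁻¹ *ᵥ x) ⬝ᵥ (M *ᵥ y) = x ⬝ᵥ y := by
      rw [dotProduct_mulVec, ← Matrix.mulVec_transpose, Matrix.mulVec_mulVec, hsymm, hMM,
        Matrix.one_mulVec]
    have e4 : (M⁻¹ *ᵥ x) ⬝ᵥ (M *ᵥ (M⁻¹ *ᵥ x)) = x ⬝ᵥ (M⁻¹ *ᵥ x) := by
      rw [e1, dotProduct_mulVec, ← Matrix.mulVec_transpose, hsym', dotProduct_comm]
    rw [hw]
    simp only [Matrix.mulVec_sub, sub_dotProduct, dotProduct_sub]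
    rw [e2, e3, e4, dotProduct_comm x y]
    ring
  linarith

private lemma inv_quad_anti {M N : Matrix (Fin d) (Fin d) ℝ} (hM : M.PosDef) (hN : N.PosDef)
    (h : (N - M).PosSemidef) (x : Fin d → ℝ) :
    x ⬝ᵥ (N⁻¹ *ᵥ x) ≤ x ⬝ᵥ (M⁻¹ *ᵥ x) := by
  set y : Fin d → ℝ := N⁻¹ *ᵥ x with hy
  have hNN : N * N⁻¹ = 1 := Matrix.mul_nonsing_inv N (isUnit_iff_ne_zero.mpr hN.det_pos.ne')
  have hsymN : Nᵀ = N := by simpa using congrArg id hN.1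
  have e1 : N *ᵥ y = x := by rw [hy, Matrix.mulVec_mulVec, hNN, Matrix.one_mulVec]
  have e2 : y ⬝ᵥ (N *ᵥ y) = y ⬝ᵥ x := by rw [e1]
  have hyx : x ⬝ᵥ (N⁻¹ *ᵥ x) = y ⬝ᵥ x := by
    rw [hy, dotProduct_mulVec, ← Matrix.mulVec_transpose, Matrix.transpose_nonsing_inv, hsymN]
  have hMN : y ⬝ᵥ (M *ᵥ y) ≤ y ⬝ᵥ (N *ᵥ y) := by
    have := h.dotProduct_mulVec_nonneg y
    simp only [star_trivial, Matrix.sub_mulVec, dotProduct_sub] at this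
    linarith
  have hkey := quad_lower_bound hM x y
  have : 2 * (y ⬝ᵥ x) - y ⬝ᵥ (N *ᵥ y) ≤ x ⬝ᵥ (M⁻¹ *ᵥ x) := by linarith
  rw [e2] at this
  linarith [hyx, this]

end helpers

/-- Uniformly scaling up the coordinates in `T` increases the leverage scores inside `T`
and decreases the leverage scores outside `T`. -/
theorem lev_monotone_scaleUp {d n : ℕ} (U : Matrix (Fin d) (Fin n) ℝ)
    (hU : U.rank = d) (z : Fin n → ℝ) (hz : ∀ j, 0 < z j) (T : Finset (Fin n)) :
    (∀ j ∈ T, MonotoneOn (fun α => lev U (scale z T α) j) (Set.Ioi (0 : ℝ))) ∧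
    (∀ j ∉ T, AntitoneOn (fun α => lev U (scale z T α) j) (Set.Ioi (0 : ℝ))) := by
  classical
  -- the matrix with coordinates outside `T` divided by `α`
  set w : ℝ → Fin n → ℝ := fun α k => if k ∈ T then z k else z k / α with hwdef
  have hwpos : ∀ α : ℝ, 0 < α → ∀ k, 0 < w α k := by
    intro α hα k
    simp only [hwdef]
    split
    · exact hz k
    · exact div_pos (hz k) hα
  have hscalepos : ∀ α : ℝ, 0 < α → ∀ k, 0 < scale z T α k := by
    intro α hα k
    simp only [scale]
    split
    · exact mul_pos hα (hz k)
    · exact hz k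
  -- rewriting `lev` for `α > 0`
  have hlev : ∀ α : ℝ, 0 < α → ∀ j : Fin n,
      lev U (scale z T α) j = scale z T α j / α *
        ((fun i => U i j) ⬝ᵥ ((U * Matrix.diagonal (w α) * Uᵀ)⁻¹ *ᵥ fun i => U i j)) := by
    intro α hα j
    have hsc : scale z T α = α • (w α) := by
      funext k
      simp only [scale, hwdef, Pi.smul_apply, smul_eq_mul]
      split
      · ring
      · field_simp
    have hdiag : U * Matrix.diagonal (scale z T α) * Uᵀ
        = α • (U * Matrix.diagonal (w α) * Uᵀ) := by
      rw [hsc, Matrix.diagonal_smul, Matrix.mul_smul, Matrix.smul_mul]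
    have hdet : IsUnit (U * Matrix.diagonal (w α) * Uᵀ).det :=
      isUnit_iff_ne_zero.mpr (sandwich_posDef U hU (w α) (hwpos α hα)).det_pos.ne'
    have : Invertible α := invertibleOfNonzero (ne_of_gt hα)
    have hinv : (U * Matrix.diagonal (scale z T α) * Uᵀ)⁻¹
        = α⁻¹ • (U * Matrix.diagonal (w α) * Uᵀ)⁻¹ := by
      rw [hdiag, Matrix.inv_smul (k := α) (h := hdet), invOf_eq_inv]
    rw [lev, hinv]
    rw [Matrix.smul_mulVec, dotProduct_smul]
    simp only [smul_eq_mul]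
    ring
  -- monotonicity of the sandwich matrices
  have hsub : ∀ α β : ℝ, 0 < α → α ≤ β →
      ((U * Matrix.diagonal (w α) * Uᵀ) - (U * Matrix.diagonal (w β) * Uᵀ)).PosSemidef := by
    intro α β hα hab
    have : (U * Matrix.diagonal (w α) * Uᵀ) - (U * Matrix.diagonal (w β) * Uᵀ)
        = U * Matrix.diagonal (fun k => w α k - w β k) * Uᵀ := by
      rw [← Matrix.diagonal_sub, ← Matrix.sub_mul, ← Matrix.mul_sub]
    rw [this]
    refine sandwich_posSemidef U _ fun k => ?_
    simp only [hwdef]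
    split
    · simp
    · rw [sub_nonneg]
      exact div_le_div_of_nonneg_left (hz k).le hα hab
  constructor
  · -- j ∈ T : monotone
    intro j hj α hα β hβ hab
    simp only [Set.mem_Ioi] at hα hβ
    show lev U (scale z T α) j ≤ lev U (scale z T β) j
    rw [hlev α hα j, hlev β hβ j]
    have hsj : ∀ γ : ℝ, 0 < γ → scale z T γ j / γ = z j := by
      intro γ hγ
      simp only [scale, if_pos hj]
      field_simp
    rw [hsj α hα, hsj β hβ]
    have hPD_α := sandwich_posDef U hU (w α) (hwpos α hα)
    have hPD_β := sandwich_posDef U hU (w β) (hwpos β hβ)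
    have := inv_quad_anti hPD_β hPD_α (hsub α β hα hab) (fun i => U i j)
    exact mul_le_mul_of_nonneg_left this (hz j).le
  · -- j ∉ T : antitone
    intro j hj α hα β hβ hab
    simp only [Set.mem_Ioi] at hα hβ
    -- here use the original form with scale matrices
    have hAsub : ((U * Matrix.diagonal (scale z T β) * Uᵀ)
        - (U * Matrix.diagonal (scale z T α) * Uᵀ)).PosSemidef := by
      have : (U * Matrix.diagonal (scale z T β) * Uᵀ) - (U * Matrix.diagonal (scale z T α) * Uᵀ)
          = U * Matrix.diagonal (fun k => scale z T β k - scale z T α k) * Uᵀ := by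
        rw [← Matrix.diagonal_sub, ← Matrix.sub_mul, ← Matrix.mul_sub]
      rw [this]
      refine sandwich_posSemidef U _ fun k => ?_
      simp only [scale]
      split
      · have := (hz k).le
        nlinarith
      · simp
    have hPD_α := sandwich_posDef U hU (scale z T α) (hscalepos α hα)
    have hPD_β := sandwich_posDef U hU (scale z T β) (hscalepos β hβ)
    have hq := inv_quad_anti hPD_α hPD_β hAsub (fun i => U i j)
    show lev U (scale z T β) j ≤ lev U (scale z T α) j
    simp only [lev]
    have hsj : ∀ γ : ℝ, scale z T γ j = z j := fun γ => if_neg hj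
    rw [hsj α, hsj β]
    exact mul_le_mul_of_nonneg_left hq (hz j).le
end

section
/- Let U ∈ ℝ^{d×n} be a frame, z ∈ ℝ^n a positive vector, c ∈ ℝ^n, and T ⊆ [n] a set with margin γ ≥ 0 (witnessed by threshold ν). Let h(α) := Σ_{j∈T} lev^U_j(z ∘ (1_{T^c} + α·1_T)) be the proxy function. Then for any α ≥ 1 satisfying 0 ≤ h(α) − h(1) ≤ γ, the scaling z' := z ∘ (1_{T^c} + α·1_T) satisfies ‖lev^U(z) − c‖_2² − ‖lev^U(z') − c‖_2² ≥ 2γ·(h(α) − h(1)). -/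
open Matrix BigOperators

/-- The proxy function `h(α) = Σ_{j∈T} lev^U_j(z ∘ (1_{Tᶜ} + α·1_T))`. -/
noncomputable def proxyh {d n : ℕ} (U : Matrix (Fin d) (Fin n) ℝ) (z : Fin n → ℝ)
    (T : Finset (Fin n)) (α : ℝ) : ℝ :=
  ∑ j ∈ T, lev U (scale z T α) j

section Aux

variable {d n : ℕ}

lemma real_psd_nonneg {A : Matrix (Fin d) (Fin d) ℝ} (hA : A.PosSemidef) (x : Fin d → ℝ) :
    0 ≤ x ⬝ᵥ (A *ᵥ x) := by
  simpa using hA.dotProduct_mulVec_nonneg x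

lemma sandwich_psd (U : Matrix (Fin d) (Fin n) ℝ) {w : Fin n → ℝ} (hw : ∀ j, 0 ≤ w j) :
    (U * Matrix.diagonal w * Uᵀ).PosSemidef := by
  have h := Matrix.PosSemidef.diagonal (R := ℝ) (n := Fin n) (d := w) hw
  have := h.mul_mul_conjTranspose_same U
  simpa [Matrix.conjTranspose_eq_transpose_of_trivial] using this

lemma transpose_mulVec_ne (U : Matrix (Fin d) (Fin n) ℝ) (hU : U.rank = d)
    {x : Fin d → ℝ} (hx : x ≠ 0) : Uᵀ *ᵥ x ≠ 0 := by
  have hrank : Uᵀ.rank = d := by rw [Matrix.rank_transpose, hU]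
  have hinj : Function.Injective Uᵀ.mulVecLin := by
    rw [← LinearMap.ker_eq_bot]
    have h1 := Uᵀ.mulVecLin.finrank_range_add_finrank_ker
    rw [show Module.finrank ℝ (LinearMap.range Uᵀ.mulVecLin) = d from hrank] at h1
    simp only [Module.finrank_pi, Fintype.card_fin] at h1
    have : Module.finrank ℝ (LinearMap.ker Uᵀ.mulVecLin) = 0 := by omega
    exact Submodule.finrank_eq_zero.mp this
  intro h
  apply hx
  have : Uᵀ.mulVecLin x = Uᵀ.mulVecLin 0 := by
    rw [map_zero, Matrix.mulVecLin_apply]; exact h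
  exact hinj this

lemma sandwich_posdef (U : Matrix (Fin d) (Fin n) ℝ) (hU : U.rank = d) {w : Fin n → ℝ}
    (hw : ∀ j, 0 < w j) : (U * Matrix.diagonal w * Uᵀ).PosDef := by
  refine Matrix.PosDef.of_dotProduct_mulVec_pos (sandwich_psd U (fun j => (hw j).le)).1 fun x hx => ?_
  have hy : Uᵀ *ᵥ x ≠ 0 := transpose_mulVec_ne U hU hx
  set y := Uᵀ *ᵥ x with hydef
  have hquad : star x ⬝ᵥ ((U * Matrix.diagonal w * Uᵀ) *ᵥ x) = ∑ j, w j * (y j)^2 := by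
    simp only [star_trivial, ← Matrix.mulVec_mulVec, Matrix.dotProduct_mulVec (A := U)]
    rw [← Matrix.mulVec_transpose]
    simp [Matrix.mulVec_diagonal, dotProduct, hydef]
    ring_nf
    exact Finset.sum_congr rfl fun j _ => by ring
  rw [hquad]
  obtain ⟨j0, hj0⟩ : ∃ j, y j ≠ 0 := by
    by_contra h
    push_neg at h
    exact hy (funext h)
  refine Finset.sum_pos' (fun j _ => mul_nonneg (hw j).le (sq_nonneg _)) ⟨j0, Finset.mem_univ _, ?_⟩
  exact mul_pos (hw j0) (by positivity)

lemma inv_quad_le {A B : Matrix (Fin d) (Fin d) ℝ} (hA : A.PosDef) (hB : B.PosDef)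
    (hAB : (B - A).PosSemidef) (x : Fin d → ℝ) :
    x ⬝ᵥ (B⁻¹ *ᵥ x) ≤ x ⬝ᵥ (A⁻¹ *ᵥ x) := by
  set y := B⁻¹ *ᵥ x with hy
  set w := A⁻¹ *ᵥ x with hw
  have hAdet : IsUnit A.det := hA.det_pos.ne'.isUnit
  have hBdet : IsUnit B.det := hB.det_pos.ne'.isUnit
  have hBy : B *ᵥ y = x := by
    rw [hy, Matrix.mulVec_mulVec, Matrix.mul_nonsing_inv _ hBdet, Matrix.one_mulVec]
  have hAw : A *ᵥ w = x := by
    rw [hw, Matrix.mulVec_mulVec, Matrix.mul_nonsing_inv _ hAdet, Matrix.one_mulVec]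
  have hAt : Aᵀ = A := by
    have := hA.1
    rwa [Matrix.IsHermitian, Matrix.conjTranspose_eq_transpose_of_trivial] at this
  have hsym : w ⬝ᵥ (A *ᵥ y) = x ⬝ᵥ y := by
    rw [Matrix.dotProduct_mulVec, ← Matrix.mulVec_transpose, hAt, hAw]
  have h1 : 0 ≤ (w - y) ⬝ᵥ (A *ᵥ (w - y)) := real_psd_nonneg hA.posSemidef _
  have h2 : 0 ≤ y ⬝ᵥ ((B - A) *ᵥ y) := real_psd_nonneg hAB _
  have h2' : y ⬝ᵥ (A *ᵥ y) ≤ y ⬝ᵥ x := by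
    rw [Matrix.sub_mulVec, dotProduct_sub, hBy] at h2
    linarith
  have h1' : 0 ≤ w ⬝ᵥ x - x ⬝ᵥ y - y ⬝ᵥ x + y ⬝ᵥ (A *ᵥ y) := by
    rw [Matrix.mulVec_sub, hAw, sub_dotProduct, dotProduct_sub,
      dotProduct_sub, hsym] at h1
    linarith
  have hc1 : w ⬝ᵥ x = x ⬝ᵥ w := dotProduct_comm _ _
  have hc2 : y ⬝ᵥ x = x ⬝ᵥ y := dotProduct_comm _ _
  linarith

end Aux

section Aux2

variable {d n : ℕ}

lemma sandwich_sub (U : Matrix (Fin d) (Fin n) ℝ) (a b : Fin n → ℝ) :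
    U * Matrix.diagonal a * Uᵀ - U * Matrix.diagonal b * Uᵀ
      = U * Matrix.diagonal (a - b) * Uᵀ := by
  rw [← Matrix.sub_mul, ← Matrix.mul_sub, Matrix.diagonal_sub]
  rfl

lemma lev_sum (U : Matrix (Fin d) (Fin n) ℝ) (hU : U.rank = d) {w : Fin n → ℝ}
    (hw : ∀ j, 0 < w j) : ∑ j, lev U w j = (d : ℝ) := by
  set M := U * Matrix.diagonal w * Uᵀ with hM
  have hMdet : IsUnit M.det := (sandwich_posdef U hU hw).det_pos.ne'.isUnit
  have key : ∀ j, lev U w j = (Uᵀ * M⁻¹ * U * Matrix.diagonal w) j j := by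
    intro j
    rw [Matrix.mul_diagonal]
    simp only [lev, ← hM, Matrix.mul_apply, dotProduct, Matrix.mulVec,
      Matrix.transpose_apply, Finset.sum_mul, Finset.mul_sum]
    rw [Finset.sum_comm]
    refine Finset.sum_congr rfl fun i _ => Finset.sum_congr rfl fun k _ => by ring
  calc ∑ j, lev U w j = ∑ j, (Uᵀ * M⁻¹ * U * Matrix.diagonal w) j j :=
        Finset.sum_congr rfl fun j _ => key j
    _ = Matrix.trace (Uᵀ * (M⁻¹ * U * Matrix.diagonal w)) := by
        rw [Matrix.trace, ← Matrix.mul_assoc, ← Matrix.mul_assoc]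
        rfl
    _ = Matrix.trace ((M⁻¹ * U * Matrix.diagonal w) * Uᵀ) := Matrix.trace_mul_comm _ _
    _ = Matrix.trace (M⁻¹ * M) := by rw [hM]; simp only [Matrix.mul_assoc]
    _ = (d : ℝ) := by rw [Matrix.nonsing_inv_mul _ hMdet, Matrix.trace_one]; simp

lemma lev_mono (U : Matrix (Fin d) (Fin n) ℝ) (hU : U.rank = d)
    (z : Fin n → ℝ) (hz : ∀ j, 0 < z j) (T : Finset (Fin n)) (α : ℝ) (hα : 1 ≤ α) :
    (∀ j ∈ T, lev U z j ≤ lev U (scale z T α) j) ∧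
    (∀ j ∉ T, lev U (scale z T α) j ≤ lev U z j) := by
  have hα0 : (0:ℝ) < α := lt_of_lt_of_le one_pos hα
  set z' := scale z T α with hz'def
  have hz' : ∀ j, 0 < z' j := by
    intro j
    show 0 < (if j ∈ T then α * z j else z j)
    split_ifs with h
    · exact mul_pos hα0 (hz j)
    · exact hz j
  set M := U * Matrix.diagonal z * Uᵀ with hM
  set M' := U * Matrix.diagonal z' * Uᵀ with hM'
  have hMpd : M.PosDef := sandwich_posdef U hU hz
  have hM'pd : M'.PosDef := sandwich_posdef U hU hz'
  have hMdet : IsUnit M.det := hMpd.det_pos.ne'.isUnit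
  set B := U * Matrix.diagonal (fun j => α * z j) * Uᵀ with hB
  have hBpd : B.PosDef := sandwich_posdef U hU (fun j => mul_pos hα0 (hz j))
  have hBsmul : B = α • M := by
    rw [hB, hM, show (fun j => α * z j) = α • z from rfl, Matrix.diagonal_smul,
      Matrix.mul_smul, Matrix.smul_mul]
  have hBinv : B⁻¹ = α⁻¹ • M⁻¹ := by
    apply Matrix.inv_eq_right_inv
    rw [hBsmul, Matrix.smul_mul, Matrix.mul_smul, smul_smul,
      Matrix.mul_nonsing_inv _ hMdet, mul_inv_cancel₀ hα0.ne', one_smul]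
  have hdiff1 : (M' - M).PosSemidef := by
    rw [hM', hM, sandwich_sub]
    apply sandwich_psd
    intro j
    show 0 ≤ z' j - z j
    show 0 ≤ (if j ∈ T then α * z j else z j) - z j
    split_ifs with h
    · nlinarith [hz j]
    · simp
  have hdiff2 : (B - M').PosSemidef := by
    rw [hB, hM', sandwich_sub]
    apply sandwich_psd
    intro j
    show 0 ≤ α * z j - z' j
    show 0 ≤ α * z j - (if j ∈ T then α * z j else z j)
    split_ifs with h
    · simp
    · nlinarith [hz j]
  constructor
  · intro j hj
    set u : Fin d → ℝ := fun i => U i j with hu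
    have h := inv_quad_le hM'pd hBpd hdiff2 u
    rw [hBinv, Matrix.smul_mulVec, dotProduct_smul, smul_eq_mul] at h
    have h2 : α * (α⁻¹ * (u ⬝ᵥ M⁻¹ *ᵥ u)) ≤ α * (u ⬝ᵥ M'⁻¹ *ᵥ u) :=
      mul_le_mul_of_nonneg_left h hα0.le
    rw [← mul_assoc, mul_inv_cancel₀ hα0.ne', one_mul] at h2
    show z j * (u ⬝ᵥ M⁻¹ *ᵥ u) ≤ z' j * (u ⬝ᵥ M'⁻¹ *ᵥ u)
    have hzj' : z' j = α * z j := by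
      show (if j ∈ T then α * z j else z j) = α * z j
      simp [hj]
    rw [hzj']
    nlinarith [hz j]
  · intro j hj
    set u : Fin d → ℝ := fun i => U i j with hu
    have h := inv_quad_le hMpd hM'pd hdiff1 u
    show z' j * (u ⬝ᵥ M'⁻¹ *ᵥ u) ≤ z j * (u ⬝ᵥ M⁻¹ *ᵥ u)
    have hzj' : z' j = z j := by
      show (if j ∈ T then α * z j else z j) = z j
      simp [hj]
    rw [hzj']
    exact mul_le_mul_of_nonneg_left h (hz j).le

end Aux2

/-- Progress lemma: if `T` has margin `γ` (witnessed by threshold `ν`) and the update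
step `α ≥ 1` satisfies `0 ≤ h(α) − h(1) ≤ γ`, then scaling up `T` by `α` decreases the
squared error by at least `2γ(h(α) − h(1))`. -/
theorem progress_lemma {d n : ℕ} (U : Matrix (Fin d) (Fin n) ℝ) (hU : U.rank = d)
    (z : Fin n → ℝ) (hz : ∀ j, 0 < z j) (c : Fin n → ℝ) (T : Finset (Fin n))
    (γ ν : ℝ) (hγ : 0 ≤ γ)
    (hmargin₁ : ∀ j ∈ T, lev U z j - c j ≤ ν - γ)
    (hmargin₂ : ∀ j ∉ T, ν + γ ≤ lev U z j - c j)
    (α : ℝ) (hα : 1 ≤ α)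
    (h0 : 0 ≤ proxyh U z T α - proxyh U z T 1)
    (h1 : proxyh U z T α - proxyh U z T 1 ≤ γ) :
    (∑ j, (lev U z j - c j) ^ 2) - (∑ j, (lev U (scale z T α) j - c j) ^ 2)
      ≥ 2 * γ * (proxyh U z T α - proxyh U z T 1) := by
  set z' := scale z T α with hz'def
  have hz' : ∀ j, 0 < z' j := by
    intro j
    show 0 < (if j ∈ T then α * z j else z j)
    split_ifs with h
    · exact mul_pos (lt_of_lt_of_le one_pos hα) (hz j)
    · exact hz j
  have hsum : ∑ j, lev U z j = (d : ℝ) := lev_sum U hU hz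
  have hsum' : ∑ j, lev U z' j = (d : ℝ) := lev_sum U hU hz'
  have hmono := lev_mono U hU z hz T α hα
  have hscale1 : scale z T 1 = z := funext fun j => by simp [scale]
  have hp1 : proxyh U z T 1 = ∑ j ∈ T, lev U z j := by
    rw [proxyh, hscale1]
  have hpα : proxyh U z T α = ∑ j ∈ T, lev U z' j := rfl
  set δ := proxyh U z T α - proxyh U z T 1 with hδ
  have hδT : ∑ j ∈ T, (lev U z' j - lev U z j) = δ := by
    rw [hδ, hp1, hpα, Finset.sum_sub_distrib]
  have hδTc : ∑ j ∈ Tᶜ, (lev U z j - lev U z' j) = δ := by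
    have htot : ∑ j ∈ T, (lev U z j - lev U z' j) + ∑ j ∈ Tᶜ, (lev U z j - lev U z' j)
        = 0 := by
      rw [Finset.sum_add_sum_compl, Finset.sum_sub_distrib, hsum, hsum']
      ring
    have hT' : ∑ j ∈ T, (lev U z j - lev U z' j) = -δ := by
      rw [← hδT, ← Finset.sum_neg_distrib]
      exact Finset.sum_congr rfl fun j _ => by ring
    linarith
  have hub : ∀ j ∈ T, lev U z' j - lev U z j ≤ γ := by
    intro j hj
    have := Finset.single_le_sum (f := fun k => lev U z' k - lev U z k)
      (fun k hk => sub_nonneg.mpr (hmono.1 k hk)) hj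
    rw [hδT] at this
    linarith
  have hubc : ∀ j ∈ Tᶜ, lev U z j - lev U z' j ≤ γ := by
    intro j hj
    have := Finset.single_le_sum (f := fun k => lev U z k - lev U z' k)
      (fun k hk => sub_nonneg.mpr (hmono.2 k (Finset.mem_compl.mp hk))) hj
    rw [hδTc] at this
    linarith
  have hTbound : (γ - 2*ν) * δ
      ≤ ∑ j ∈ T, ((lev U z j - c j)^2 - (lev U z' j - c j)^2) := by
    rw [← hδT, Finset.mul_sum]
    refine Finset.sum_le_sum fun j hj => ?_
    have ha := hmargin₁ j hj
    have ht0 : 0 ≤ lev U z' j - lev U z j := sub_nonneg.mpr (hmono.1 j hj)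
    have ht1 := hub j hj
    nlinarith [mul_nonneg ht0 (by linarith : (0:ℝ) ≤ ν - γ - (lev U z j - c j)),
      mul_nonneg ht0 (by linarith : (0:ℝ) ≤ γ - (lev U z' j - lev U z j))]
  have hTcbound : (2*ν + γ) * δ
      ≤ ∑ j ∈ Tᶜ, ((lev U z j - c j)^2 - (lev U z' j - c j)^2) := by
    rw [← hδTc, Finset.mul_sum]
    refine Finset.sum_le_sum fun j hj => ?_
    have ha := hmargin₂ j (Finset.mem_compl.mp hj)
    have hs0 : 0 ≤ lev U z j - lev U z' j :=
      sub_nonneg.mpr (hmono.2 j (Finset.mem_compl.mp hj))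
    have hs1 := hubc j hj
    nlinarith [mul_nonneg hs0 (by linarith : (0:ℝ) ≤ (lev U z j - c j) - ν - γ),
      mul_nonneg hs0 (by linarith : (0:ℝ) ≤ γ - (lev U z j - lev U z' j))]
  have hsplit : (∑ j, (lev U z j - c j) ^ 2) - (∑ j, (lev U z' j - c j) ^ 2)
      = ∑ j ∈ T, ((lev U z j - c j)^2 - (lev U z' j - c j)^2)
        + ∑ j ∈ Tᶜ, ((lev U z j - c j)^2 - (lev U z' j - c j)^2) := by
    rw [Finset.sum_add_sum_compl, Finset.sum_sub_distrib]
  have hid : (γ - 2*ν) * δ + (2*ν + γ) * δ = 2 * γ * δ := by ring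
  rw [ge_iff_le]
  linarith [hTbound, hTcbound]
end

section
/- Let U ∈ ℝ^{d×n} be a frame, z ∈ ℝ^n a positive vector, c ∈ ℝ^n with Σ_j c_j = d, and T ⊆ [n] a nonempty proper subset with margin γ > 0. Let h(α) := Σ_{j∈T} lev^U_j(z ∘ (1_{T^c} + α·1_T)) be the proxy function. Then: (1) h is non-decreasing on [1,∞); (2) h(α) → rank(U_T) as α → ∞, where U_T is the submatrix of columns indexed by T; (3) Σ_{j∈T} c_j − h(1) ≥ γ; (4) if rank(U_T) ≥ Σ_{j∈T} c_j, then for every δ ∈ [0,γ) there exists a finite α ≥ 1 with h(α) = h(1) + δ. -/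
open Matrix BigOperators

/-- The submatrix of `U` consisting of the columns indexed by `T`. -/
def cols {d n : ℕ} (U : Matrix (Fin d) (Fin n) ℝ) (T : Finset (Fin n)) :
    Matrix (Fin d) {j // j ∈ T} ℝ :=
  Matrix.of fun i j => U i j

lemma kerlem {d n : ℕ} (U : Matrix (Fin d) (Fin n) ℝ) (hU : U.rank = d)
    {x : Fin d → ℝ} (hx : Uᵀ *ᵥ x = 0) : x = 0 := by
  have h1 : Uᵀ.rank = d := by rw [Matrix.rank_transpose]; exact hU
  have h2 := LinearMap.finrank_range_add_finrank_ker (Uᵀ.mulVecLin)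
  rw [Matrix.rank] at h1
  rw [h1] at h2
  simp only [Module.finrank_pi, Fintype.card_fin] at h2
  have h3 : Module.finrank ℝ (LinearMap.ker Uᵀ.mulVecLin) = 0 := by omega
  have h4 : LinearMap.ker Uᵀ.mulVecLin = ⊥ := Submodule.finrank_eq_zero.mp h3
  have : x ∈ LinearMap.ker Uᵀ.mulVecLin := by
    rw [LinearMap.mem_ker, Matrix.mulVecLin_apply]; exact hx
  rw [h4] at this
  simpa using this

lemma quad_eq {d n : ℕ} (U : Matrix (Fin d) (Fin n) ℝ) (w : Fin n → ℝ) (x : Fin d → ℝ) :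
    x ⬝ᵥ ((U * Matrix.diagonal w * Uᵀ) *ᵥ x) = ∑ j, w j * ((Uᵀ *ᵥ x) j)^2 := by
  rw [← Matrix.mulVec_mulVec, ← Matrix.mulVec_mulVec, Matrix.dotProduct_mulVec,
    ← Matrix.mulVec_transpose]
  simp [Matrix.mulVec_diagonal, dotProduct]
  ring_nf
  congr 1; ext j; ring

lemma posDefUDU {d n : ℕ} (U : Matrix (Fin d) (Fin n) ℝ) (hU : U.rank = d)
    {w : Fin n → ℝ} (hw : ∀ j, 0 < w j) : (U * Matrix.diagonal w * Uᵀ).PosDef := by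
  have hpsd : (U * Matrix.diagonal w * Uᵀ).PosSemidef := by
    have := (Matrix.PosSemidef.diagonal (R := ℝ) (fun j => (hw j).le)).mul_mul_conjTranspose_same U
    simpa [Matrix.conjTranspose_eq_transpose_of_trivial] using this
  refine Matrix.PosDef.of_dotProduct_mulVec_pos hpsd.1 (fun x hx => ?_)
  have hy : Uᵀ *ᵥ x ≠ 0 := fun h => hx (kerlem U hU h)
  obtain ⟨j, hj⟩ := Function.ne_iff.mp hy
  simp only [star_trivial]
  rw [quad_eq]
  refine Finset.sum_pos' (fun i _ => mul_nonneg (hw i).le (sq_nonneg _)) ⟨j, Finset.mem_univ j, ?_⟩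
  have hj' : (Uᵀ *ᵥ x) j ≠ 0 := by simpa using hj
  exact mul_pos (hw j) (by positivity)

lemma sum_quad_eq_trace {d n : ℕ} (U : Matrix (Fin d) (Fin n) ℝ) (w : Fin n → ℝ)
    (N : Matrix (Fin d) (Fin d) ℝ) :
    ∑ j, w j * ((fun i => U i j) ⬝ᵥ (N *ᵥ fun i => U i j)) =
      Matrix.trace (N * (U * Matrix.diagonal w * Uᵀ)) := by
  simp only [Matrix.trace, Matrix.diag, Matrix.mul_apply, Matrix.mulVec, dotProduct,
    Matrix.mul_diagonal, Matrix.transpose_apply, Finset.sum_mul, Finset.mul_sum]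
  rw [Finset.sum_comm]
  refine Finset.sum_congr rfl fun j _ => ?_
  rw [Finset.sum_comm]
  refine Finset.sum_congr rfl fun i _ => ?_
  simp only [Matrix.diagonal_apply, mul_ite, ite_mul, mul_zero, zero_mul,
    Finset.sum_ite_eq, Finset.sum_ite_eq', Finset.mem_univ, if_true]
  exact Finset.sum_congr rfl fun k _ => by ring

open scoped MatrixOrder in
lemma exists_repr {d n : ℕ} (U : Matrix (Fin d) (Fin n) ℝ) (hU : U.rank = d)
    (z : Fin n → ℝ) (hz : ∀ j, 0 < z j) (T : Finset (Fin n)) :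
    ∃ μ : Fin d → ℝ, (∀ i, 0 ≤ μ i) ∧ (∀ i, μ i ≤ 1) ∧
      (((cols U T).rank : ℝ) = Fintype.card {i // μ i ≠ 0}) ∧
      ∀ α : ℝ, 1 ≤ α → proxyh U z T α = ∑ i, α * μ i / (1 + (α - 1) * μ i) := by
  classical
  set w₁ : Fin n → ℝ := fun j => if j ∈ T then z j else 0 with hw₁
  set w₀ : Fin n → ℝ := fun j => if j ∈ T then 0 else z j with hw₀
  set A := U * diagonal w₁ * Uᵀ with hAdef
  set B := U * diagonal w₀ * Uᵀ with hBdef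
  set S := U * diagonal z * Uᵀ with hSdef
  have hS : S.PosDef := posDefUDU U hU hz
  have hApsd : A.PosSemidef := by
    have : (0:Fin n → ℝ) ≤ w₁ := fun j => by by_cases h : j ∈ T <;> simp [hw₁, h, (hz j).le]
    have := (Matrix.PosSemidef.diagonal (R := ℝ) this).mul_mul_conjTranspose_same U
    simpa [Matrix.conjTranspose_eq_transpose_of_trivial] using this
  have hBpsd : B.PosSemidef := by
    have : (0:Fin n → ℝ) ≤ w₀ := fun j => by by_cases h : j ∈ T <;> simp [hw₀, h, (hz j).le]
    have := (Matrix.PosSemidef.diagonal (R := ℝ) this).mul_mul_conjTranspose_same U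
    simpa [Matrix.conjTranspose_eq_transpose_of_trivial] using this
  have hSAB : S = A + B := by
    have hzw : diagonal z = diagonal w₁ + diagonal w₀ := by
      have hzfun : z = fun j => w₁ j + w₀ j := by
        funext j; by_cases h : j ∈ T <;> simp [hw₁, hw₀, h]
      rw [diagonal_add, ← hzfun]
    rw [hAdef, hBdef, hSdef, hzw, Matrix.mul_add, Matrix.add_mul]
  -- square root of S
  set Q := CFC.sqrt S with hQdef
  have hQpsd : Q.PosSemidef := (CFC.sqrt_nonneg S).posSemidef
  have hQQ : Q * Q = S := CFC.sqrt_mul_sqrt_self S hS.posSemidef.nonneg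
  have hQdet : IsUnit Q.det := by
    have h1 : Q.det * Q.det = S.det := by rw [← Matrix.det_mul, hQQ]
    have h2 : S.det ≠ 0 := hS.det_pos.ne'
    exact isUnit_iff_ne_zero.mpr (fun h => h2 (by rw [← h1, h, mul_zero]))
  set C := Q⁻¹ with hCdef
  have hCQ : C * Q = 1 := Matrix.nonsing_inv_mul _ hQdet
  have hQC : Q * C = 1 := Matrix.mul_nonsing_inv _ hQdet
  have hCherm : C.IsHermitian := hQpsd.1.inv
  have hCsymm : Cᵀ = C := by
    rw [← Matrix.conjTranspose_eq_transpose_of_trivial]; exact hCherm.eq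
  have hCdet : IsUnit C.det := by
    have := Matrix.det_mul C Q
    rw [hCQ, Matrix.det_one] at this
    exact IsUnit.of_mul_eq_one _ this.symm
  set At := C * A * C with hAtdef
  have hAtpsd : At.PosSemidef := by
    have := hApsd.mul_mul_conjTranspose_same C
    simpa [Matrix.conjTranspose_eq_transpose_of_trivial, hCsymm] using this
  have hAtherm : At.IsHermitian := hAtpsd.1
  set μ := hAtherm.eigenvalues with hμdef
  have hμ0 : ∀ i, 0 ≤ μ i := fun i => hAtpsd.eigenvalues_nonneg i
  -- A = Q * At * Q
  have hAQ : Q * At * Q = A := by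
    rw [hAtdef]
    calc Q * (C * A * C) * Q = (Q * C) * A * (C * Q) := by
          simp only [Matrix.mul_assoc]
        _ = A := by rw [hQC, hCQ, Matrix.one_mul, Matrix.mul_one]
  -- 1 - At is PSD
  have hCSC : C * S * C = 1 := by
    calc C * S * C = (C * Q) * (Q * C) := by rw [← hQQ]; simp only [Matrix.mul_assoc]
      _ = 1 := by rw [hCQ, hQC, Matrix.one_mul]
  have hIA : (1 - At).PosSemidef := by
    have h1 : 1 - At = C * B * C := by
      have : C * S * C = At + C * B * C := by
        rw [hSAB, Matrix.mul_add, Matrix.add_mul, hAtdef]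
      rw [← hCSC, this]; abel
    rw [h1]
    have := hBpsd.mul_mul_conjTranspose_same C
    simpa [Matrix.conjTranspose_eq_transpose_of_trivial, hCsymm] using this
  have hμ1 : ∀ i, μ i ≤ 1 := by
    intro i
    set v : Fin d → ℝ := ⇑(hAtherm.eigenvectorBasis i) with hv
    have hμeq : μ i = v ⬝ᵥ (At *ᵥ v) := by
      simpa using hAtherm.eigenvalues_eq i
    have hvv : v ⬝ᵥ v = 1 := by
      have hnorm := hAtherm.eigenvectorBasis.orthonormal.1 i
      have : (inner ℝ (hAtherm.eigenvectorBasis i) (hAtherm.eigenvectorBasis i) : ℝ) = 1 := by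
        rw [real_inner_self_eq_norm_sq, hnorm]; norm_num
      simpa only [PiLp.inner_apply, RCLike.inner_apply, conj_trivial, dotProduct, mul_comm] using this
    have h2 := hIA.dotProduct_mulVec_nonneg v
    rw [Matrix.sub_mulVec, Matrix.one_mulVec, dotProduct_sub] at h2
    simp only [star_trivial] at h2
    rw [hvv] at h2
    linarith [hμeq ▸ h2]
  refine ⟨μ, hμ0, hμ1, ?_, ?_⟩
  · -- rank
    have hr1 : At.rank = Fintype.card {i // μ i ≠ 0} := hAtherm.rank_eq_card_non_zero_eigs
    have hr2 : At.rank = A.rank := by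
      rw [hAtdef, Matrix.mul_assoc, Matrix.rank_mul_eq_right_of_isUnit_det C (A * C) hCdet,
        Matrix.rank_mul_eq_left_of_isUnit_det C A hCdet]
    have hr3 : A.rank = (cols U T).rank := by
      set E := cols U T * diagonal (fun j : {j // j ∈ T} => Real.sqrt (z j)) with hEdef
      have hAE : A = E * Eᵀ := by
        ext i k
        rw [hAdef, hEdef]
        simp only [Matrix.mul_apply, Matrix.transpose_apply, Matrix.diagonal_apply,
          cols, Matrix.of_apply, mul_ite, mul_zero, Finset.sum_ite_eq', Finset.mem_univ,
          if_true]
        have hLHS : ∑ x, U i x * w₁ x * U k x = ∑ x ∈ T, U i x * z x * U k x := by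
          rw [← Finset.sum_subset (Finset.subset_univ T)
            (fun x _ hx => by simp [hw₁, hx])]
          exact Finset.sum_congr rfl fun x hx => by simp [hw₁, hx]
        rw [hLHS, Finset.sum_coe_sort T
          (fun x => U i x * Real.sqrt (z x) * (U k x * Real.sqrt (z x)))]
        refine Finset.sum_congr rfl fun x _ => ?_
        have hs : Real.sqrt (z x) * Real.sqrt (z x) = z x := Real.mul_self_sqrt (hz x).le
        calc U i x * z x * U k x = U i x * (Real.sqrt (z x) * Real.sqrt (z x)) * U k x := by
              rw [hs]
          _ = U i x * Real.sqrt (z x) * (U k x * Real.sqrt (z x)) := by ring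
      rw [hAE, Matrix.rank_self_mul_transpose, hEdef,
        Matrix.rank_mul_eq_left_of_isUnit_det _ _ ?_]
      · exact isUnit_iff_ne_zero.mpr (by
          rw [Matrix.det_diagonal]
          exact Finset.prod_ne_zero_iff.mpr fun j _ => (Real.sqrt_pos.mpr (hz j)).ne')
    rw [← hr3, ← hr2, hr1]
  · -- formula
    intro α hα
    set w : Fin n → ℝ := scale z T α with hwdef
    have hwpos : ∀ j, 0 < w j := by
      intro j
      by_cases h : j ∈ T
      · simp only [hwdef, scale, h, if_true]
        exact mul_pos (lt_of_lt_of_le one_pos hα) (hz j)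
      · simpa [hwdef, scale, h] using hz j
    set M := U * diagonal w * Uᵀ with hMdef
    have hMpd : M.PosDef := posDefUDU U hU hwpos
    have hM1 : M = S + (α - 1) • A := by
      have hfun : w = fun j => z j + (α - 1) * w₁ j := by
        funext j; by_cases h : j ∈ T <;> simp [hwdef, scale, hw₁, h] <;> ring
      rw [hMdef, hfun]
      have : (diagonal fun j => z j + (α - 1) * w₁ j)
          = diagonal z + (α - 1) • diagonal w₁ := by
        rw [← diagonal_smul, ← diagonal_add]; rfl
      rw [this, Matrix.mul_add, Matrix.add_mul, ← hSdef, Matrix.mul_smul, Matrix.smul_mul, hAdef]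
    set N : Matrix (Fin d) (Fin d) ℝ := 1 + (α - 1) • At with hNdef
    have hsm : ((α - 1) • At).PosSemidef := by
      refine Matrix.PosSemidef.of_dotProduct_mulVec_nonneg ?_ ?_
      · show ((α - 1) • At)ᴴ = _
        rw [Matrix.conjTranspose_smul, hAtherm.eq]; simp
      · intro x
        rw [Matrix.smul_mulVec, dotProduct_smul]
        exact smul_nonneg (by linarith) (hAtpsd.dotProduct_mulVec_nonneg x)
    have hNpd : N.PosDef := Matrix.PosDef.add_posSemidef Matrix.PosDef.one hsm
    have hMQNQ : M = Q * N * Q := by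
      rw [hNdef, Matrix.mul_add, Matrix.add_mul, Matrix.mul_one,
        Matrix.mul_smul, Matrix.smul_mul, hQQ, hAQ, hM1]
    have hNdet : IsUnit N.det := hNpd.det_pos.ne'.isUnit
    have hMinv : M⁻¹ = C * N⁻¹ * C := by
      apply Matrix.inv_eq_right_inv
      rw [hMQNQ]
      calc Q * N * Q * (C * N⁻¹ * C) = Q * N * (Q * C) * N⁻¹ * C := by
            simp only [Matrix.mul_assoc]
        _ = Q * (N * N⁻¹) * C := by rw [hQC]; simp only [Matrix.mul_assoc, Matrix.mul_one, Matrix.one_mul]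
        _ = Q * C := by rw [Matrix.mul_nonsing_inv _ hNdet, Matrix.mul_one]
        _ = 1 := hQC
    -- spectral theorem
    set P : Matrix (Fin d) (Fin d) ℝ := (hAtherm.eigenvectorUnitary : Matrix (Fin d) (Fin d) ℝ)
      with hPdef
    have hPunit : P ∈ Matrix.unitaryGroup (Fin d) ℝ := hAtherm.eigenvectorUnitary.2
    have hPP : P * star P = 1 := (Matrix.mem_unitaryGroup_iff).mp hPunit
    have hPP' : star P * P = 1 := (Matrix.mem_unitaryGroup_iff').mp hPunit
    have hspec : At = P * diagonal μ * star P := by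
      have := hAtherm.spectral_theorem
      simpa using this
    set v : Fin d → ℝ := fun i => 1 + (α - 1) * μ i with hvdef
    have hvpos : ∀ i, 0 < v i := by
      intro i
      have := mul_nonneg (by linarith : (0:ℝ) ≤ α - 1) (hμ0 i)
      simp only [hvdef]; linarith
    have hNP : N = P * diagonal v * star P := by
      have hdv : diagonal v = 1 + (α - 1) • diagonal μ := by
        ext i k
        by_cases h : i = k
        · subst h
          simp [Matrix.diagonal_apply_eq, hvdef]
        · simp [Matrix.diagonal_apply_ne _ h, Matrix.one_apply_ne h]
      rw [hNdef, hdv, Matrix.mul_add, Matrix.add_mul, Matrix.mul_one, hPP,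
        Matrix.mul_smul, Matrix.smul_mul, ← hspec]
    have hNinv : N⁻¹ = P * diagonal (fun i => (v i)⁻¹) * star P := by
      apply Matrix.inv_eq_right_inv
      rw [hNP]
      calc P * diagonal v * star P * (P * diagonal (fun i => (v i)⁻¹) * star P)
          = P * (diagonal v * ((star P * P) * diagonal fun i => (v i)⁻¹)) * star P := by
            simp only [Matrix.mul_assoc]
        _ = P * (diagonal v * diagonal fun i => (v i)⁻¹) * star P := by
            rw [hPP', Matrix.one_mul]
        _ = 1 := by
            rw [Matrix.diagonal_mul_diagonal]
            have h1 : (fun i => v i * (v i)⁻¹) = fun _ => (1:ℝ) :=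
              funext fun i => mul_inv_cancel₀ (hvpos i).ne'
            rw [h1, diagonal_one, Matrix.mul_one, hPP]
    have htr : Matrix.trace (M⁻¹ * A) = ∑ i, (v i)⁻¹ * μ i := by
      rw [hMinv, ← hAQ]
      calc Matrix.trace (C * N⁻¹ * C * (Q * At * Q))
          = Matrix.trace (C * (N⁻¹ * ((C * Q) * (At * Q)))) := by simp only [Matrix.mul_assoc]
        _ = Matrix.trace (C * (N⁻¹ * (At * Q))) := by rw [hCQ, Matrix.one_mul]
        _ = Matrix.trace (N⁻¹ * (At * Q) * C) := Matrix.trace_mul_comm _ _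
        _ = Matrix.trace (N⁻¹ * At * (Q * C)) := by simp only [Matrix.mul_assoc]
        _ = Matrix.trace (N⁻¹ * At) := by rw [hQC, Matrix.mul_one]
        _ = ∑ i, (v i)⁻¹ * μ i := by
            rw [hNinv, hspec]
            calc Matrix.trace (P * diagonal (fun i => (v i)⁻¹) * star P * (P * diagonal μ * star P))
                = Matrix.trace (P * (diagonal (fun i => (v i)⁻¹) * ((star P * P) * (diagonal μ * star P)))) := by
                  simp only [Matrix.mul_assoc]
              _ = Matrix.trace (P * (diagonal (fun i => (v i)⁻¹) * (diagonal μ * star P))) := by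
                  rw [hPP', Matrix.one_mul]
              _ = Matrix.trace (diagonal (fun i => (v i)⁻¹) * (diagonal μ * star P) * P) :=
                  Matrix.trace_mul_comm _ _
              _ = Matrix.trace (diagonal (fun i => (v i)⁻¹) * diagonal μ * (star P * P)) := by
                  simp only [Matrix.mul_assoc]
              _ = Matrix.trace (diagonal fun i => (v i)⁻¹ * μ i) := by
                  rw [hPP', Matrix.mul_one, Matrix.diagonal_mul_diagonal]
              _ = ∑ i, (v i)⁻¹ * μ i := Matrix.trace_diagonal _
    have hsum : proxyh U z T α = α * Matrix.trace (M⁻¹ * A) := by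
      rw [proxyh]
      have hterm : ∀ j ∈ T, lev U w j
          = α * (w₁ j * ((fun i => U i j) ⬝ᵥ (M⁻¹ *ᵥ fun i => U i j))) := by
        intro j hj
        rw [lev]
        have h1 : w j = α * z j := by simp [hwdef, scale, hj]
        have h2 : w₁ j = z j := by simp [hw₁, hj]
        rw [h1, h2, ← hMdef, mul_assoc]
      rw [Finset.sum_congr rfl hterm, ← Finset.mul_sum]
      congr 1
      rw [hAdef, ← sum_quad_eq_trace U w₁ M⁻¹]
      exact Finset.sum_subset (Finset.subset_univ T)
        (fun x _ hx => by simp [hw₁, hx])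
    rw [hsum, htr, Finset.mul_sum]
    refine Finset.sum_congr rfl fun i _ => ?_
    rw [hvdef, div_eq_mul_inv]
    ring

lemma lev_total {d n : ℕ} (U : Matrix (Fin d) (Fin n) ℝ) (hU : U.rank = d)
    (z : Fin n → ℝ) (hz : ∀ j, 0 < z j) : ∑ j, lev U z j = (d : ℝ) := by
  have hS := posDefUDU U hU hz
  have hdet : IsUnit (U * diagonal z * Uᵀ).det := hS.det_pos.ne'.isUnit
  have h2 := sum_quad_eq_trace U z (U * Matrix.diagonal z * Uᵀ)⁻¹
  rw [Matrix.nonsing_inv_mul _ hdet, Matrix.trace_one] at h2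
  simpa [lev] using h2

/-- Structure of the proxy function `h` for a feasible instance:
(1) `h` is non-decreasing on `[1,∞)`; (2) `h(α) → rank(U_T)` as `α → ∞`;
(3) `Σ_{j∈T} c_j − h(1) ≥ γ`; (4) if `rank(U_T) ≥ Σ_{j∈T} c_j` then for every
`δ ∈ [0,γ)` the equation `h(α) = h(1) + δ` has a finite solution `α ≥ 1`. -/
theorem proxy_structure {d n : ℕ} (U : Matrix (Fin d) (Fin n) ℝ) (hU : U.rank = d)
    (z : Fin n → ℝ) (hz : ∀ j, 0 < z j) (c : Fin n → ℝ) (hc : ∑ j, c j = (d : ℝ))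
    (T : Finset (Fin n)) (hTne : T.Nonempty) (hTproper : T ≠ Finset.univ)
    (γ ν : ℝ) (hγ : 0 < γ)
    (hmargin₁ : ∀ j ∈ T, lev U z j - c j ≤ ν - γ)
    (hmargin₂ : ∀ j ∉ T, ν + γ ≤ lev U z j - c j) :
    MonotoneOn (proxyh U z T) (Set.Ici (1 : ℝ)) ∧
    Filter.Tendsto (proxyh U z T) Filter.atTop (nhds ((cols U T).rank : ℝ)) ∧
    (∑ j ∈ T, c j) - proxyh U z T 1 ≥ γ ∧
    ((∑ j ∈ T, c j ≤ ((cols U T).rank : ℝ)) →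
      ∀ δ : ℝ, 0 ≤ δ → δ < γ → ∃ α : ℝ, 1 ≤ α ∧
        proxyh U z T α = proxyh U z T 1 + δ) := by
  classical
  obtain ⟨μ, hμ0, hμ1, hrank, hform⟩ := exists_repr U hU z hz T
  have hden : ∀ (α : ℝ), 1 ≤ α → ∀ i, 0 < 1 + (α - 1) * μ i := by
    intro α hα i
    have := mul_nonneg (by linarith : (0:ℝ) ≤ α - 1) (hμ0 i)
    linarith
  -- monotonicity of the explicit formula
  have hmono : MonotoneOn (proxyh U z T) (Set.Ici (1 : ℝ)) := by
    intro a ha b hb hab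
    rw [hform a ha, hform b hb]
    refine Finset.sum_le_sum fun i _ => ?_
    have h1 := hden a ha i
    have h2 := hden b hb i
    rw [div_le_div_iff₀ h1 h2]
    have key : 0 ≤ (b - a) * μ i * (1 - μ i) :=
      mul_nonneg (mul_nonneg (sub_nonneg.mpr hab) (hμ0 i)) (sub_nonneg.mpr (hμ1 i))
    nlinarith [key]
  -- limit
  have hlimg : Filter.Tendsto (fun α : ℝ => ∑ i, α * μ i / (1 + (α - 1) * μ i))
      Filter.atTop (nhds (∑ i, if μ i ≠ 0 then (1:ℝ) else 0)) := by
    apply tendsto_finset_sum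
    intro i _
    by_cases h : μ i = 0
    · simpa [h] using (tendsto_const_nhds :
        Filter.Tendsto (fun _ : ℝ => (0:ℝ)) Filter.atTop (nhds 0))
    · simp only [h, if_true, ne_eq, not_false_iff]
      have hμpos : 0 < μ i := lt_of_le_of_ne (hμ0 i) (Ne.symm h)
      have hbase : Filter.Tendsto (fun α : ℝ => μ i + (1 - μ i) * α⁻¹)
          Filter.atTop (nhds (μ i)) := by
        have := tendsto_inv_atTop_zero.const_mul (1 - μ i)
        have h2 := Filter.Tendsto.const_add (μ i) this
        simpa using h2
      have hdiv : Filter.Tendsto (fun α : ℝ => μ i / (μ i + (1 - μ i) * α⁻¹))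
          Filter.atTop (nhds 1) := by
        have := Filter.Tendsto.div
          (tendsto_const_nhds : Filter.Tendsto (fun _ : ℝ => μ i) Filter.atTop (nhds (μ i)))
          hbase hμpos.ne'
        simpa [div_self hμpos.ne', Pi.div_def] using this
      refine hdiv.congr' ?_
      filter_upwards [Filter.eventually_ge_atTop (1:ℝ)] with α hα
      have hα0 : (0:ℝ) < α := lt_of_lt_of_le one_pos hα
      have hD := hden α hα i
      have hE : μ i + (1 - μ i) * α⁻¹ = (1 + (α - 1) * μ i) * α⁻¹ := by
        field_simp
        ring
      rw [hE, div_eq_div_iff (by positivity) hD.ne']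
      field_simp
  have hlim : Filter.Tendsto (proxyh U z T) Filter.atTop (nhds ((cols U T).rank : ℝ)) := by
    have hev : proxyh U z T =ᶠ[Filter.atTop]
        (fun α : ℝ => ∑ i, α * μ i / (1 + (α - 1) * μ i)) := by
      filter_upwards [Filter.eventually_ge_atTop (1:ℝ)] with x hx using hform x hx
    have hval : ((cols U T).rank : ℝ) = ∑ i, if μ i ≠ 0 then (1:ℝ) else 0 := by
      rw [hrank, Fintype.card_subtype]
      rw [Finset.sum_boole]
    rw [hval]
    exact hlimg.congr' hev.symm
  -- margin bound
  have h1eq : proxyh U z T 1 = ∑ j ∈ T, lev U z j := by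
    rw [proxyh]
    have : scale z T 1 = z := by funext j; simp [scale]
    rw [this]
  have htotal := lev_total U hU z hz
  have key3 : (∑ j ∈ T, c j) - proxyh U z T 1 ≥ γ := by
    rw [h1eq]
    obtain ⟨j0, hj0⟩ : ∃ j, j ∉ T := by
      by_contra h
      push_neg at h
      exact hTproper (Finset.eq_univ_iff_forall.mpr h)
    have hcompl : Tᶜ.Nonempty := ⟨j0, Finset.mem_compl.mpr hj0⟩
    have hTcard : (1:ℝ) ≤ T.card := by
      exact_mod_cast Finset.card_pos.mpr hTne
    have hTccard : (1:ℝ) ≤ Tᶜ.card := by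
      exact_mod_cast Finset.card_pos.mpr hcompl
    have hsplit : ∑ j ∈ Tᶜ, (lev U z j - c j) =
        ((d:ℝ) - ∑ j ∈ T, lev U z j) - ((d:ℝ) - ∑ j ∈ T, c j) := by
      have h1 : ∑ j ∈ Tᶜ, lev U z j + ∑ j ∈ T, lev U z j = (d:ℝ) := by
        rw [Finset.sum_compl_add_sum]; exact htotal
      have h2 : ∑ j ∈ Tᶜ, c j + ∑ j ∈ T, c j = (d:ℝ) := by
        rw [Finset.sum_compl_add_sum]; exact hc
      rw [Finset.sum_sub_distrib]
      linarith
    have hub : ∑ j ∈ T, (lev U z j - c j) ≤ (T.card : ℝ) * (ν - γ) := by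
      calc ∑ j ∈ T, (lev U z j - c j) ≤ ∑ _j ∈ T, (ν - γ) :=
            Finset.sum_le_sum hmargin₁
        _ = (T.card : ℝ) * (ν - γ) := by rw [Finset.sum_const, nsmul_eq_mul]
    have hlb : (Tᶜ.card : ℝ) * (ν + γ) ≤ ∑ j ∈ Tᶜ, (lev U z j - c j) := by
      calc (Tᶜ.card : ℝ) * (ν + γ) = ∑ _j ∈ Tᶜ, (ν + γ) := by
            rw [Finset.sum_const, nsmul_eq_mul]
        _ ≤ ∑ j ∈ Tᶜ, (lev U z j - c j) :=
            Finset.sum_le_sum fun j hj => hmargin₂ j (Finset.mem_compl.mp hj)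
    rw [hsplit] at hlb
    rw [Finset.sum_sub_distrib] at hub
    rcases le_or_gt 0 ν with hν | hν
    · nlinarith
    · nlinarith
  refine ⟨hmono, hlim, key3, ?_⟩
  -- solvability
  intro hrk δ hδ0 hδγ
  have hcont : ContinuousOn (fun α : ℝ => ∑ i, α * μ i / (1 + (α - 1) * μ i))
      (Set.Ici (1:ℝ)) := by
    apply continuousOn_finset_sum
    intro i _
    refine ContinuousOn.div (continuousOn_id.mul continuousOn_const)
      ((continuousOn_const.add ((continuousOn_id.sub continuousOn_const).mul
        continuousOn_const))) ?_
    intro x hx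
    exact (hden x hx i).ne'
  have hlt : proxyh U z T 1 + δ < ((cols U T).rank : ℝ) := by linarith
  obtain ⟨α₀, hα₀⟩ := ((hlim.eventually (eventually_ge_nhds hlt)).and
    (Filter.eventually_ge_atTop (1:ℝ))).exists
  have hsub : Set.Icc (1:ℝ) α₀ ⊆ Set.Ici 1 := Set.Icc_subset_Ici_self
  have hivt := intermediate_value_Icc hα₀.2 ((hcont.mono hsub))
  have hmem : proxyh U z T 1 + δ ∈ Set.Icc
      ((fun α : ℝ => ∑ i, α * μ i / (1 + (α - 1) * μ i)) 1)
      ((fun α : ℝ => ∑ i, α * μ i / (1 + (α - 1) * μ i)) α₀) := by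
    constructor
    · simp only
      rw [← hform 1 le_rfl]
      linarith
    · simp only
      rw [← hform α₀ hα₀.2]
      exact hα₀.1
  obtain ⟨α, hαmem, hgα⟩ := hivt hmem
  refine ⟨α, hαmem.1, ?_⟩
  rw [hform α hαmem.1]
  exact hgα
end

section
/- Let U ∈ ℝ^{d×n} be a frame, z ∈ ℝ^n a positive vector, T ⊆ [n], and let μ ∈ ℝ^d be the eigenvalues of the symmetric positive semidefinite matrix (U Z U^T)^{-1/2} U_T Z_T U_T^T (U Z U^T)^{-1/2}, all of which lie in [0,1]. Then the proxy function h(α) := Σ_{j∈T} lev^U_j(z ∘ (1_{T^c} + α·1_T)) satisfies, for all α > 0: h(α) = Σ_{i=1}^d α μ_i / (1 − μ_i + α μ_i), h(α) − h(1) = Σ_{i=1}^d (α−1) μ_i (1 − μ_i) / (1 + (α−1) μ_i), and h'(α) = Σ_{i=1}^d μ_i (1 − μ_i) / (1 + (α−1) μ_i)². -/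
open Matrix BigOperators

/-- The symmetric matrix `(U Z Uᵀ)^{-1/2} · U_T Z_T U_Tᵀ · (U Z Uᵀ)^{-1/2}`, where
`(U Z Uᵀ)^{-1/2}` is realized as the positive semidefinite square root of `(U Z Uᵀ)⁻¹`
and `U_T Z_T U_Tᵀ = U · diag(z·1_T) · Uᵀ`. -/
noncomputable def Msym {d n : ℕ} (U : Matrix (Fin d) (Fin n) ℝ) (z : Fin n → ℝ)
    (T : Finset (Fin n)) (hA : ((U * Matrix.diagonal z * Uᵀ)⁻¹).PosSemidef) :
    Matrix (Fin d) (Fin d) ℝ :=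
  ((hA.1.eigenvectorUnitary : Matrix (Fin d) (Fin d) ℝ) * diagonal (Real.sqrt ∘ hA.1.eigenvalues) *
      (star hA.1.eigenvectorUnitary : Matrix (Fin d) (Fin d) ℝ)) *
    (U * Matrix.diagonal (fun j => if j ∈ T then z j else 0) * Uᵀ) *
    ((hA.1.eigenvectorUnitary : Matrix (Fin d) (Fin d) ℝ) * diagonal (Real.sqrt ∘ hA.1.eigenvalues) *
      (star hA.1.eigenvectorUnitary : Matrix (Fin d) (Fin d) ℝ))

lemma trace_helper {d n : ℕ} (U : Matrix (Fin d) (Fin n) ℝ)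
    (w : Fin n → ℝ) (T : Finset (Fin n)) (C : Matrix (Fin d) (Fin d) ℝ) :
    ∑ j ∈ T, w j * ((fun i => U i j) ⬝ᵥ (C *ᵥ fun i => U i j))
      = ((U * Matrix.diagonal (fun j => if j ∈ T then w j else 0) * Uᵀ) * C).trace := by
  have h1 : ∀ j, ((fun i => U i j) ⬝ᵥ (C *ᵥ fun i => U i j)) = (Uᵀ * C * U) j j := by
    intro j
    simp only [Matrix.mul_apply, Matrix.transpose_apply, dotProduct, Matrix.mulVec,
      Finset.sum_mul, Finset.mul_sum]
    rw [Finset.sum_comm]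
    exact Finset.sum_congr rfl fun k _ => Finset.sum_congr rfl fun i _ => by ring
  simp only [h1]
  calc ∑ j ∈ T, w j * (Uᵀ * C * U) j j
      = ∑ j, (if j ∈ T then w j else 0) * (Uᵀ * C * U) j j := by
        rw [← Finset.univ_inter T, ← Finset.sum_ite_mem]
        exact Finset.sum_congr rfl fun j _ => by by_cases h : j ∈ T <;> simp [h]
    _ = (Matrix.diagonal (fun j => if j ∈ T then w j else 0) * (Uᵀ * C * U)).trace := by
        simp [Matrix.trace, Matrix.diagonal_mul]
    _ = ((U * Matrix.diagonal (fun j => if j ∈ T then w j else 0) * Uᵀ) * C).trace := by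
        rw [Matrix.trace_mul_comm (Matrix.diagonal _) (Uᵀ * C * U),
          Matrix.mul_assoc (Uᵀ * C) U (Matrix.diagonal _),
          Matrix.trace_mul_comm (Uᵀ * C) (U * Matrix.diagonal _), ← Matrix.mul_assoc]

lemma posdef_helper {d n : ℕ} (U : Matrix (Fin d) (Fin n) ℝ) (hU : U.rank = d)
    (z : Fin n → ℝ) (hz : ∀ j, 0 < z j) : (U * Matrix.diagonal z * Uᵀ).PosDef := by
  have hpsd : (U * Matrix.diagonal z * Uᵀ).PosSemidef := by
    have := (Matrix.posSemidef_diagonal_iff.mpr (fun j => (hz j).le)).mul_mul_conjTranspose_same U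
    rwa [Matrix.conjTranspose_eq_transpose_of_trivial] at this
  refine Matrix.posDef_iff_dotProduct_mulVec.mpr ⟨hpsd.1, fun x hx => ?_⟩
  have hker : LinearMap.ker (Uᵀ.mulVecLin) = ⊥ := by
    have h1 : Uᵀ.rank = d := by rw [Matrix.rank_transpose, hU]
    have h2 := LinearMap.finrank_range_add_finrank_ker (Uᵀ.mulVecLin)
    rw [Matrix.rank] at h1
    rw [h1, Module.finrank_fin_fun] at h2
    exact Submodule.finrank_eq_zero.mp (by omega)
  have hy : Uᵀ *ᵥ x ≠ 0 := by
    intro h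
    apply hx
    have h2 : Uᵀ.mulVecLin x = Uᵀ.mulVecLin 0 := by
      simpa [Matrix.mulVecLin_apply, Matrix.mulVec_transpose] using h
    exact LinearMap.ker_eq_bot.mp hker h2
  set y := Uᵀ *ᵥ x with hy'
  have hquad : (star x) ⬝ᵥ ((U * Matrix.diagonal z * Uᵀ) *ᵥ x) = ∑ j, z j * (y j)^2 := by
    rw [star_trivial, ← Matrix.mulVec_mulVec, ← Matrix.mulVec_mulVec,
      Matrix.dotProduct_mulVec, ← Matrix.mulVec_transpose]
    simp [Matrix.mulVec_diagonal, dotProduct, ← hy']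
    exact Finset.sum_congr rfl fun j _ => by ring
  rw [hquad]
  obtain ⟨j0, hj0⟩ := Function.ne_iff.mp hy
  refine Finset.sum_pos' (fun j _ => mul_nonneg (hz j).le (sq_nonneg _))
    ⟨j0, Finset.mem_univ j0, mul_pos (hz j0) ?_⟩
  have hj0' : y j0 ≠ 0 := hj0
  positivity

lemma conj_mul_helper {d : ℕ} (V X Y : Matrix (Fin d) (Fin d) ℝ) (h : star V * V = 1) :
    (V * X * star V) * (V * Y * star V) = V * (X * Y) * star V := by
  simp only [Matrix.mul_assoc]
  rw [show star V * (V * (Y * star V)) = Y * star V from by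
    rw [← Matrix.mul_assoc, h, Matrix.one_mul]]

lemma conj_trace_helper {d : ℕ} (V X : Matrix (Fin d) (Fin d) ℝ) (h : star V * V = 1) :
    (V * X * star V).trace = X.trace := by
  rw [Matrix.trace_mul_comm (V * X) (star V), ← Matrix.mul_assoc, h, Matrix.one_mul]

/-- Eigenvalue expansion of the proxy function: if `μ` are the eigenvalues of
`(U Z Uᵀ)^{-1/2} U_T Z_T U_Tᵀ (U Z Uᵀ)^{-1/2}` (all lying in `[0,1]`), then for all `α > 0`,
`h(α) = Σ_i α μ_i/(1−μ_i+αμ_i)`, `h(α) − h(1) = Σ_i (α−1)μ_i(1−μ_i)/(1+(α−1)μ_i)`, and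
`h'(α) = Σ_i μ_i(1−μ_i)/(1+(α−1)μ_i)²`. -/
theorem proxy_eigen_expansion {d n : ℕ} (U : Matrix (Fin d) (Fin n) ℝ)
    (hU : U.rank = d) (z : Fin n → ℝ) (hz : ∀ j, 0 < z j) (T : Finset (Fin n))
    (hA : ((U * Matrix.diagonal z * Uᵀ)⁻¹).PosSemidef)
    (hM : (Msym U z T hA).IsHermitian)
    (μ : Fin d → ℝ) (hμ : μ = hM.eigenvalues)
    (hμ01 : ∀ i, μ i ∈ Set.Icc (0 : ℝ) 1) :
    ∀ α : ℝ, 0 < α →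
      proxyh U z T α = ∑ i, α * μ i / (1 - μ i + α * μ i) ∧
      proxyh U z T α - proxyh U z T 1
        = ∑ i, (α - 1) * μ i * (1 - μ i) / (1 + (α - 1) * μ i) ∧
      HasDerivAt (proxyh U z T)
        (∑ i, μ i * (1 - μ i) / (1 + (α - 1) * μ i) ^ 2) α := by
  classical
  set A := U * Matrix.diagonal z * Uᵀ with hAdef
  have hApd : A.PosDef := posdef_helper U hU z hz
  have hAdet : IsUnit A.det := hApd.det_pos.ne'.isUnit
  set S := ((hA.1.eigenvectorUnitary : Matrix (Fin d) (Fin d) ℝ) *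
    diagonal (Real.sqrt ∘ hA.1.eigenvalues) *
      (star hA.1.eigenvectorUnitary : Matrix (Fin d) (Fin d) ℝ)) with hSdef
  have hSS : S * S = A⁻¹ := by
    have hU' : star (hA.1.eigenvectorUnitary : Matrix (Fin d) (Fin d) ℝ) *
        (hA.1.eigenvectorUnitary : Matrix (Fin d) (Fin d) ℝ) = 1 :=
      Matrix.mem_unitaryGroup_iff'.mp hA.1.eigenvectorUnitary.2
    have hspec := hA.1.spectral_theorem
    rw [Unitary.conjStarAlgAut_apply] at hspec
    refine Eq.trans ?_ hspec.symm
    change ((hA.1.eigenvectorUnitary : Matrix (Fin d) (Fin d) ℝ) *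
        diagonal (Real.sqrt ∘ hA.1.eigenvalues) *
        star (hA.1.eigenvectorUnitary : Matrix (Fin d) (Fin d) ℝ)) *
        ((hA.1.eigenvectorUnitary : Matrix (Fin d) (Fin d) ℝ) *
        diagonal (Real.sqrt ∘ hA.1.eigenvalues) *
        star (hA.1.eigenvectorUnitary : Matrix (Fin d) (Fin d) ℝ)) = _
    rw [conj_mul_helper _ _ _ hU', Matrix.diagonal_mul_diagonal]
    congr 3
    funext i
    simp [Real.mul_self_sqrt (hA.eigenvalues_nonneg i)]
  have hSdet : IsUnit S.det := by
    have h1 : S.det * S.det = A⁻¹.det := by rw [← Matrix.det_mul, hSS]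
    have h2 : A⁻¹.det ≠ 0 := by
      rw [Matrix.det_nonsing_inv, Ring.inverse_eq_inv']
      exact inv_ne_zero hApd.det_pos.ne'
    have h3 : S.det ≠ 0 := fun h => h2 (by rw [← h1, h, mul_zero])
    exact h3.isUnit
  have hSinvS : S⁻¹ * S = 1 := Matrix.nonsing_inv_mul S hSdet
  have hSSinv : S * S⁻¹ = 1 := Matrix.mul_nonsing_inv S hSdet
  have hAeq : A = S⁻¹ * S⁻¹ := by
    have h := congrArg (fun X : Matrix (Fin d) (Fin d) ℝ => X⁻¹) hSS
    simp only [Matrix.mul_inv_rev, Matrix.nonsing_inv_nonsing_inv A hAdet] at h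
    exact h.symm
  set B := U * Matrix.diagonal (fun j => if j ∈ T then z j else 0) * Uᵀ with hBdef
  set M := Msym U z T hA with hMdef
  have hMeq : M = S * B * S := rfl
  have hBM : B = S⁻¹ * M * S⁻¹ := by
    rw [hMeq]
    simp only [← Matrix.mul_assoc]
    rw [hSinvS, Matrix.one_mul, Matrix.mul_assoc, hSSinv, Matrix.mul_one]
  set V : Matrix (Fin d) (Fin d) ℝ := (hM.eigenvectorUnitary : Matrix (Fin d) (Fin d) ℝ) with hVdef
  have hVV : V * star V = 1 := Matrix.mem_unitaryGroup_iff.mp (hM.eigenvectorUnitary).2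
  have hVV' : star V * V = 1 := Matrix.mem_unitaryGroup_iff'.mp (hM.eigenvectorUnitary).2
  have hspecR : M = V * Matrix.diagonal μ * star V := by
    have h := hM.spectral_theorem
    rw [Unitary.conjStarAlgAut_apply] at h
    rwa [RCLike.ofReal_real_eq_id, Function.id_comp, ← hμ] at h
  have key : ∀ α : ℝ, 0 < α → proxyh U z T α = ∑ i, α * μ i / (1 - μ i + α * μ i) := by
    intro α hα
    have hw : ∀ i, 0 < 1 + (α - 1) * μ i := by
      intro i
      obtain ⟨h0, h1⟩ := hμ01 i
      rcases eq_or_lt_of_le h0 with h | h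
      · simp [← h]
      · nlinarith
    have hNspec : (1 : Matrix (Fin d) (Fin d) ℝ) + (α - 1) • M
        = V * Matrix.diagonal (fun i => 1 + (α - 1) * μ i) * star V := by
      have hdiag : Matrix.diagonal (fun i => 1 + (α - 1) * μ i)
          = 1 + (α - 1) • Matrix.diagonal μ := by
        rw [← Matrix.diagonal_one, ← Matrix.diagonal_smul, ← Matrix.diagonal_add]
        rfl
      rw [hdiag, Matrix.mul_add, Matrix.add_mul, Matrix.mul_one, hVV, Matrix.mul_smul,
        Matrix.smul_mul, ← hspecR]
    have hNinv : ((1 : Matrix (Fin d) (Fin d) ℝ) + (α - 1) • M)⁻¹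
        = V * Matrix.diagonal (fun i => (1 + (α - 1) * μ i)⁻¹) * star V := by
      apply Matrix.inv_eq_right_inv
      rw [hNspec, conj_mul_helper _ _ _ hVV', Matrix.diagonal_mul_diagonal]
      have : (fun i => (1 + (α - 1) * μ i) * (1 + (α - 1) * μ i)⁻¹) = fun _ => (1:ℝ) := by
        funext i; exact mul_inv_cancel₀ (hw i).ne'
      rw [this, Matrix.diagonal_one, Matrix.mul_one, hVV]
    -- C and its inverse
    have hCdiag : Matrix.diagonal (scale z T α)
        = Matrix.diagonal z + (α - 1) • Matrix.diagonal (fun j => if j ∈ T then z j else 0) := by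
      have h : scale z T α
          = fun j => z j + ((α - 1) • fun j => if j ∈ T then z j else 0) j := by
        funext j; by_cases h : j ∈ T <;> simp [scale, h] <;> ring
      rw [h, ← Matrix.diagonal_add, Matrix.diagonal_smul]
    have hC1 : U * Matrix.diagonal (scale z T α) * Uᵀ = A + (α - 1) • B := by
      rw [hCdiag, Matrix.mul_add, Matrix.add_mul, Matrix.mul_smul, Matrix.smul_mul]
    have hC : U * Matrix.diagonal (scale z T α) * Uᵀ
        = S⁻¹ * ((1 : Matrix (Fin d) (Fin d) ℝ) + (α - 1) • M) * S⁻¹ := by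
      rw [hC1, Matrix.mul_add, Matrix.add_mul, Matrix.mul_one, Matrix.mul_smul, Matrix.smul_mul,
        ← hAeq, ← hBM]
    have hCinv : (U * Matrix.diagonal (scale z T α) * Uᵀ)⁻¹
        = S * (((1 : Matrix (Fin d) (Fin d) ℝ) + (α - 1) • M)⁻¹ * S) := by
      rw [hC, Matrix.mul_inv_rev (S⁻¹ * _) S⁻¹, Matrix.mul_inv_rev S⁻¹ _,
        Matrix.nonsing_inv_nonsing_inv S hSdet]
    have hprox1 : proxyh U z T α = α * ∑ j ∈ T, z j *
        ((fun i => U i j) ⬝ᵥ ((U * Matrix.diagonal (scale z T α) * Uᵀ)⁻¹ *ᵥ fun i => U i j)) := by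
      rw [proxyh, Finset.mul_sum]
      refine Finset.sum_congr rfl fun j hj => ?_
      rw [lev, show scale z T α j = α * z j from by simp [scale, if_pos hj]]
      ring
    have htr : (B * (S * (((1 : Matrix (Fin d) (Fin d) ℝ) + (α - 1) • M)⁻¹ * S))).trace
        = (M * ((1 : Matrix (Fin d) (Fin d) ℝ) + (α - 1) • M)⁻¹).trace := by
      simp only [← Matrix.mul_assoc]
      rw [Matrix.trace_mul_comm (B * S * _) S]
      simp only [← Matrix.mul_assoc]
      rw [← hMeq]
    have hprox2 : proxyh U z T α
        = α * ∑ i, μ i * (1 + (α - 1) * μ i)⁻¹ := by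
      rw [hprox1, trace_helper, hCinv, htr, hNinv, hspecR, conj_mul_helper _ _ _ hVV',
        Matrix.diagonal_mul_diagonal, conj_trace_helper _ _ hVV', Matrix.trace_diagonal]
    rw [hprox2, Finset.mul_sum]
    refine Finset.sum_congr rfl fun i _ => ?_
    rw [show (1:ℝ) - μ i + α * μ i = 1 + (α - 1) * μ i from by ring, div_eq_mul_inv]
    ring

  intro α hα
  have hwpos : ∀ i, 0 < 1 - μ i + α * μ i := by
    intro i
    obtain ⟨h0, h1⟩ := hμ01 i
    rcases eq_or_lt_of_le h0 with h | h
    · simp [← h]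
    · nlinarith
  refine ⟨key α hα, ?_, ?_⟩
  · have h1 : proxyh U z T 1 = ∑ i, μ i := by
      rw [key 1 one_pos]
      exact Finset.sum_congr rfl fun i _ => by
        rw [show (1:ℝ) - μ i + 1 * μ i = 1 from by ring]; ring
    rw [key α hα, h1, ← Finset.sum_sub_distrib]
    refine Finset.sum_congr rfl fun i _ => ?_
    have hD := hwpos i
    rw [show (1:ℝ) + (α - 1) * μ i = 1 - μ i + α * μ i from by ring]
    field_simp
    ring
  · have hderiv : ∀ i : Fin d, HasDerivAt (fun a : ℝ => a * μ i / (1 - μ i + a * μ i))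
        (μ i * (1 - μ i) / (1 + (α - 1) * μ i) ^ 2) α := by
      intro i
      have hD : (1 : ℝ) - μ i + α * μ i ≠ 0 := (hwpos i).ne'
      have h1 : HasDerivAt (fun a : ℝ => a * μ i) (μ i) α := by
        simpa using (hasDerivAt_id α).mul_const (μ i)
      have h2 : HasDerivAt (fun a : ℝ => 1 - μ i + a * μ i) (μ i) α := by
        simpa using ((hasDerivAt_id α).mul_const (μ i)).const_add (1 - μ i)
      have heq : μ i * (1 - μ i) / (1 + (α - 1) * μ i) ^ 2
          = (μ i * (1 - μ i + α * μ i) - α * μ i * μ i) / (1 - μ i + α * μ i) ^ 2 := by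
        rw [show (1:ℝ) + (α - 1) * μ i = 1 - μ i + α * μ i from by ring]
        congr 1; ring
      rw [heq]
      exact h1.div h2 hD
    have hsum : HasDerivAt (fun a : ℝ => ∑ i, a * μ i / (1 - μ i + a * μ i))
        (∑ i, μ i * (1 - μ i) / (1 + (α - 1) * μ i) ^ 2) α := by
      apply HasDerivAt.fun_sum
      exact fun i _ => hderiv i
    refine hsum.congr_of_eventuallyEq ?_
    filter_upwards [Ioi_mem_nhds hα] with a ha using key a ha
end

section
/- For any μ ∈ [0,1]^d, the function h(α) := Σ_{i=1}^d α μ_i / (1 − μ_i + α μ_i) is non-decreasing and concave on (0,∞). In particular, for any frame U ∈ ℝ^{d×n}, positive z ∈ ℝ^n and T ⊆ [n], the proxy function h(α) := Σ_{j∈T} lev^U_j(z ∘ (1_{T^c} + α·1_T)) is non-decreasing and concave on (0,∞). -/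
open Matrix BigOperators

private lemma den_pos {μ α : ℝ} (h0 : 0 ≤ μ) (h1 : μ ≤ 1) (hα : 0 < α) :
    0 < 1 - μ + α * μ := by
  rcases eq_or_lt_of_le h1 with h | h
  · subst h; nlinarith
  · nlinarith [mul_nonneg hα.le h0]

private lemma g_mono {μ : ℝ} (h0 : 0 ≤ μ) (h1 : μ ≤ 1) :
    MonotoneOn (fun α : ℝ => α * μ / (1 - μ + α * μ)) (Set.Ioi 0) := by
  intro x hx y hy hxy
  simp only [Set.mem_Ioi] at hx hy
  rw [div_le_div_iff₀ (den_pos h0 h1 hx) (den_pos h0 h1 hy)]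
  nlinarith [mul_nonneg h0 (sub_nonneg.2 h1), sub_nonneg.2 hxy]

private lemma g_concave {μ : ℝ} (h0 : 0 ≤ μ) (h1 : μ ≤ 1) :
    ConcaveOn ℝ (Set.Ioi 0) (fun α : ℝ => α * μ / (1 - μ + α * μ)) := by
  refine ⟨convex_Ioi 0, fun x hx y hy a b ha hb hab => ?_⟩
  simp only [Set.mem_Ioi, smul_eq_mul] at *
  have hb' : b = 1 - a := by linarith
  subst hb'
  have hz : (0:ℝ) < a * x + (1 - a) * y := by
    rcases ha.eq_or_lt with h | h
    · nlinarith
    · nlinarith [mul_pos h hx, mul_nonneg hb hy.le]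
  have Dx := den_pos h0 h1 hx
  have Dy := den_pos h0 h1 hy
  have Dz := den_pos h0 h1 hz
  rw [← mul_div_assoc, ← mul_div_assoc, div_add_div _ _ Dx.ne' Dy.ne',
    div_le_div_iff₀ (by positivity) Dz]
  nlinarith [mul_nonneg (mul_nonneg (mul_nonneg (mul_nonneg ha (by linarith : (0:ℝ) ≤ 1 - a))
    (sub_nonneg.2 h1)) (sq_nonneg μ)) (sq_nonneg (x - y))]

lemma part1 (d : ℕ) (μ : Fin d → ℝ) (hμ : ∀ i, μ i ∈ Set.Icc (0:ℝ) 1) :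
    MonotoneOn (fun α : ℝ => ∑ i, α * μ i / (1 - μ i + α * μ i)) (Set.Ioi 0) ∧
    ConcaveOn ℝ (Set.Ioi 0) (fun α : ℝ => ∑ i, α * μ i / (1 - μ i + α * μ i)) := by
  constructor
  · intro x hx y hy hxy
    exact Finset.sum_le_sum fun i _ => g_mono (hμ i).1 (hμ i).2 hx hy hxy
  · refine ⟨convex_Ioi 0, fun x hx y hy a b ha hb hab => ?_⟩
    simp only [smul_eq_mul, Finset.mul_sum, ← Finset.sum_add_distrib]
    exact Finset.sum_le_sum fun i _ => by
      have := (g_concave (hμ i).1 (hμ i).2).2 hx hy ha hb hab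
      simpa using this

private lemma vecMul_inj {d n : ℕ} {U : Matrix (Fin d) (Fin n) ℝ} (hU : U.rank = d)
    {x : Fin d → ℝ} (h : x ᵥ* U = 0) : x = 0 := by
  have ht : Uᵀ.rank = d := by rw [U.rank_transpose]; exact hU
  have h1 := Uᵀ.mulVecLin.finrank_range_add_finrank_ker
  rw [show Module.finrank ℝ (LinearMap.range Uᵀ.mulVecLin) = d from ht,
    Module.finrank_fin_fun] at h1
  have hker : LinearMap.ker Uᵀ.mulVecLin = ⊥ :=
    Submodule.finrank_eq_zero.mp (by omega)
  have hx : x ∈ LinearMap.ker Uᵀ.mulVecLin := by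
    simp only [LinearMap.mem_ker, mulVecLin_apply, mulVec_transpose, h]
  rwa [hker, Submodule.mem_bot] at hx

private lemma psd_aux {d n : ℕ} (U : Matrix (Fin d) (Fin n) ℝ) {w : Fin n → ℝ}
    (hw : ∀ j, 0 ≤ w j) : (U * diagonal w * Uᵀ).PosSemidef := by
  have h := (Matrix.posSemidef_diagonal_iff.mpr hw).mul_mul_conjTranspose_same U
  rwa [conjTranspose_eq_transpose_of_trivial] at h

private lemma posdef_aux {d n : ℕ} {U : Matrix (Fin d) (Fin n) ℝ} (hU : U.rank = d)
    {w : Fin n → ℝ} (hw : ∀ j, 0 < w j) : (U * diagonal w * Uᵀ).PosDef := by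
  refine Matrix.PosDef.of_dotProduct_mulVec_pos (psd_aux U fun j => (hw j).le).1 fun x hx => ?_
  have hxU : x ᵥ* U ≠ 0 := fun h => hx (vecMul_inj hU h)
  have key : star x ⬝ᵥ ((U * diagonal w * Uᵀ) *ᵥ x)
      = ∑ j, (x ᵥ* U) j * ((x ᵥ* U) j * w j) := by
    rw [star_trivial, dotProduct_mulVec, ← vecMul_vecMul, ← vecMul_vecMul, vecMul_transpose,
      dotProduct_comm, dotProduct_mulVec]
    simp [dotProduct, vecMul_diagonal]
  rw [key]
  obtain ⟨j0, hj0⟩ : ∃ j, (x ᵥ* U) j ≠ 0 := by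
    by_contra h; push_neg at h; exact hxU (funext h)
  refine Finset.sum_pos' (fun j _ => by nlinarith [hw j, sq_nonneg ((x ᵥ* U) j)])
    ⟨j0, Finset.mem_univ _, by nlinarith [hw j0, mul_self_pos.mpr hj0]⟩

private lemma trace_form {d n : ℕ} (X : Matrix (Fin d) (Fin d) ℝ)
    (U : Matrix (Fin d) (Fin n) ℝ) (w : Fin n → ℝ) :
    Matrix.trace (X * (U * diagonal w * Uᵀ))
      = ∑ j, w j * ((fun i => U i j) ⬝ᵥ (X *ᵥ fun i => U i j)) := by
  have h1 : X * (U * diagonal w * Uᵀ) = (X * (U * diagonal w)) * Uᵀ :=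
    (Matrix.mul_assoc _ _ _).symm
  rw [h1, trace_mul_comm]
  have h2 : Uᵀ * (X * (U * diagonal w)) = (Uᵀ * X * U) * diagonal w := by
    rw [← Matrix.mul_assoc, ← Matrix.mul_assoc]
  rw [h2]
  have h3 : ∀ j, ((Uᵀ * X * U) * diagonal w) j j = (Uᵀ * X * U) j j * w j :=
    fun j => mul_diagonal _ _ _ _
  rw [Matrix.trace]
  simp only [diag_apply, h3]
  refine Finset.sum_congr rfl fun j _ => ?_
  have h4 : (Uᵀ * X * U) j j = (fun i => U i j) ⬝ᵥ (X *ᵥ fun i => U i j) := by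
    simp only [mul_apply, transpose_apply, dotProduct, mulVec, Finset.sum_mul, Finset.mul_sum]
    rw [Finset.sum_comm]
    exact Finset.sum_congr rfl fun k _ => Finset.sum_congr rfl fun i _ => by ring
  rw [h4]; ring

open scoped MatrixOrder in
private lemma proxyh_eq {d n : ℕ} (U : Matrix (Fin d) (Fin n) ℝ) (hU : U.rank = d)
    (z : Fin n → ℝ) (hz : ∀ j, 0 < z j) (T : Finset (Fin n)) :
    ∃ μ : Fin d → ℝ, (∀ i, μ i ∈ Set.Icc (0:ℝ) 1) ∧
      ∀ α : ℝ, 0 < α → proxyh U z T α = ∑ i, α * μ i / (1 - μ i + α * μ i) := by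
  classical
  set zT : Fin n → ℝ := fun j => if j ∈ T then z j else 0 with hzT
  set zC : Fin n → ℝ := fun j => if j ∈ T then 0 else z j with hzC
  set A := U * diagonal zC * Uᵀ with hAdef
  set B := U * diagonal zT * Uᵀ with hBdef
  set S := U * diagonal z * Uᵀ with hSdef
  have hABS : A + B = S := by
    have hdd : diagonal zC + diagonal zT = diagonal z := by
      ext j k
      rcases eq_or_ne j k with rfl | hne
      · by_cases hj : j ∈ T <;> simp [hzT, hzC, hj]
      · simp [Matrix.diagonal_apply_ne _ hne]
    rw [hAdef, hBdef, hSdef, ← Matrix.add_mul, ← Matrix.mul_add, hdd]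
  have hApsd : A.PosSemidef := psd_aux U fun j => by
    by_cases hj : j ∈ T <;> simp [hzC, hj, (hz j).le]
  have hBpsd : B.PosSemidef := psd_aux U fun j => by
    by_cases hj : j ∈ T <;> simp [hzT, hj, (hz j).le]
  have hSpd : S.PosDef := posdef_aux hU hz
  set R := CFC.sqrt S with hRdef
  have hRpsd : R.PosSemidef := (CFC.sqrt_nonneg S).posSemidef
  have hRR : R * R = S := CFC.sqrt_mul_sqrt_self S hSpd.posSemidef.nonneg
  have hdetRR : R.det * R.det = S.det := by rw [← det_mul, hRR]
  have hRdet : IsUnit R.det := by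
    refine isUnit_iff_ne_zero.mpr fun h => ?_
    rw [h, mul_zero] at hdetRR
    exact absurd hdetRR.symm (ne_of_gt hSpd.det_pos)
  have hRinv : R * R⁻¹ = 1 := mul_nonsing_inv R hRdet
  have hRinv' : R⁻¹ * R = 1 := nonsing_inv_mul R hRdet
  have hRinvH : (R⁻¹)ᴴ = R⁻¹ := hRpsd.1.inv
  set C := R⁻¹ * B * R⁻¹ with hCdef
  have hCpsd : C.PosSemidef := by
    have h := hBpsd.conjTranspose_mul_mul_same R⁻¹
    rwa [hRinvH] at h
  have hC : C.IsHermitian := hCpsd.1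
  have hRSR : R⁻¹ * S * R⁻¹ = 1 := by
    rw [← hRR, show R⁻¹ * (R * R) * R⁻¹ = R⁻¹ * R * (R * R⁻¹) from by noncomm_ring,
      hRinv', hRinv, one_mul]
  have hICpsd : ((1 : Matrix (Fin d) (Fin d) ℝ) - C).PosSemidef := by
    have hform : (1 : Matrix (Fin d) (Fin d) ℝ) - C = (R⁻¹)ᴴ * A * R⁻¹ := by
      rw [hRinvH, show A = S - B from by rw [← hABS]; abel, mul_sub, sub_mul, hRSR,
        ← hCdef]
    rw [hform]
    exact hApsd.conjTranspose_mul_mul_same R⁻¹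
  set μ := hC.eigenvalues with hμdef
  set V : Matrix (Fin d) (Fin d) ℝ := (hC.eigenvectorUnitary : Matrix (Fin d) (Fin d) ℝ)
    with hVdef
  have hVV : V * star V = 1 := mem_unitaryGroup_iff.mp hC.eigenvectorUnitary.2
  have hVV' : star V * V = 1 := mem_unitaryGroup_iff'.mp hC.eigenvectorUnitary.2
  have hspec : C = V * diagonal μ * star V := by
    have h := hC.spectral_theorem
    rwa [RCLike.ofReal_real_eq_id, Function.id_comp] at h
  have hdiag : star V * C * V = diagonal μ := by
    rw [hspec, show star V * (V * diagonal μ * star V) * V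
      = (star V * V) * diagonal μ * (star V * V) from by noncomm_ring, hVV', one_mul, mul_one]
  have hμ0 : ∀ i, 0 ≤ μ i := hCpsd.eigenvalues_nonneg
  have hμ1 : ∀ i, μ i ≤ 1 := by
    intro i
    have h2 := hICpsd.conjTranspose_mul_mul_same V
    have h3 : Vᴴ * (1 - C) * V = diagonal (fun i => 1 - μ i) := by
      have hdm : diagonal (fun i => 1 - μ i) = 1 - diagonal μ := by
        ext i j
        rcases eq_or_ne i j with rfl | hne
        · simp
        · simp [Matrix.diagonal_apply_ne _ hne, Matrix.one_apply_ne hne]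
      rw [← star_eq_conjTranspose, mul_sub, sub_mul, mul_one, hVV', hdiag, hdm]
    rw [h3] at h2
    have := posSemidef_diagonal_iff.mp h2 i
    linarith
  refine ⟨μ, fun i => ⟨hμ0 i, hμ1 i⟩, fun α hα => ?_⟩
  set den : Fin d → ℝ := fun i => 1 - μ i + α * μ i with hden
  have hdenpos : ∀ i, 0 < den i := fun i => den_pos (hμ0 i) (hμ1 i) hα
  set N : Matrix (Fin d) (Fin d) ℝ := 1 + (α - 1) • C with hNdef
  set Ninv : Matrix (Fin d) (Fin d) ℝ := V * diagonal (fun i => (den i)⁻¹) * star V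
    with hNinvdef
  have hNform : N = V * diagonal den * star V := by
    have h1 : diagonal den = 1 + (α - 1) • diagonal μ := by
      ext i j
      rcases eq_or_ne i j with rfl | hne
      · simp [hden, Matrix.one_apply]; ring
      · simp [Matrix.diagonal_apply_ne _ hne, Matrix.one_apply_ne hne]
    have key : V * diagonal den * star V = 1 + (α - 1) • (V * diagonal μ * star V) := by
      rw [h1, mul_add, add_mul, mul_one, hVV, mul_smul_comm, smul_mul_assoc]
    rw [hNdef, key, ← hspec]
  have hNNinv : N * Ninv = 1 := by
    rw [hNform, hNinvdef,
      show V * diagonal den * star V * (V * diagonal (fun i => (den i)⁻¹) * star V)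
        = V * diagonal den * (star V * V) * diagonal (fun i => (den i)⁻¹) * star V
        from by noncomm_ring, hVV', mul_one,
      show V * diagonal den * diagonal (fun i => (den i)⁻¹) * star V
        = V * (diagonal den * diagonal (fun i => (den i)⁻¹)) * star V from by noncomm_ring,
      diagonal_mul_diagonal,
      show (fun i => den i * (den i)⁻¹) = fun _ => (1:ℝ) from
        funext fun i => mul_inv_cancel₀ (hdenpos i).ne', diagonal_one, mul_one, hVV]
  set M : Matrix (Fin d) (Fin d) ℝ := A + α • B with hMdef
  have hRCR : R * C * R = B := by
    rw [hCdef, show R * (R⁻¹ * B * R⁻¹) * R = R * R⁻¹ * B * (R⁻¹ * R) from by noncomm_ring,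
      hRinv, hRinv', one_mul, mul_one]
  have hMform : M = R * N * R := by
    have key2 : R * N * R = R * R + (α - 1) • (R * C * R) := by
      rw [hNdef, mul_add, add_mul, mul_one, mul_smul_comm, smul_mul_assoc]
    rw [key2, hRR, hRCR, hMdef, ← hABS, sub_smul, one_smul]
    abel
  have hMinv : M⁻¹ = R⁻¹ * Ninv * R⁻¹ := by
    apply inv_eq_right_inv
    rw [hMform,
      show R * N * R * (R⁻¹ * Ninv * R⁻¹) = R * (N * (R * R⁻¹) * Ninv) * R⁻¹ from by
        noncomm_ring, hRinv, mul_one, hNNinv, mul_one, hRinv]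
  have hscale : U * diagonal (scale z T α) * Uᵀ = M := by
    have hd : diagonal (scale z T α) = diagonal zC + α • diagonal zT := by
      ext j k
      rcases eq_or_ne j k with rfl | hne
      · by_cases hj : j ∈ T <;> simp [scale, hzT, hzC, hj]
      · simp [Matrix.diagonal_apply_ne _ hne]
    rw [hd, Matrix.mul_add, Matrix.add_mul, Matrix.mul_smul, Matrix.smul_mul, hMdef, hAdef,
      hBdef]
  have hq := trace_form M⁻¹ U zT
  have hsum : proxyh U z T α = α * Matrix.trace (M⁻¹ * B) := by
    rw [hBdef, hq, Finset.mul_sum]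
    rw [show (∑ j, α * (zT j * ((fun i => U i j) ⬝ᵥ M⁻¹ *ᵥ fun i => U i j)))
        = ∑ j ∈ T, α * (zT j * ((fun i => U i j) ⬝ᵥ M⁻¹ *ᵥ fun i => U i j)) from
      (Finset.sum_subset T.subset_univ (fun j _ hj => by simp [hzT, hj])).symm]
    unfold proxyh lev
    rw [hscale]
    refine Finset.sum_congr rfl fun j hj => ?_
    simp only [hzT, scale, hj, if_true]
    ring
  have htr : Matrix.trace (M⁻¹ * B) = ∑ i, μ i * (den i)⁻¹ := by
    rw [show M⁻¹ * B = R⁻¹ * Ninv * (R⁻¹ * B) from by rw [hMinv]; noncomm_ring,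
      trace_mul_comm,
      show R⁻¹ * B * (R⁻¹ * Ninv) = R⁻¹ * B * R⁻¹ * Ninv from by noncomm_ring, ← hCdef,
      hspec, hNinvdef,
      show V * diagonal μ * star V * (V * diagonal (fun i => (den i)⁻¹) * star V)
        = V * (diagonal μ * (star V * V) * diagonal fun i => (den i)⁻¹) * star V from by
        noncomm_ring, hVV', mul_one, diagonal_mul_diagonal, trace_mul_cycle,
      hVV', one_mul, trace_diagonal]
  rw [hsum, htr, Finset.mul_sum]
  refine Finset.sum_congr rfl fun i _ => ?_
  rw [div_eq_mul_inv]
  ring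

/-- For any `μ ∈ [0,1]^d`, `α ↦ Σ_i α μ_i/(1−μ_i+αμ_i)` is non-decreasing and concave
on `(0,∞)`; in particular, the frame-scaling proxy function is non-decreasing and
concave on `(0,∞)`. -/
theorem proxy_monotone_concave :
    (∀ (d : ℕ) (μ : Fin d → ℝ), (∀ i, μ i ∈ Set.Icc (0 : ℝ) 1) →
      MonotoneOn (fun α : ℝ => ∑ i, α * μ i / (1 - μ i + α * μ i)) (Set.Ioi 0) ∧
      ConcaveOn ℝ (Set.Ioi 0) (fun α : ℝ => ∑ i, α * μ i / (1 - μ i + α * μ i))) ∧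
    (∀ (d n : ℕ) (U : Matrix (Fin d) (Fin n) ℝ), U.rank = d →
      ∀ (z : Fin n → ℝ), (∀ j, 0 < z j) → ∀ T : Finset (Fin n),
      MonotoneOn (proxyh U z T) (Set.Ioi 0) ∧
      ConcaveOn ℝ (Set.Ioi 0) (proxyh U z T)) := by
  refine ⟨part1, fun d n U hU z hz T => ?_⟩
  obtain ⟨μ, hμ, heq⟩ := proxyh_eq U hU z hz T
  obtain ⟨hm, hc⟩ := part1 d μ hμ
  constructor
  · intro x hx y hy hxy
    rw [Set.mem_Ioi] at hx hy
    rw [heq x hx, heq y hy]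
    exact hm hx hy hxy
  · refine ⟨convex_Ioi 0, fun x hx y hy a b ha hb hab => ?_⟩
    have hxy : a • x + b • y ∈ Set.Ioi 0 := (convex_Ioi 0) hx hy ha hb hab
    rw [heq _ (Set.mem_Ioi.mp hxy), heq x (Set.mem_Ioi.mp hx), heq y (Set.mem_Ioi.mp hy)]
    exact hc.2 hx hy ha hb hab
end

section
/- Let μ ∈ [0,1]^d and define h(α) := Σ_{i=1}^d α μ_i / (1 + (α−1) μ_i). Then for all 1 ≤ α ≤ α': (α/α')·(α'−α)·h'(α) ≤ h(α') − h(α) ≤ (α'−α)·h'(α). Equivalently, the Bregman divergence D(β|α) := h'(α)(β−α) + h(α) − h(β) satisfies 0 ≤ D(α'|α) ≤ (α'/α − 1)·(h(α') − h(α)). -/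
open BigOperators

/-- The eigenvalue form of the proxy function: `h(α) = Σ_i α μ_i/(1+(α−1)μ_i)`. -/
noncomputable def hfun {d : ℕ} (μ : Fin d → ℝ) (α : ℝ) : ℝ :=
  ∑ i, α * μ i / (1 + (α - 1) * μ i)

/-- Its derivative: `h'(α) = Σ_i μ_i(1−μ_i)/(1+(α−1)μ_i)²`. -/
noncomputable def hderiv {d : ℕ} (μ : Fin d → ℝ) (α : ℝ) : ℝ :=
  ∑ i, μ i * (1 - μ i) / (1 + (α - 1) * μ i) ^ 2

lemma term_upper (m a b : ℝ) (hm0 : 0 ≤ m) (hm1 : m ≤ 1) (ha : 1 ≤ a) (hab : a ≤ b) :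
    b * m / (1 + (b - 1) * m) - a * m / (1 + (a - 1) * m)
      ≤ (b - a) * (m * (1 - m) / (1 + (a - 1) * m) ^ 2) := by
  have hDa : (0:ℝ) < 1 + (a - 1) * m := by nlinarith
  have hDb : (0:ℝ) < 1 + (b - 1) * m := by nlinarith
  rw [div_sub_div _ _ (ne_of_gt hDb) (ne_of_gt hDa), mul_div_assoc',
    div_le_div_iff₀ (by positivity) (by positivity)]
  nlinarith [mul_nonneg (mul_nonneg (mul_nonneg (mul_nonneg (mul_nonneg hm0 (sub_nonneg.2 hm1))
    (sub_nonneg.2 hab)) hDa.le) (sub_nonneg.2 hab)) hm0]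

lemma term_lower (m a b : ℝ) (hm0 : 0 ≤ m) (hm1 : m ≤ 1) (ha : 1 ≤ a) (hab : a ≤ b) :
    (a / b) * (b - a) * (m * (1 - m) / (1 + (a - 1) * m) ^ 2)
      ≤ b * m / (1 + (b - 1) * m) - a * m / (1 + (a - 1) * m) := by
  have hDa : (0:ℝ) < 1 + (a - 1) * m := by nlinarith
  have hDb : (0:ℝ) < 1 + (b - 1) * m := by nlinarith
  have hb : (0:ℝ) < b := by linarith
  rw [div_sub_div _ _ (ne_of_gt hDb) (ne_of_gt hDa), div_mul_eq_mul_div, div_mul_eq_mul_div,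
    mul_div_assoc', div_div, div_le_div_iff₀ (by positivity) (by positivity)]
  nlinarith [mul_nonneg (mul_nonneg (mul_nonneg (mul_nonneg (mul_nonneg hm0 (sub_nonneg.2 hm1))
    (sub_nonneg.2 hab)) hDa.le) (sub_nonneg.2 hab)) (sub_nonneg.2 hm1)]

/-- Approximate linearity: for `1 ≤ α ≤ α'`,
`(α/α')(α'−α)h'(α) ≤ h(α') − h(α) ≤ (α'−α)h'(α)`; equivalently the Bregman divergence
`D(α'|α) = h'(α)(α'−α) + h(α) − h(α')` satisfies `0 ≤ D(α'|α) ≤ (α'/α − 1)(h(α') − h(α))`. -/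
theorem hfun_bregman {d : ℕ} (μ : Fin d → ℝ) (hμ : ∀ i, μ i ∈ Set.Icc (0 : ℝ) 1)
    (α α' : ℝ) (hα : 1 ≤ α) (hαα' : α ≤ α') :
    ((α / α') * (α' - α) * hderiv μ α ≤ hfun μ α' - hfun μ α ∧
      hfun μ α' - hfun μ α ≤ (α' - α) * hderiv μ α) ∧
    (0 ≤ hderiv μ α * (α' - α) + hfun μ α - hfun μ α' ∧
      hderiv μ α * (α' - α) + hfun μ α - hfun μ α'
        ≤ (α' / α - 1) * (hfun μ α' - hfun μ α)) := by
  have hL : (α / α') * (α' - α) * hderiv μ α ≤ hfun μ α' - hfun μ α := by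
    rw [hfun, hfun, hderiv, Finset.mul_sum, ← Finset.sum_sub_distrib]
    exact Finset.sum_le_sum fun i _ =>
      term_lower (μ i) α α' (hμ i).1 (hμ i).2 hα hαα'
  have hU : hfun μ α' - hfun μ α ≤ (α' - α) * hderiv μ α := by
    rw [hfun, hfun, hderiv, Finset.mul_sum, ← Finset.sum_sub_distrib]
    exact Finset.sum_le_sum fun i _ =>
      term_upper (μ i) α α' (hμ i).1 (hμ i).2 hα hαα'
  have hα0 : (0:ℝ) < α := by linarith
  have hα'0 : (0:ℝ) < α' := by linarith
  refine ⟨⟨hL, hU⟩, by linarith, ?_⟩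
  have h2 : (α / α') * (α' - α) * hderiv μ α * (α' / α) ≤ (hfun μ α' - hfun μ α) * (α' / α) :=
    mul_le_mul_of_nonneg_right hL (by positivity)
  have he : (α / α') * (α' - α) * hderiv μ α * (α' / α) = (α' - α) * hderiv μ α := by
    field_simp
  rw [he] at h2
  have : (α' / α - 1) * (hfun μ α' - hfun μ α)
      = (hfun μ α' - hfun μ α) * (α' / α) - (hfun μ α' - hfun μ α) := by ring
  rw [this]
  nlinarith [h2]
end

section
/- Let μ ∈ [0,1]^d, let h(α) := Σ_{i=1}^d α μ_i / (1 + (α−1) μ_i), and let γ ∈ (0,1]. Suppose Σ_{i : μ_i > 0} (1 − μ_i) ≥ γ and h'(1) < γ/4. Then μ_s := Σ_{i : μ_i < 1/2} μ_i > 0, and for every δ ∈ [0,1], setting α := 1 + δ/μ_s one has δ/4 ≤ h(α) − h(1) ≤ γ/2 + δ. Consequently, any α_* ≥ 1 with h(α_*) = h(1) + γ/5 satisfies α_* ≤ 1 + γ/μ_s. -/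
open BigOperators

private lemma hdiff {d : ℕ} (μ : Fin d → ℝ) (hμ : ∀ i, μ i ∈ Set.Icc (0 : ℝ) 1)
    (β : ℝ) (hβ : 0 ≤ β) :
    hfun μ (1 + β) - hfun μ 1 = ∑ i, β * μ i * (1 - μ i) / (1 + β * μ i) := by
  unfold hfun
  rw [← Finset.sum_sub_distrib]
  apply Finset.sum_congr rfl
  intro i _
  have h0 := (hμ i).1
  have hpos : 0 < 1 + β * μ i := by positivity
  have h1 : (1 : ℝ) + (1 + β - 1) * μ i = 1 + β * μ i := by ring
  have h2 : (1 : ℝ) + (1 - 1) * μ i = 1 := by ring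
  rw [h1, h2]
  field_simp
  ring

private lemma gmono {m b c : ℝ} (hm0 : 0 ≤ m) (hm1 : m ≤ 1) (hb : 0 ≤ b) (hbc : b ≤ c) :
    b * m * (1 - m) / (1 + b * m) ≤ c * m * (1 - m) / (1 + c * m) := by
  have h1 : 0 < 1 + b * m := by positivity
  have h2 : 0 < 1 + c * m := by nlinarith [mul_nonneg (hb.trans hbc) hm0]
  rw [div_le_div_iff₀ h1 h2]
  nlinarith [mul_nonneg (mul_nonneg hm0 (sub_nonneg.2 hm1)) (sub_nonneg.2 hbc),
    mul_nonneg (mul_nonneg (mul_nonneg hm0 (sub_nonneg.2 hm1)) (sub_nonneg.2 hbc))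
      (mul_nonneg hb hm0)]

/-- Small-derivative case of the update range lemma: if `Σ_{i : μ_i > 0} (1 − μ_i) ≥ γ`
and `h'(1) < γ/4`, then `μ_s := Σ_{i : μ_i < 1/2} μ_i > 0`; for every `δ ∈ [0,1]`,
`α := 1 + δ/μ_s` satisfies `δ/4 ≤ h(α) − h(1) ≤ γ/2 + δ`; and any `α_* ≥ 1` with
`h(α_*) = h(1) + γ/5` satisfies `α_* ≤ 1 + γ/μ_s`. -/
theorem update_range_small_derivative {d : ℕ} (μ : Fin d → ℝ)
    (hμ : ∀ i, μ i ∈ Set.Icc (0 : ℝ) 1) (γ : ℝ) (hγ0 : 0 < γ) (hγ1 : γ ≤ 1)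
    (hfeas : γ ≤ ∑ i ∈ Finset.univ.filter (fun i => 0 < μ i), (1 - μ i))
    (hder : hderiv μ 1 < γ / 4) :
    0 < ∑ i ∈ Finset.univ.filter (fun i => μ i < 1 / 2), μ i ∧
    (∀ δ : ℝ, 0 ≤ δ → δ ≤ 1 →
      δ / 4 ≤ hfun μ (1 + δ / ∑ i ∈ Finset.univ.filter (fun i => μ i < 1 / 2), μ i)
        - hfun μ 1 ∧
      hfun μ (1 + δ / ∑ i ∈ Finset.univ.filter (fun i => μ i < 1 / 2), μ i)
        - hfun μ 1 ≤ γ / 2 + δ) ∧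
    (∀ αstar : ℝ, 1 ≤ αstar → hfun μ αstar = hfun μ 1 + γ / 5 →
      αstar ≤ 1 + γ / ∑ i ∈ Finset.univ.filter (fun i => μ i < 1 / 2), μ i) := by
  classical
  set T := Finset.univ.filter (fun i => μ i < 1 / 2) with hT
  set s := ∑ i ∈ T, μ i with hs
  have hμ0 : ∀ i, (0 : ℝ) ≤ μ i := fun i => (hμ i).1
  have hμ1 : ∀ i, μ i ≤ 1 := fun i => (hμ i).2
  have hprod : ∀ i, (0 : ℝ) ≤ μ i * (1 - μ i) :=
    fun i => mul_nonneg (hμ0 i) (sub_nonneg.2 (hμ1 i))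
  have hd1 : hderiv μ 1 = ∑ i, μ i * (1 - μ i) := by
    unfold hderiv
    apply Finset.sum_congr rfl
    intro i _
    norm_num
  -- existence of a small positive eigenvalue
  have hex : ∃ i, 0 < μ i ∧ μ i < 1 / 2 := by
    by_contra hc
    push_neg at hc
    have h1 : ∑ i ∈ Finset.univ.filter (fun i => 0 < μ i), (1 - μ i)
        ≤ ∑ i ∈ Finset.univ.filter (fun i => 0 < μ i), 2 * (μ i * (1 - μ i)) := by
      apply Finset.sum_le_sum
      intro i hi
      have hpos : 0 < μ i := (Finset.mem_filter.1 hi).2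
      have hge : 1 / 2 ≤ μ i := hc i hpos
      nlinarith [hμ1 i]
    have h2 : ∑ i ∈ Finset.univ.filter (fun i => 0 < μ i), 2 * (μ i * (1 - μ i))
        ≤ ∑ i, 2 * (μ i * (1 - μ i)) := by
      apply Finset.sum_le_sum_of_subset_of_nonneg (Finset.filter_subset _ _)
      intro i _ _
      have := hprod i
      linarith
    rw [← Finset.mul_sum] at h1
    rw [← Finset.mul_sum, ← Finset.mul_sum] at h2
    rw [hd1] at hder
    linarith [h1.trans h2]
  obtain ⟨j, hj1, hj2⟩ := hex
  have hjT : j ∈ T := by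
    rw [hT, Finset.mem_filter]
    exact ⟨Finset.mem_univ j, hj2⟩
  have hspos : 0 < s := by
    have hle : μ j ≤ s := Finset.single_le_sum (fun i _ => hμ0 i) hjT
    linarith
  -- key bounds for δ ∈ [0,1]
  have key : ∀ δ : ℝ, 0 ≤ δ → δ ≤ 1 →
      δ / 4 ≤ hfun μ (1 + δ / s) - hfun μ 1 ∧
      hfun μ (1 + δ / s) - hfun μ 1 ≤ γ / 2 + δ := by
    intro δ hδ0 hδ1
    set β := δ / s with hβ
    have hβ0 : 0 ≤ β := div_nonneg hδ0 hspos.le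
    have hβs : β * s = δ := div_mul_cancel₀ δ (ne_of_gt hspos)
    rw [hdiff μ hμ β hβ0]
    have hμles : ∀ i ∈ T, μ i ≤ s := fun i hi =>
      Finset.single_le_sum (fun k _ => hμ0 k) hi
    have hterm_nonneg : ∀ i, (0 : ℝ) ≤ β * μ i * (1 - μ i) / (1 + β * μ i) := by
      intro i
      apply div_nonneg
      · exact mul_nonneg (mul_nonneg hβ0 (hμ0 i)) (sub_nonneg.2 (hμ1 i))
      · linarith [mul_nonneg hβ0 (hμ0 i)]
    constructor
    · -- lower bound
      have hlow1 : ∀ i ∈ T, β / (2 * (1 + δ)) * μ i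
          ≤ β * μ i * (1 - μ i) / (1 + β * μ i) := by
        intro i hi
        have hiT : μ i < 1 / 2 := (Finset.mem_filter.1 hi).2
        have hβμ : β * μ i ≤ δ := by
          calc β * μ i ≤ β * s := by
                exact mul_le_mul_of_nonneg_left (hμles i hi) hβ0
            _ = δ := hβs
        have hd1' : (0 : ℝ) < 1 + β * μ i := by linarith [mul_nonneg hβ0 (hμ0 i)]
        have hd2' : (0 : ℝ) < 2 * (1 + δ) := by linarith
        rw [div_mul_eq_mul_div, div_le_div_iff₀ hd2' hd1']
        nlinarith [mul_nonneg (mul_nonneg hβ0 (hμ0 i)) (sub_nonneg.2 hβμ),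
          mul_nonneg (mul_nonneg (mul_nonneg hβ0 (hμ0 i)) (by linarith : (0:ℝ) ≤ 1 + δ))
            (by linarith : (0:ℝ) ≤ 1 - 2 * μ i)]
      have hsum1 : ∑ i ∈ T, β / (2 * (1 + δ)) * μ i
          ≤ ∑ i ∈ T, β * μ i * (1 - μ i) / (1 + β * μ i) :=
        Finset.sum_le_sum hlow1
      have hsum2 : ∑ i ∈ T, β / (2 * (1 + δ)) * μ i = δ / (2 * (1 + δ)) := by
        rw [← Finset.mul_sum, ← hs, div_mul_eq_mul_div, hβs]
      have hsub : ∑ i ∈ T, β * μ i * (1 - μ i) / (1 + β * μ i)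
          ≤ ∑ i, β * μ i * (1 - μ i) / (1 + β * μ i) :=
        Finset.sum_le_sum_of_subset_of_nonneg (Finset.filter_subset _ _)
          (fun i _ _ => hterm_nonneg i)
      have hfrac : δ / 4 ≤ δ / (2 * (1 + δ)) := by
        rw [div_le_div_iff₀ (by norm_num) (by linarith)]
        nlinarith
      linarith [hsum2 ▸ hsum1]
    · -- upper bound
      have hsplit : ∑ i, β * μ i * (1 - μ i) / (1 + β * μ i)
          = ∑ i ∈ T, β * μ i * (1 - μ i) / (1 + β * μ i)
          + ∑ i ∈ Finset.univ.filter (fun i => ¬ μ i < 1 / 2),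
              β * μ i * (1 - μ i) / (1 + β * μ i) := by
        rw [hT]
        exact (Finset.sum_filter_add_sum_filter_not _ _ _).symm
      have hup1 : ∑ i ∈ T, β * μ i * (1 - μ i) / (1 + β * μ i) ≤ δ := by
        calc ∑ i ∈ T, β * μ i * (1 - μ i) / (1 + β * μ i)
            ≤ ∑ i ∈ T, β * μ i := by
              apply Finset.sum_le_sum
              intro i _
              have hd' : (0 : ℝ) < 1 + β * μ i := by linarith [mul_nonneg hβ0 (hμ0 i)]
              rw [div_le_iff₀ hd']
              nlinarith [mul_nonneg hβ0 (hμ0 i), hμ0 i, hμ1 i,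
                mul_nonneg (mul_nonneg hβ0 (hμ0 i)) (mul_nonneg hβ0 (hμ0 i))]
          _ = β * s := by rw [hs, Finset.mul_sum]
          _ = δ := hβs
      have hup2 : ∑ i ∈ Finset.univ.filter (fun i => ¬ μ i < 1 / 2),
            β * μ i * (1 - μ i) / (1 + β * μ i) ≤ γ / 2 := by
        have ha : ∑ i ∈ Finset.univ.filter (fun i => ¬ μ i < 1 / 2),
              β * μ i * (1 - μ i) / (1 + β * μ i)
            ≤ ∑ i ∈ Finset.univ.filter (fun i => ¬ μ i < 1 / 2),
              2 * (μ i * (1 - μ i)) := by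
          apply Finset.sum_le_sum
          intro i hi
          have hge : 1 / 2 ≤ μ i := not_lt.1 (Finset.mem_filter.1 hi).2
          have hd' : (0 : ℝ) < 1 + β * μ i := by linarith [mul_nonneg hβ0 (hμ0 i)]
          have hb1 : β * μ i * (1 - μ i) / (1 + β * μ i) ≤ 1 - μ i := by
            rw [div_le_iff₀ hd']
            nlinarith [mul_nonneg hβ0 (hμ0 i), sub_nonneg.2 (hμ1 i),
              mul_nonneg (mul_nonneg hβ0 (hμ0 i)) (sub_nonneg.2 (hμ1 i))]
          nlinarith [hμ1 i]
        have hb : ∑ i ∈ Finset.univ.filter (fun i => ¬ μ i < 1 / 2),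
              2 * (μ i * (1 - μ i)) ≤ ∑ i, 2 * (μ i * (1 - μ i)) := by
          apply Finset.sum_le_sum_of_subset_of_nonneg (Finset.filter_subset _ _)
          intro i _ _
          have := hprod i
          linarith
        rw [← Finset.mul_sum] at ha
        rw [← Finset.mul_sum, ← Finset.mul_sum, ← hd1] at hb
        linarith [ha.trans hb]
      linarith [hsplit ▸ (add_le_add hup1 hup2)]
  refine ⟨hspos, key, ?_⟩
  intro αstar hα1 heq
  by_contra hgt
  push_neg at hgt
  have hγs0 : 0 ≤ γ / s := div_nonneg hγ0.le hspos.le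
  have hlow := (key γ hγ0.le hγ1).1
  have hmono : hfun μ (1 + γ / s) ≤ hfun μ αstar := by
    have hrw : αstar = 1 + (αstar - 1) := by ring
    rw [hrw]
    have h1 := hdiff μ hμ (γ / s) hγs0
    have h2 := hdiff μ hμ (αstar - 1) (by linarith)
    have hsum : ∑ i, (γ / s) * μ i * (1 - μ i) / (1 + (γ / s) * μ i)
        ≤ ∑ i, (αstar - 1) * μ i * (1 - μ i) / (1 + (αstar - 1) * μ i) := by
      apply Finset.sum_le_sum
      intro i _
      exact gmono (hμ0 i) (hμ1 i) hγs0 (by linarith)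
    linarith
  rw [heq] at hmono
  linarith
end

section
/- Let f : ℝ → ℝ be differentiable and concave with f'(α) > 0 for all α, and let b' < b be reals. Suppose there exist α_* with f(α_*) = b' and an initial point α_0 with f(α_0) ≤ b. Define the Newton–Dinkelbach iterates by α_{t+1} := α_t + (b − f(α_t))/f'(α_t). Let ε ∈ (0,1) satisfy ε·(b − f(α_0)) ≤ b − b', and set T := 1 + ⌈log_{1/(1−ε)}(max{1, D_f(α_* | α_0)/(b − b')})⌉, where D_f(β|α) := f'(α)(β−α) + f(α) − f(β) is the Bregman divergence of f. Then there exists t ≤ T with b' ≤ f(α_t) ≤ b. -/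
set_option maxHeartbeats 1000000


open BigOperators

/-- Gradient inequality for a concave differentiable function. -/
lemma nd_grad {f : ℝ → ℝ} (hdiff : Differentiable ℝ f) (hconc : ConcaveOn ℝ Set.univ f)
    (x y : ℝ) : f y ≤ f x + deriv f x * (y - x) := by
  rcases lt_trichotomy x y with h | rfl | h
  · have hs := hconc.slope_le_deriv (Set.mem_univ x) (Set.mem_univ y) h (hdiff x)
    rw [slope_def_field] at hs
    have hxy : 0 < y - x := by linarith
    rw [div_le_iff₀ hxy] at hs
    nlinarith
  · simp
  · have hs := hconc.deriv_le_slope (Set.mem_univ y) (Set.mem_univ x) h (hdiff x)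
    rw [slope_def_field] at hs
    have hxy : 0 < x - y := by linarith
    rw [le_div_iff₀ hxy] at hs
    nlinarith

/-- Convergence of the Newton–Dinkelbach method for a differentiable, strictly
increasing, concave function `f`: starting from `α₀` with `f(α₀) ≤ b`, the iterates
`α_{t+1} = α_t + (b − f(α_t))/f'(α_t)` reach a point with `b' ≤ f(α_t) ≤ b` within
`T = 1 + ⌈log_{1/(1−ε)}(max{1, D_f(α_*|α₀)/(b−b')})⌉` steps, where `f(α_*) = b'`,
`ε ∈ (0,1)` satisfies `ε(b − f(α₀)) ≤ b − b'`, and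
`D_f(β|α) = f'(α)(β−α) + f(α) − f(β)` is the Bregman divergence of `f`. -/
theorem newton_dinkelbach {f : ℝ → ℝ}
    (hdiff : Differentiable ℝ f) (hconc : ConcaveOn ℝ Set.univ f)
    (hder : ∀ α : ℝ, 0 < deriv f α)
    (b' b : ℝ) (hbb : b' < b)
    (αstar : ℝ) (hαstar : f αstar = b')
    (α₀ : ℝ) (hα₀ : f α₀ ≤ b)
    (a : ℕ → ℝ) (ha0 : a 0 = α₀)
    (harec : ∀ t : ℕ, a (t + 1) = a t + (b - f (a t)) / deriv f (a t))
    (ε : ℝ) (hε0 : 0 < ε) (hε1 : ε < 1)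
    (hεb : ε * (b - f α₀) ≤ b - b') :
    ∃ t : ℕ, (t : ℝ) ≤ 1 +
        (⌈Real.logb (1 / (1 - ε))
          (max 1 ((deriv f α₀ * (αstar - α₀) + f α₀ - f αstar) / (b - b')))⌉ : ℤ) ∧
      b' ≤ f (a t) ∧ f (a t) ≤ b := by
  subst ha0
  have hgrad : ∀ x y : ℝ, f y ≤ f x + deriv f x * (y - x) := nd_grad hdiff hconc
  have hmono : StrictMono f := strictMono_of_deriv_pos hder
  have h1ε : 0 < 1 - ε := by linarith
  -- all iterates stay below b
  have hfb : ∀ t, f (a t) ≤ b := by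
    intro t
    induction t with
    | zero => exact hα₀
    | succ t ih =>
      have h := hgrad (a t) (a (t + 1))
      have hgt := hder (a t)
      rw [harec t, add_sub_cancel_left, mul_div_cancel₀ _ (ne_of_gt hgt)] at h
      rw [harec t]
      linarith
  -- iterates are monotone
  have haM : Monotone a := by
    apply monotone_nat_of_le_succ
    intro t
    rw [harec t]
    have h1 := hfb t
    have : 0 ≤ (b - f (a t)) / deriv f (a t) :=
      div_nonneg (by linarith) (le_of_lt (hder (a t)))
    linarith
  have hfM : ∀ s t : ℕ, s ≤ t → f (a s) ≤ f (a t) := fun s t hst =>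
    hmono.monotone (haM hst)
  -- Bregman divergence to αstar
  set D : ℕ → ℝ := fun t => deriv f (a t) * (αstar - a t) + f (a t) - b' with hD
  -- key identity
  have hid : ∀ t, D t = deriv f (a t) * (αstar - a (t + 1)) + (b - b') := by
    intro t
    have hgt := (hder (a t)).ne'
    simp only [hD, harec t]
    field_simp
    ring
  -- termination criterion
  have hterm : ∀ t, D t ≤ b - b' → b' ≤ f (a (t + 1)) := by
    intro t hDt
    have h := hid t
    have hgt := hder (a t)
    have hle : αstar ≤ a (t + 1) := by
      by_contra hc
      push_neg at hc
      nlinarith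
    rw [← hαstar]
    exact hmono.monotone hle
  -- geometric decay
  have hdec : ∀ t, f (a (t + 1)) < b' → D (t + 1) ≤ (1 - ε) * D t := by
    intro t hy
    set x := a t
    set y := a (t + 1)
    have hgx := hder x
    have hgy := hder y
    have hfxy : f x ≤ f y := hfM t (t + 1) (Nat.le_succ t)
    have hfx : f x < b := by linarith
    have hxy : x < y := by
      have : (b - f x) / deriv f x > 0 := div_pos (by linarith) hgx
      simp only [y, harec t]
      linarith
    have hyst : y < αstar := by
      have : f y < f αstar := by rw [hαstar]; exact hy
      exact hmono.lt_iff_lt.mp this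
    -- derivative at y bounded by slope
    have hs := hconc.deriv_le_slope (Set.mem_univ x) (Set.mem_univ y) hxy (hdiff y)
    rw [slope_def_field] at hs
    have hyx : 0 < y - x := by linarith
    rw [le_div_iff₀ hyx] at hs
    -- y - x = (b - f x) / deriv f x
    have hstep : y - x = (b - f x) / deriv f x := by
      simp only [y, harec t]; ring
    have hstep' : deriv f x * (y - x) = b - f x := by
      rw [hstep, mul_div_cancel₀ _ (ne_of_gt hgx)]
    -- δ_{t+1} ≥ ε δ_t
    have hδ0 : f (a 0) ≤ f x := hfM 0 t (Nat.zero_le t)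
    have hδε : ε * (b - f x) ≤ b - f y := by
      have h1 : ε * (b - f x) ≤ ε * (b - f (a 0)) := by nlinarith
      have h2 : b - b' ≤ b - f y := by linarith
      linarith
    -- deriv f y * (b - f x) ≤ deriv f x * (f y - f x)
    have hkey : deriv f y * (b - f x) ≤ deriv f x * (f y - f x) := by
      have := mul_le_mul_of_nonneg_left hs (le_of_lt hgx)
      calc deriv f y * (b - f x) = deriv f y * (deriv f x * (y - x)) := by rw [hstep']
        _ = deriv f x * (deriv f y * (y - x)) := by ring
        _ ≤ deriv f x * (f y - f x) := by nlinarith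
    -- D(t+1) ≤ deriv f y * (αstar - y)
    have hD1 : D (t + 1) ≤ deriv f y * (αstar - y) := by
      simp only [hD]
      have : f y - b' ≤ 0 := by linarith
      linarith
    -- identity at t
    have hidt : deriv f x * (αstar - y) = D t - (b - b') := by
      have h := hid t
      linarith
    have hpos : 0 ≤ deriv f x * (αstar - y) := by nlinarith
    -- combine: deriv f y ≤ (1-ε) * deriv f x  (since f y - f x ≤ (1-ε)(b - f x))
    have hfy1 : f y - f x ≤ (1 - ε) * (b - f x) := by nlinarith
    have hgy' : deriv f y * (b - f x) ≤ (1 - ε) * deriv f x * (b - f x) := by nlinarith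
    have hbfx : 0 < b - f x := by linarith
    have hgy'' : deriv f y ≤ (1 - ε) * deriv f x := le_of_mul_le_mul_right (by linarith) hbfx
    have hfin : deriv f y * (αstar - y) ≤ (1 - ε) * (deriv f x * (αstar - y)) := by
      nlinarith
    calc D (t + 1) ≤ deriv f y * (αstar - y) := hD1
      _ ≤ (1 - ε) * (deriv f x * (αstar - y)) := hfin
      _ = (1 - ε) * (D t - (b - b')) := by rw [hidt]
      _ ≤ (1 - ε) * D t := by nlinarith
  -- D 0 is the quantity in the statement
  have hD0eq : deriv f (a 0) * (αstar - a 0) + f (a 0) - f αstar = D 0 := by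
    simp only [hD, hαstar]
  rw [hD0eq]
  have hD0 : 0 ≤ D 0 := by
    have := hgrad (a 0) αstar
    simp only [hD]
    rw [← hαstar]
    linarith
  set C : ℤ := ⌈Real.logb (1 / (1 - ε)) (max 1 (D 0 / (b - b')))⌉ with hCdef
  have hbase : (1 : ℝ) < 1 / (1 - ε) := one_lt_one_div h1ε (by linarith)
  have hC0 : 0 ≤ C := Int.ceil_nonneg (Real.logb_nonneg hbase (le_max_left _ _))
  set N : ℕ := C.toNat with hNdef
  have hNC : (N : ℝ) = (C : ℝ) := by
    rw [hNdef]
    exact_mod_cast congrArg (fun z : ℤ => (z : ℝ)) (Int.toNat_of_nonneg hC0)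
  by_cases hex : ∃ t, t ≤ N + 1 ∧ b' ≤ f (a t)
  · obtain ⟨t, htle, hbt⟩ := hex
    refine ⟨t, ?_, hbt, hfb t⟩
    have : (t : ℝ) ≤ (N : ℝ) + 1 := by exact_mod_cast htle
    rw [hNC] at this
    linarith
  · push_neg at hex
    exfalso
    have hDgeo : ∀ t, t ≤ N → D t ≤ (1 - ε) ^ t * D 0 := by
      intro t
      induction t with
      | zero => intro _; simp
      | succ t ih =>
        intro h
        have h1 : t ≤ N := Nat.le_of_succ_le h
        have h2 := hdec t (hex (t + 1) (by omega))
        have h3 := ih h1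
        calc D (t + 1) ≤ (1 - ε) * D t := h2
          _ ≤ (1 - ε) * ((1 - ε) ^ t * D 0) := by nlinarith
          _ = (1 - ε) ^ (t + 1) * D 0 := by ring
    have hpowpos : (0 : ℝ) < (1 - ε) ^ N := pow_pos h1ε N
    have hfinal : D N ≤ b - b' := by
      by_cases hD0b : D 0 ≤ b - b'
      · have h1 : (1 - ε) ^ N ≤ 1 := pow_le_one₀ (le_of_lt h1ε) (by linarith)
        have := hDgeo N le_rfl
        nlinarith
      · push_neg at hD0b
        have hbbpos : (0 : ℝ) < b - b' := by linarith
        have hx1 : (1 : ℝ) < D 0 / (b - b') := (one_lt_div hbbpos).mpr hD0b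
        have hmax : max 1 (D 0 / (b - b')) = D 0 / (b - b') := max_eq_right (le_of_lt hx1)
        have hlogle : Real.logb (1 / (1 - ε)) (D 0 / (b - b')) ≤ (N : ℝ) := by
          rw [hNC]
          calc Real.logb (1 / (1 - ε)) (D 0 / (b - b'))
              = Real.logb (1 / (1 - ε)) (max 1 (D 0 / (b - b'))) := by rw [hmax]
            _ ≤ (C : ℝ) := Int.le_ceil _
        have hxpos : (0 : ℝ) < D 0 / (b - b') := by linarith
        have hrw : (1 / (1 - ε)) ^ (Real.logb (1 / (1 - ε)) (D 0 / (b - b'))) =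
            D 0 / (b - b') := Real.rpow_logb (by linarith) (ne_of_gt hbase) hxpos
        have hle2 : D 0 / (b - b') ≤ (1 / (1 - ε)) ^ (N : ℝ) := by
          rw [← hrw]
          exact (Real.rpow_le_rpow_left_iff hbase).mpr hlogle
        rw [Real.rpow_natCast] at hle2
        have hcancel : (1 - ε) ^ N * (1 / (1 - ε)) ^ N = 1 := by
          rw [← mul_pow]
          rw [mul_one_div_cancel (ne_of_gt h1ε)]
          exact one_pow N
        have hD0le : D 0 ≤ (b - b') * (1 / (1 - ε)) ^ N := by
          rw [div_le_iff₀ hbbpos] at hle2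
          linarith [hle2]
        have := hDgeo N le_rfl
        nlinarith
    exact absurd (hterm N hfinal) (not_le.mpr (hex (N + 1) le_rfl))
end

section
/- For a linear subspace W ⊆ ℝ^n and T ⊆ [n], define ρ_T(W) := sup over nonzero y ∈ {w|_T : w ∈ W} of (inf over w ∈ W with w|_T = y of ‖w|_{T^c}‖_2²) / ‖y‖_2², where w|_S denotes the restriction of w to coordinates in S. Then for any positive z ∈ ℝ^n and any T ⊆ [n], ρ_T(√z ∘ W) ≤ (max_{j∉T} z_j / min_{j∈T} z_j) · ρ_T(W), where √z ∘ W := {(√(z_j) w_j)_{j∈[n]} : w ∈ W}. In particular, for a frame U ∈ ℝ^{d×n} with row space W = im(U^T), one has ρ_T(U√Z) ≤ (max_{j∉T} z_j / min_{j∈T} z_j) · ρ_T(U), where ρ_T(U) := ρ_T(im(U^T)). -/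
open Matrix BigOperators

/-- The lifting condition measure of a subspace `W ⊆ ℝ^n` with respect to `T ⊆ [n]`:
`ρ_T(W) = sup` over nonzero restrictions `y = w₀|_T` (`w₀ ∈ W`) of
`(inf over w ∈ W with w|_T = y of ‖w|_{Tᶜ}‖²)/‖y‖²`. -/
noncomputable def rhoT {n : ℕ} (W : Submodule ℝ (Fin n → ℝ)) (T : Finset (Fin n)) : ℝ :=
  sSup {r : ℝ | ∃ w₀ ∈ W, (∃ j ∈ T, w₀ j ≠ 0) ∧
    r = sInf {s : ℝ | ∃ w ∈ W, (∀ j ∈ T, w j = w₀ j) ∧ s = ∑ j ∈ Tᶜ, (w j) ^ 2}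
        / (∑ j ∈ T, (w₀ j) ^ 2)}

/-- The set whose supremum defines `rhoT`. -/
def rhoSet {n : ℕ} (W : Submodule ℝ (Fin n → ℝ)) (T : Finset (Fin n)) : Set ℝ :=
  {r : ℝ | ∃ w₀ ∈ W, (∃ j ∈ T, w₀ j ≠ 0) ∧
    r = sInf {s : ℝ | ∃ w ∈ W, (∀ j ∈ T, w j = w₀ j) ∧ s = ∑ j ∈ Tᶜ, (w j) ^ 2}
        / (∑ j ∈ T, (w₀ j) ^ 2)}

lemma rhoT_eq_sSup {n : ℕ} (W : Submodule ℝ (Fin n → ℝ)) (T : Finset (Fin n)) :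
    rhoT W T = sSup (rhoSet W T) := rfl

lemma rhoSet_nonneg {n : ℕ} (W : Submodule ℝ (Fin n → ℝ)) (T : Finset (Fin n)) :
    ∀ r ∈ rhoSet W T, 0 ≤ r := by
  rintro r ⟨w₀, hw₀W, ⟨j₀, hj₀T, hj₀⟩, rfl⟩
  apply div_nonneg
  · apply Real.sInf_nonneg
    rintro s ⟨w, _, _, rfl⟩
    positivity
  · positivity

/-- Core comparison lemma: every element of the scaled `rhoSet` is bounded by the
corresponding constant times an element of the original `rhoSet`. -/
lemma rhoT_core {n : ℕ} (z : Fin n → ℝ) (hz : ∀ j, 0 < z j) (T : Finset (Fin n))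
    (hT : T.Nonempty) (hTc : Tᶜ.Nonempty) (W : Submodule ℝ (Fin n → ℝ)) :
    ∀ r' ∈ rhoSet (W.map (Matrix.diagonal fun j => Real.sqrt (z j)).mulVecLin) T,
      ∃ r ∈ rhoSet W T, r' ≤ (Tᶜ.sup' hTc z / T.inf' hT z) * r := by
  intro r' hr'
  obtain ⟨w₀', hw₀'W, ⟨j₀, hj₀T, hj₀⟩, rfl⟩ := hr'
  obtain ⟨w₀, hw₀W, rfl⟩ := hw₀'W
  have hD : ∀ (w : Fin n → ℝ) (j : Fin n),
      ((Matrix.diagonal fun j => Real.sqrt (z j)).mulVecLin w) j = Real.sqrt (z j) * w j := by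
    intro w j
    simp [Matrix.mulVecLin_apply, Matrix.mulVec_diagonal]
  have hsq' : ∀ (w : Fin n → ℝ) (j : Fin n),
      ((Matrix.diagonal fun j => Real.sqrt (z j)).mulVecLin w) j ^ 2 = z j * (w j) ^ 2 := by
    intro w j
    rw [hD, mul_pow, Real.sq_sqrt (hz j).le]
  have hj₀' : w₀ j₀ ≠ 0 := by
    intro h
    apply hj₀
    rw [hD, h, mul_zero]
  set M := Tᶜ.sup' hTc z with hMdef
  set m := T.inf' hT z with hmdef
  obtain ⟨jc, hjc⟩ := hTc
  have hMpos : 0 < M := lt_of_lt_of_le (hz jc) (Finset.le_sup' z hjc)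
  have hmpos : 0 < m := by
    rw [hmdef, Finset.lt_inf'_iff]
    exact fun b _ => hz b
  set A : Set ℝ :=
    {s : ℝ | ∃ w ∈ W, (∀ j ∈ T, w j = w₀ j) ∧ s = ∑ j ∈ Tᶜ, (w j) ^ 2} with hAdef
  set A' : Set ℝ :=
    {s : ℝ | ∃ w ∈ W.map (Matrix.diagonal fun j => Real.sqrt (z j)).mulVecLin,
      (∀ j ∈ T, w j = ((Matrix.diagonal fun j => Real.sqrt (z j)).mulVecLin w₀) j) ∧
      s = ∑ j ∈ Tᶜ, (w j) ^ 2} with hA'def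
  set Q : ℝ := ∑ j ∈ T, (w₀ j) ^ 2 with hQdef
  set Q' : ℝ := ∑ j ∈ T, (((Matrix.diagonal fun j => Real.sqrt (z j)).mulVecLin w₀) j) ^ 2
    with hQ'def
  have hQpos : 0 < Q := by
    refine lt_of_lt_of_le (sq_pos_of_ne_zero hj₀') ?_
    exact Finset.single_le_sum (fun j _ => sq_nonneg (w₀ j)) hj₀T
  have hQ'ge : m * Q ≤ Q' := by
    rw [hQ'def, hQdef, Finset.mul_sum]
    refine Finset.sum_le_sum fun j hj => ?_
    rw [hsq']
    exact mul_le_mul_of_nonneg_right (Finset.inf'_le z hj) (sq_nonneg _)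
  have hAne : A.Nonempty := ⟨∑ j ∈ Tᶜ, (w₀ j) ^ 2, w₀, hw₀W, fun j _ => rfl, rfl⟩
  have hAbdd : BddBelow A := ⟨0, by rintro s ⟨w, _, _, rfl⟩; positivity⟩
  have hA'bdd : BddBelow A' := ⟨0, by rintro s ⟨w, _, _, rfl⟩; positivity⟩
  have hInfAnn : 0 ≤ sInf A := Real.sInf_nonneg (by rintro s ⟨w, _, _, rfl⟩; positivity)
  have hkey : ∀ a ∈ A, sInf A' ≤ M * a := by
    rintro a ⟨w, hwW, hwT, rfl⟩
    have hmem : (∑ j ∈ Tᶜ, (((Matrix.diagonal fun j => Real.sqrt (z j)).mulVecLin w) j) ^ 2) ∈ A' := by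
      refine ⟨(Matrix.diagonal fun j => Real.sqrt (z j)).mulVecLin w, ⟨w, hwW, rfl⟩, ?_, rfl⟩
      intro j hj
      rw [hD, hD, hwT j hj]
    calc sInf A' ≤ ∑ j ∈ Tᶜ, (((Matrix.diagonal fun j => Real.sqrt (z j)).mulVecLin w) j) ^ 2 :=
          csInf_le hA'bdd hmem
      _ = ∑ j ∈ Tᶜ, z j * (w j) ^ 2 := by
          refine Finset.sum_congr rfl fun j _ => hsq' w j
      _ ≤ ∑ j ∈ Tᶜ, M * (w j) ^ 2 :=
          Finset.sum_le_sum fun j hj =>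
            mul_le_mul_of_nonneg_right (Finset.le_sup' z hj) (sq_nonneg _)
      _ = M * ∑ j ∈ Tᶜ, (w j) ^ 2 := (Finset.mul_sum _ _ _).symm
  have hInf : sInf A' ≤ M * sInf A := by
    have h1 : sInf A' / M ≤ sInf A := by
      refine le_csInf hAne fun a ha => ?_
      rw [div_le_iff₀ hMpos, mul_comm]
      exact hkey a ha
    calc sInf A' = sInf A' / M * M := by field_simp
      _ ≤ sInf A * M := mul_le_mul_of_nonneg_right h1 hMpos.le
      _ = M * sInf A := mul_comm _ _
  refine ⟨sInf A / Q, ⟨w₀, hw₀W, ⟨j₀, hj₀T, hj₀'⟩, rfl⟩, ?_⟩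
  have hstep : sInf A' / Q' ≤ (M * sInf A) / (m * Q) :=
    div_le_div₀ (by positivity) hInf (by positivity) hQ'ge
  calc sInf A' / Q' ≤ (M * sInf A) / (m * Q) := hstep
    _ = M / m * (sInf A / Q) := (div_mul_div_comm M m (sInf A) Q).symm

lemma map_sqrt_inv_map_sqrt {n : ℕ} (z : Fin n → ℝ) (hz : ∀ j, 0 < z j)
    (W : Submodule ℝ (Fin n → ℝ)) :
    (W.map (Matrix.diagonal fun j => Real.sqrt (z j)).mulVecLin).map
      (Matrix.diagonal fun j => Real.sqrt ((z j)⁻¹)).mulVecLin = W := by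
  rw [← Submodule.map_comp, ← Matrix.mulVecLin_mul, Matrix.diagonal_mul_diagonal]
  have : (fun j => Real.sqrt ((z j)⁻¹) * Real.sqrt (z j)) = fun _ => (1 : ℝ) := by
    funext j
    rw [Real.sqrt_inv, inv_mul_cancel₀ (Real.sqrt_ne_zero'.mpr (hz j))]
  rw [this, Matrix.diagonal_one, Matrix.mulVecLin_one, Submodule.map_id]

/-- Scaling bound for the condition measure: for any positive `z`,
`ρ_T(√z ∘ W) ≤ (max_{j∉T} z_j / min_{j∈T} z_j)·ρ_T(W)`; in particular, for a frame `U`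
with row space `im(Uᵀ)`, `ρ_T(U√Z) ≤ (max_{j∉T} z_j / min_{j∈T} z_j)·ρ_T(U)`. -/
theorem rhoT_scaling {n : ℕ} (z : Fin n → ℝ) (hz : ∀ j, 0 < z j)
    (T : Finset (Fin n)) (hT : T.Nonempty) (hTc : Tᶜ.Nonempty) :
    (∀ W : Submodule ℝ (Fin n → ℝ),
      rhoT (W.map (Matrix.diagonal fun j => Real.sqrt (z j)).mulVecLin) T
        ≤ (Tᶜ.sup' hTc z / T.inf' hT z) * rhoT W T) ∧
    (∀ (d : ℕ) (U : Matrix (Fin d) (Fin n) ℝ), U.rank = d →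
      rhoT (LinearMap.range ((U * Matrix.diagonal fun j => Real.sqrt (z j))ᵀ).mulVecLin) T
        ≤ (Tᶜ.sup' hTc z / T.inf' hT z) * rhoT (LinearMap.range (Uᵀ).mulVecLin) T) := by
  obtain ⟨jc, hjc⟩ := hTc
  obtain ⟨jt, hjt⟩ := hT
  have hMpos : 0 < Tᶜ.sup' ⟨jc, hjc⟩ z := lt_of_lt_of_le (hz jc) (Finset.le_sup' z hjc)
  have hmpos : 0 < T.inf' ⟨jt, hjt⟩ z := by
    refine (Finset.lt_inf'_iff (H := _)).mpr ?_
    exact fun b _ => hz b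
  have hc : 0 ≤ Tᶜ.sup' ⟨jc, hjc⟩ z / T.inf' ⟨jt, hjt⟩ z := le_of_lt (by positivity)
  have main : ∀ W : Submodule ℝ (Fin n → ℝ),
      rhoT (W.map (Matrix.diagonal fun j => Real.sqrt (z j)).mulVecLin) T
        ≤ (Tᶜ.sup' ⟨jc, hjc⟩ z / T.inf' ⟨jt, hjt⟩ z) * rhoT W T := by
    intro W
    rw [rhoT_eq_sSup, rhoT_eq_sSup]
    set S := rhoSet W T with hSdef
    set S' := rhoSet (W.map (Matrix.diagonal fun j => Real.sqrt (z j)).mulVecLin) T with hS'def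
    by_cases hb : BddAbove S
    · refine Real.sSup_le (fun r' hr' => ?_)
        (mul_nonneg hc (Real.sSup_nonneg (rhoSet_nonneg W T)))
      obtain ⟨r, hr, hle⟩ := rhoT_core z hz T ⟨jt, hjt⟩ ⟨jc, hjc⟩ W r' hr'
      exact hle.trans (mul_le_mul_of_nonneg_left (le_csSup hb hr) hc)
    · have hcore2 := rhoT_core (fun j => (z j)⁻¹) (fun j => inv_pos.mpr (hz j)) T
        ⟨jt, hjt⟩ ⟨jc, hjc⟩ (W.map (Matrix.diagonal fun j => Real.sqrt (z j)).mulVecLin)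
      rw [map_sqrt_inv_map_sqrt z hz W] at hcore2
      have hc2 : 0 ≤ Tᶜ.sup' ⟨jc, hjc⟩ (fun j => (z j)⁻¹) / T.inf' ⟨jt, hjt⟩ (fun j => (z j)⁻¹) := by
        have h1 : 0 < Tᶜ.sup' ⟨jc, hjc⟩ (fun j => (z j)⁻¹) :=
          lt_of_lt_of_le (inv_pos.mpr (hz jc)) (Finset.le_sup' (fun j => (z j)⁻¹) hjc)
        have h2 : 0 < T.inf' ⟨jt, hjt⟩ (fun j => (z j)⁻¹) := by
          refine (Finset.lt_inf'_iff (H := _)).mpr ?_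
          exact fun b _ => inv_pos.mpr (hz b)
        positivity
      have hb' : ¬ BddAbove S' := by
        intro hb'
        apply hb
        refine ⟨(Tᶜ.sup' ⟨jc, hjc⟩ (fun j => (z j)⁻¹) / T.inf' ⟨jt, hjt⟩ (fun j => (z j)⁻¹))
          * sSup S', fun r hr => ?_⟩
        obtain ⟨r', hr', hle⟩ := hcore2 r hr
        exact hle.trans (mul_le_mul_of_nonneg_left (le_csSup hb' hr') hc2)
      rw [Real.sSup_of_not_bddAbove hb, Real.sSup_of_not_bddAbove hb', mul_zero]
  refine ⟨fun W => ?_, fun d U _ => ?_⟩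
  · exact main W
  · have h : LinearMap.range ((U * Matrix.diagonal fun j => Real.sqrt (z j))ᵀ).mulVecLin
        = (LinearMap.range (Uᵀ).mulVecLin).map
          (Matrix.diagonal fun j => Real.sqrt (z j)).mulVecLin := by
      rw [Matrix.transpose_mul, Matrix.diagonal_transpose, Matrix.mulVecLin_mul,
        LinearMap.range_comp]
    rw [h]
    exact main (LinearMap.range (Uᵀ).mulVecLin)
end

section
/- Let U ∈ ℝ^{d×n} be a frame and define ρ(U) := max_{T⊆[n]} ρ_T(U), where ρ_T(U) := sup over nonzero y ∈ {w|_T : w ∈ im(U^T)} of (inf over w ∈ im(U^T) with w|_T = y of ‖w|_{T^c}‖_2²)/‖y‖_2². Then for every positive z ∈ ℝ^n and every 0 < δ ≤ 1, there exists a positive ẑ ∈ ℝ^n such that ‖lev^U(z) − lev^U(ẑ)‖_1 ≤ 2nd·δ and ẑ_max / ẑ_min ≤ (max{ρ(U), 1} / δ)^n, where ẑ_max and ẑ_min are the largest and smallest entries of ẑ. -/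
open Matrix BigOperators
open scoped RealInnerProductSpace

set_option synthInstance.maxHeartbeats 1000000
set_option maxHeartbeats 1000000

/-- The condition measure of a frame: `ρ(U) = max_{T⊆[n]} ρ_T(im(Uᵀ))`. -/
noncomputable def rho {d n : ℕ} (U : Matrix (Fin d) (Fin n) ℝ) : ℝ :=
  ⨆ T : Finset (Fin n), rhoT (LinearMap.range (Uᵀ).mulVecLin) T

noncomputable section RegAux

variable {d n : ℕ}

/-- the Gram-type matrix -/
def Mz (U : Matrix (Fin d) (Fin n) ℝ) (z : Fin n → ℝ) : Matrix (Fin d) (Fin d) ℝ :=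
  U * Matrix.diagonal z * Uᵀ

lemma bilin (U : Matrix (Fin d) (Fin n) ℝ) (z : Fin n → ℝ) (x y : Fin d → ℝ) :
    x ⬝ᵥ (Mz U z) *ᵥ y = ∑ j, z j * ((Uᵀ *ᵥ x) j * (Uᵀ *ᵥ y) j) := by
  unfold Mz
  rw [← Matrix.mulVec_mulVec, ← Matrix.mulVec_mulVec, Matrix.dotProduct_mulVec,
    ← Matrix.mulVec_transpose]
  simp only [dotProduct, Matrix.mulVec_diagonal]
  exact Finset.sum_congr rfl (fun j _ => by ring)

lemma rowspace_inj {U : Matrix (Fin d) (Fin n) ℝ} (hU : U.rank = d) :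
    Function.Injective ((Uᵀ).mulVecLin) := by
  rw [← LinearMap.ker_eq_bot]
  have h1 : Module.finrank ℝ ↥(LinearMap.range (Uᵀ).mulVecLin) = d := by
    have : (Uᵀ).rank = d := by rw [Matrix.rank_transpose, hU]
    exact this
  have h2 := LinearMap.finrank_range_add_finrank_ker ((Uᵀ).mulVecLin)
  rw [h1, Module.finrank_fin_fun] at h2
  have h3 : Module.finrank ℝ ↥(LinearMap.ker (Uᵀ).mulVecLin) = 0 := by omega
  exact Submodule.finrank_eq_zero.mp h3

lemma Mz_posdef {U : Matrix (Fin d) (Fin n) ℝ} (hU : U.rank = d)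
    {z : Fin n → ℝ} (hz : ∀ j, 0 < z j) : (Mz U z).PosDef := by
  rw [Matrix.posDef_iff_dotProduct_mulVec]
  constructor
  · show (Mz U z)ᴴ = Mz U z
    unfold Mz
    rw [Matrix.conjTranspose_eq_transpose_of_trivial, Matrix.transpose_mul,
      Matrix.transpose_mul, Matrix.transpose_transpose, Matrix.diagonal_transpose, Matrix.mul_assoc]
  · intro x hx
    have hs : star x = x := by funext i; simp
    rw [hs, bilin]
    have hy : Uᵀ *ᵥ x ≠ 0 := by
      intro h
      apply hx
      have := rowspace_inj hU (a₁ := x) (a₂ := 0)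
      simp only [Matrix.mulVecLin_apply, Matrix.mulVec_zero] at this
      exact this h
    obtain ⟨j0, hj0⟩ : ∃ j, (Uᵀ *ᵥ x) j ≠ 0 := by
      by_contra h; push_neg at h; exact hy (funext h)
    apply Finset.sum_pos' (fun j _ => mul_nonneg (le_of_lt (hz j)) (mul_self_nonneg _))
    exact ⟨j0, Finset.mem_univ _, mul_pos (hz j0) (mul_self_pos.mpr hj0)⟩

lemma Mz_det_unit {U : Matrix (Fin d) (Fin n) ℝ} (hU : U.rank = d)
    {z : Fin n → ℝ} (hz : ∀ j, 0 < z j) : IsUnit (Mz U z).det :=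
  isUnit_iff_ne_zero.mpr (ne_of_gt (Mz_posdef hU hz).det_pos)

lemma Mz_mul_inv {U : Matrix (Fin d) (Fin n) ℝ} (hU : U.rank = d)
    {z : Fin n → ℝ} (hz : ∀ j, 0 < z j) : (Mz U z) * (Mz U z)⁻¹ = 1 :=
  Matrix.mul_nonsing_inv _ (Mz_det_unit hU hz)

lemma Mz_inv_mul {U : Matrix (Fin d) (Fin n) ℝ} (hU : U.rank = d)
    {z : Fin n → ℝ} (hz : ∀ j, 0 < z j) : (Mz U z)⁻¹ * (Mz U z) = 1 :=
  Matrix.nonsing_inv_mul _ (Mz_det_unit hU hz)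





abbrev En (n : ℕ) := EuclideanSpace ℝ (Fin n)

def toE {n : ℕ} : (Fin n → ℝ) ≃ₗ[ℝ] En n := (WithLp.linearEquiv 2 ℝ (Fin n → ℝ)).symm

@[simp] lemma toE_apply (x : Fin n → ℝ) (j : Fin n) : (toE x : En n) j = x j := rfl

def scaleL (s : Fin n → ℝ) : (Fin n → ℝ) →ₗ[ℝ] (Fin n → ℝ) where
  toFun x := fun j => s j * x j
  map_add' x y := by funext j; simp [mul_add]
  map_smul' c x := by funext j; simp [smul_eq_mul]; ring

@[simp] lemma scaleL_apply (s x : Fin n → ℝ) (j : Fin n) : scaleL s x j = s j * x j := rfl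

def sqw (z : Fin n → ℝ) : Fin n → ℝ := fun j => Real.sqrt (z j)

lemma inner_En (x y : En n) : ⟪x, y⟫ = ∑ j, x j * y j := by
  simp [PiLp.inner_apply, RCLike.inner_apply]
  exact Finset.sum_congr rfl fun _ _ => mul_comm _ _

lemma inner_single (j : Fin n) (v : En n) :
    ⟪EuclideanSpace.single j (1:ℝ), v⟫ = v j := by
  rw [EuclideanSpace.inner_single_left]; simp

lemma norm_sq_En (x : En n) : ‖x‖ ^ 2 = ∑ j, (x j) ^ 2 := by
  rw [← real_inner_self_eq_norm_sq, inner_En]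
  exact Finset.sum_congr rfl fun j _ => (pow_two (x j)).symm



def Wrow (U : Matrix (Fin d) (Fin n) ℝ) : Submodule ℝ (Fin n → ℝ) :=
  LinearMap.range (Uᵀ).mulVecLin

def Vs (U : Matrix (Fin d) (Fin n) ℝ) (z : Fin n → ℝ) : Submodule ℝ (En n) :=
  (Wrow U).map (toE.toLinearMap ∘ₗ scaleL (sqw z))

lemma mem_Vs {U : Matrix (Fin d) (Fin n) ℝ} {z : Fin n → ℝ} {v : En n} :
    v ∈ Vs U z ↔ ∃ w ∈ Wrow U, v = toE (scaleL (sqw z) w) := by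
  constructor
  · rintro ⟨w, hw, rfl⟩; exact ⟨w, hw, rfl⟩
  · rintro ⟨w, hw, rfl⟩; exact ⟨w, hw, rfl⟩

lemma lev_eq_proj (U : Matrix (Fin d) (Fin n) ℝ) (hU : U.rank = d)
    (z : Fin n → ℝ) (hz : ∀ j, 0 < z j) (j : Fin n) :
    lev U z j
      = ‖(Submodule.orthogonalProjectionOnto (Vs U z) (EuclideanSpace.single j (1:ℝ)) : En n)‖ ^ 2 := by
  have hM := Mz_mul_inv hU hz
  set M := Mz U z with hMdef
  set u : Fin d → ℝ := fun i => U i j with hu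
  set c : Fin d → ℝ := Real.sqrt (z j) • (M⁻¹ *ᵥ u) with hc
  set vstar : En n := toE (scaleL (sqw z) (Uᵀ *ᵥ c)) with hv
  have hvmem : vstar ∈ Vs U z := mem_Vs.mpr ⟨Uᵀ *ᵥ c, ⟨c, rfl⟩, rfl⟩
  have hMc : M *ᵥ c = Real.sqrt (z j) • u := by
    rw [hc, Matrix.mulVec_smul, Matrix.mulVec_mulVec, hM, Matrix.one_mulVec]
  have hdotc : ∀ a : Fin d → ℝ, ∑ k, z k * ((Uᵀ *ᵥ c) k * (Uᵀ *ᵥ a) k)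
      = Real.sqrt (z j) * (Uᵀ *ᵥ a) j := by
    intro a
    have h1 : a ⬝ᵥ M *ᵥ c = ∑ k, z k * ((Uᵀ *ᵥ a) k * (Uᵀ *ᵥ c) k) := bilin U z a c
    rw [hMc] at h1
    have h2 : a ⬝ᵥ (Real.sqrt (z j) • u) = Real.sqrt (z j) * (Uᵀ *ᵥ a) j := by
      rw [dotProduct_smul]
      congr 1
      simp [dotProduct, Matrix.mulVec, hu, mul_comm]
    rw [h2] at h1
    exact (Finset.sum_congr rfl fun k _ => by ring).trans h1.symm
  have horth : ∀ w ∈ Vs U z, ⟪EuclideanSpace.single j (1:ℝ) - vstar, w⟫ = 0 := by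
    rintro w hw
    obtain ⟨w', ⟨a, rfl⟩, rfl⟩ := mem_Vs.mp hw
    rw [inner_sub_left, inner_single, inner_En]
    have : ∀ k, (vstar k) * (toE (scaleL (sqw z) ((Uᵀ).mulVecLin a)) k)
        = z k * ((Uᵀ *ᵥ c) k * (Uᵀ *ᵥ a) k) := by
      intro k
      simp only [hv, toE_apply, scaleL_apply, Matrix.mulVecLin_apply, sqw]
      rw [show Real.sqrt (z k) * (Uᵀ *ᵥ c) k * (Real.sqrt (z k) * (Uᵀ *ᵥ a) k)
          = (Real.sqrt (z k) * Real.sqrt (z k)) * ((Uᵀ *ᵥ c) k * (Uᵀ *ᵥ a) k) by ring,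
        Real.mul_self_sqrt (le_of_lt (hz k))]
    rw [Finset.sum_congr rfl fun k _ => this k, hdotc a]
    simp only [toE_apply, scaleL_apply, Matrix.mulVecLin_apply, sqw]
    ring
  rw [← Submodule.starProjection_apply, Submodule.eq_starProjection_of_mem_of_inner_eq_zero hvmem horth]
  have hns : ‖vstar‖ ^ 2 = ∑ k, z k * ((Uᵀ *ᵥ c) k * (Uᵀ *ᵥ c) k) := by
    rw [norm_sq_En]
    apply Finset.sum_congr rfl
    intro k _
    simp only [hv, toE_apply, scaleL_apply, sqw]
    rw [show (Real.sqrt (z k) * (Uᵀ *ᵥ c) k) ^ 2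
        = (Real.sqrt (z k) * Real.sqrt (z k)) * ((Uᵀ *ᵥ c) k * (Uᵀ *ᵥ c) k) by ring,
      Real.mul_self_sqrt (le_of_lt (hz k))]
  rw [hns, hdotc c]
  have : (Uᵀ *ᵥ c) j = Real.sqrt (z j) * (u ⬝ᵥ (M⁻¹ *ᵥ u)) := by
    rw [hc]
    rw [Matrix.mulVec_smul]
    simp only [Pi.smul_apply, smul_eq_mul]
    congr 1
  rw [this, lev]
  rw [show Real.sqrt (z j) * (Real.sqrt (z j) * (u ⬝ᵥ M⁻¹ *ᵥ u))
      = (Real.sqrt (z j) * Real.sqrt (z j)) * (u ⬝ᵥ M⁻¹ *ᵥ u) by ring,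
    Real.mul_self_sqrt (le_of_lt (hz j))]
  rfl

lemma sum_lev (U : Matrix (Fin d) (Fin n) ℝ) (hU : U.rank = d)
    (z : Fin n → ℝ) (hz : ∀ j, 0 < z j) : ∑ j, lev U z j = d := by
  have key : ∑ j, lev U z j = Matrix.trace ((Mz U z)⁻¹ * Mz U z) := by
    unfold lev Matrix.trace
    simp only [Matrix.diag, Matrix.mul_apply, dotProduct, Matrix.mulVec,
      Mz, Matrix.mul_diagonal, Finset.mul_sum, Finset.sum_mul]
    rw [Finset.sum_comm]
    apply Finset.sum_congr rfl
    intro i _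
    rw [Finset.sum_comm]
    apply Finset.sum_congr rfl
    intro a _
    apply Finset.sum_congr rfl
    intro j _
    simp only [Matrix.diagonal_apply, mul_ite, ite_mul, mul_zero, zero_mul,
      Finset.sum_ite_eq, Finset.sum_ite_eq', Finset.mem_univ, if_true, Matrix.transpose_apply]
    ring
  rw [key, Mz_inv_mul hU hz, Matrix.trace_one]
  simp

def scE (s : Fin n → ℝ) : En n →ₗ[ℝ] En n :=
  toE.toLinearMap ∘ₗ scaleL s ∘ₗ toE.symm.toLinearMap

@[simp] lemma scE_apply (s : Fin n → ℝ) (v : En n) (k : Fin n) :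
    scE s v k = s k * v k := rfl

lemma proj_inner {V : Submodule ℝ (En n)} (x v : En n) (hv : v ∈ V) :
    ⟪(Submodule.orthogonalProjectionOnto V x : En n), v⟫ = ⟪x, v⟫ := by
  have h : ⟪x - (Submodule.orthogonalProjectionOnto V x : En n), v⟫ = 0 :=
    Submodule.starProjection_inner_eq_zero x v hv
  rw [inner_sub_left] at h
  linarith

lemma le_of_sq_le_sq' {a b : ℝ} (hb : 0 ≤ b) (h : a ^ 2 ≤ b ^ 2) : a ≤ b := by
  nlinarith [abs_nonneg a, sq_abs a, le_abs_self a]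

lemma norm_scE_ge (s : Fin n → ℝ) (hs1 : ∀ k, 1 ≤ s k) (v : En n) : ‖v‖ ≤ ‖scE s v‖ := by
  apply le_of_sq_le_sq' (norm_nonneg _)
  rw [norm_sq_En, norm_sq_En]
  apply Finset.sum_le_sum
  intro k _
  rw [scE_apply, mul_pow]
  have h1 : (1:ℝ) ≤ s k ^ 2 := by nlinarith [hs1 k]
  nlinarith [sq_nonneg (v k)]

lemma norm_scE_le (s : Fin n → ℝ) (hs1 : ∀ k, 0 ≤ s k) (g : ℝ) (hg : 0 ≤ g)
    (hsg : ∀ k, s k ≤ g) (v : En n) : ‖scE s v‖ ≤ g * ‖v‖ := by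
  apply le_of_sq_le_sq' (mul_nonneg hg (norm_nonneg _))
  rw [mul_pow, norm_sq_En, norm_sq_En, Finset.mul_sum]
  apply Finset.sum_le_sum
  intro k _
  rw [scE_apply, mul_pow]
  have h1 : s k ^ 2 ≤ g ^ 2 := by nlinarith [hs1 k, hsg k]
  nlinarith [sq_nonneg (v k)]

lemma proj_mono_T {V V' : Submodule ℝ (En n)} (s : Fin n → ℝ) (hs1 : ∀ k, 1 ≤ s k)
    (hmap' : ∀ v' ∈ V', ∃ v ∈ V, v' = scE s v) (j : Fin n) (hj : s j = 1) :
    ‖(Submodule.orthogonalProjectionOnto V' (EuclideanSpace.single j (1:ℝ)) : En n)‖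
      ≤ ‖(Submodule.orthogonalProjectionOnto V (EuclideanSpace.single j (1:ℝ)) : En n)‖ := by
  set e : En n := EuclideanSpace.single j (1:ℝ) with he
  set p : En n := (Submodule.orthogonalProjectionOnto V e : En n) with hp
  set p' : En n := (Submodule.orthogonalProjectionOnto V' e : En n) with hp'
  obtain ⟨v, hv, hveq⟩ := hmap' p' (Submodule.coe_mem _)
  have h1 : ‖p'‖ ^ 2 = p' j := by
    rw [← real_inner_self_eq_norm_sq, hp', proj_inner e _ (Submodule.coe_mem _), inner_single]
  have h2 : p' j = v j := by rw [hveq, scE_apply, hj, one_mul]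
  have h3 : (v j : ℝ) = ⟪p, v⟫ := by rw [hp, proj_inner e v hv, inner_single]
  have h4 : ⟪p, v⟫ ≤ ‖p‖ * ‖v‖ := real_inner_le_norm p v
  have h5 : ‖v‖ ≤ ‖p'‖ := by rw [hveq]; exact norm_scE_ge s hs1 v
  by_cases hz : ‖p'‖ = 0
  · rw [hz]; exact norm_nonneg _
  · have hpos : 0 < ‖p'‖ := lt_of_le_of_ne (norm_nonneg _) (Ne.symm hz)
    nlinarith [norm_nonneg p]

lemma proj_mono_B {V V' : Submodule ℝ (En n)} (s : Fin n → ℝ) (hs1 : ∀ k, 1 ≤ s k)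
    (g : ℝ) (hsg : ∀ k, s k ≤ g)
    (hmap : ∀ v ∈ V, scE s v ∈ V') (j : Fin n) (hj : s j = g) :
    ‖(Submodule.orthogonalProjectionOnto V (EuclideanSpace.single j (1:ℝ)) : En n)‖
      ≤ ‖(Submodule.orthogonalProjectionOnto V' (EuclideanSpace.single j (1:ℝ)) : En n)‖ := by
  have hg1 : 1 ≤ g := le_trans (hs1 j) (hsg j)
  set e : En n := EuclideanSpace.single j (1:ℝ) with he
  set p : En n := (Submodule.orthogonalProjectionOnto V e : En n) with hp
  set p' : En n := (Submodule.orthogonalProjectionOnto V' e : En n) with hp'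
  have hSp : scE s p ∈ V' := hmap p (Submodule.coe_mem _)
  have h1 : ‖p‖ ^ 2 = p j := by
    rw [← real_inner_self_eq_norm_sq, hp, proj_inner e _ (Submodule.coe_mem _), inner_single]
  have h2 : ⟪p', scE s p⟫ = g * p j := by
    rw [hp', proj_inner e _ hSp, inner_single, scE_apply, hj]
  have h4 : ⟪p', scE s p⟫ ≤ ‖p'‖ * ‖scE s p‖ := real_inner_le_norm _ _
  have h5 : ‖scE s p‖ ≤ g * ‖p‖ :=
    norm_scE_le s (fun k => le_trans zero_le_one (hs1 k)) g (by linarith) hsg p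
  by_cases hz : ‖p‖ = 0
  · rw [hz]; exact norm_nonneg _
  · have hpos : 0 < ‖p‖ := lt_of_le_of_ne (norm_nonneg _) (Ne.symm hz)
    have k1 : g * ‖p‖ ^ 2 ≤ ‖p'‖ * (g * ‖p‖) := by
      calc g * ‖p‖ ^ 2 = g * p j := by rw [h1]
        _ = ⟪p', scE s p⟫ := h2.symm
        _ ≤ ‖p'‖ * ‖scE s p‖ := h4
        _ ≤ ‖p'‖ * (g * ‖p‖) := mul_le_mul_of_nonneg_left h5 (norm_nonneg _)
    have hgp : 0 < g * ‖p‖ := mul_pos (lt_of_lt_of_le zero_lt_one hg1) hpos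
    exact le_of_mul_le_mul_left (by nlinarith [k1]) hgp

lemma lev_mono_s16 (U : Matrix (Fin d) (Fin n) ℝ) (hU : U.rank = d)
    (ζ : Fin n → ℝ) (hζ : ∀ j, 0 < ζ j) (T : Finset (Fin n)) (γ : ℝ) (hγ : 1 ≤ γ) :
    (∀ j ∈ T, lev U (fun k => if k ∈ T then ζ k else γ * ζ k) j ≤ lev U ζ j)
    ∧ (∀ j ∉ T, lev U ζ j ≤ lev U (fun k => if k ∈ T then ζ k else γ * ζ k) j) := by
  have hγ0 : (0:ℝ) < γ := lt_of_lt_of_le zero_lt_one hγ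
  set ζ' := fun k => if k ∈ T then ζ k else γ * ζ k with hζ'def
  have hζ' : ∀ k, 0 < ζ' k := by
    intro k
    by_cases h : k ∈ T <;> simp only [hζ'def, h, if_true, if_false]
    · exact hζ k
    · exact mul_pos hγ0 (hζ k)
  set s := fun k => if k ∈ T then (1:ℝ) else Real.sqrt γ with hsdef
  have hsqrt1 : (1:ℝ) ≤ Real.sqrt γ := Real.one_le_sqrt.mpr hγ
  have hs1 : ∀ k, 1 ≤ s k := by
    intro k; by_cases h : k ∈ T <;> simp only [hsdef, h, if_true, if_false, le_refl]
    exact hsqrt1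
  have hsg : ∀ k, s k ≤ Real.sqrt γ := by
    intro k; by_cases h : k ∈ T <;> simp only [hsdef, h, if_true, if_false, le_refl]
    exact hsqrt1
  have hsq : ∀ w : Fin n → ℝ, scE s (toE (scaleL (sqw ζ) w)) = toE (scaleL (sqw ζ') w) := by
    intro w
    ext k
    simp only [scE_apply, toE_apply, scaleL_apply, sqw, hζ'def, hsdef]
    by_cases h : k ∈ T <;> simp only [h, if_true, if_false, one_mul]
    rw [Real.sqrt_mul (le_of_lt hγ0), mul_assoc]
  have hmap : ∀ v ∈ Vs U ζ, scE s v ∈ Vs U ζ' := by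
    rintro v hv
    obtain ⟨w, hw, rfl⟩ := mem_Vs.mp hv
    exact mem_Vs.mpr ⟨w, hw, (hsq w).symm ▸ rfl⟩
  have hmap' : ∀ v' ∈ Vs U ζ', ∃ v ∈ Vs U ζ, v' = scE s v := by
    rintro v' hv'
    obtain ⟨w, hw, rfl⟩ := mem_Vs.mp hv'
    exact ⟨toE (scaleL (sqw ζ) w), mem_Vs.mpr ⟨w, hw, rfl⟩, (hsq w).symm⟩
  constructor
  · intro j hj
    rw [lev_eq_proj U hU ζ hζ j, lev_eq_proj U hU ζ' hζ' j]
    apply pow_le_pow_left₀ (norm_nonneg _)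
    exact proj_mono_T s hs1 hmap' j (by simp [hsdef, hj])
  · intro j hj
    rw [lev_eq_proj U hU ζ hζ j, lev_eq_proj U hU ζ' hζ' j]
    apply pow_le_pow_left₀ (norm_nonneg _)
    exact proj_mono_B s hs1 (Real.sqrt γ) hsg hmap j (by simp [hsdef, hj])

def K0 (T : Finset (Fin n)) : Submodule ℝ (Fin n → ℝ) :=
  ⨅ j ∈ T, LinearMap.ker (LinearMap.proj j : (Fin n → ℝ) →ₗ[ℝ] ℝ)

lemma mem_K0 {T : Finset (Fin n)} {w : Fin n → ℝ} : w ∈ K0 T ↔ ∀ j ∈ T, w j = 0 := by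
  simp [K0, Submodule.mem_iInf, LinearMap.mem_ker, LinearMap.proj]

def W0 (U : Matrix (Fin d) (Fin n) ℝ) (T : Finset (Fin n)) : Submodule ℝ (Fin n → ℝ) :=
  Wrow U ⊓ K0 T

/-- the defining set of `rhoT` -/
def STset (W : Submodule ℝ (Fin n → ℝ)) (T : Finset (Fin n)) : Set ℝ :=
  {r : ℝ | ∃ w₀ ∈ W, (∃ j ∈ T, w₀ j ≠ 0) ∧
    r = sInf {s : ℝ | ∃ w ∈ W, (∀ j ∈ T, w j = w₀ j) ∧ s = ∑ j ∈ Tᶜ, (w j) ^ 2}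
        / (∑ j ∈ T, (w₀ j) ^ 2)}

lemma rhoT_eq (W : Submodule ℝ (Fin n → ℝ)) (T : Finset (Fin n)) :
    rhoT W T = sSup (STset W T) := rfl

lemma costset_nonneg {W : Submodule ℝ (Fin n → ℝ)} {T : Finset (Fin n)} {w₀ : Fin n → ℝ}
    {s : ℝ} (hs : s ∈ {s : ℝ | ∃ w ∈ W, (∀ j ∈ T, w j = w₀ j) ∧ s = ∑ j ∈ Tᶜ, (w j) ^ 2}) :
    0 ≤ s := by
  obtain ⟨w, -, -, rfl⟩ := hs
  positivity

lemma denom_pos {T : Finset (Fin n)} {w₀ : Fin n → ℝ} (h : ∃ j ∈ T, w₀ j ≠ 0) :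
    0 < ∑ j ∈ T, (w₀ j) ^ 2 := by
  obtain ⟨j₀, hj₀, hne⟩ := h
  apply Finset.sum_pos' (fun j _ => sq_nonneg _) ⟨j₀, hj₀, by positivity⟩

lemma rhoT_nonneg (W : Submodule ℝ (Fin n → ℝ)) (T : Finset (Fin n)) : 0 ≤ rhoT W T := by
  rw [rhoT_eq]
  apply Real.sSup_nonneg
  rintro r ⟨w₀, hw₀, hne, rfl⟩
  exact div_nonneg (Real.sInf_nonneg fun s hs => costset_nonneg hs) (le_of_lt (denom_pos hne))

lemma bddAbove_ST (U : Matrix (Fin d) (Fin n) ℝ) (T : Finset (Fin n)) :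
    BddAbove (STset (Wrow U) T) := by
  classical
  -- the coordinate-restriction map
  set L : ↥(Wrow U) →ₗ[ℝ] (Fin n → ℝ) :=
    { toFun := fun x => fun j => if j ∈ T then (x : Fin n → ℝ) j else 0
      map_add' := by intro x y; funext j; by_cases h : j ∈ T <;> simp [h]
      map_smul' := by intro c x; funext j; by_cases h : j ∈ T <;> simp [h] } with hL
  obtain ⟨Q, hQ⟩ := Submodule.exists_isCompl (LinearMap.ker L)
  have hker : LinearMap.ker (L ∘ₗ Q.subtype) = ⊥ := by
    rw [Submodule.eq_bot_iff]
    rintro x hx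
    rw [LinearMap.mem_ker, LinearMap.comp_apply] at hx
    have hx1 : Q.subtype x ∈ LinearMap.ker L ⊓ Q := ⟨LinearMap.mem_ker.mpr hx, x.2⟩
    rw [hQ.inf_eq_bot] at hx1
    exact Subtype.ext hx1
  obtain ⟨φ, hφ⟩ :=
    @LinearMap.exists_leftInverse_of_injective ℝ ↥Q (Fin n → ℝ) _ _ _ _ _
      (L ∘ₗ Q.subtype) hker
  set ψ : (Fin n → ℝ) →ₗ[ℝ] (Fin n → ℝ) :=
    (Wrow U).subtype ∘ₗ Q.subtype ∘ₗ φ with hψ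
  set C : ℝ := ∑ j ∈ Tᶜ, ∑ k ∈ T, (ψ (Pi.single k 1) j) ^ 2 with hC
  refine ⟨C, ?_⟩
  rintro r ⟨w₀, hw₀, hne, rfl⟩
  have hq : 0 < ∑ j ∈ T, (w₀ j) ^ 2 := denom_pos hne
  -- decompose
  obtain ⟨u, v, hu, hv, huv⟩ :=
    Submodule.codisjoint_iff_exists_add_eq.mp hQ.codisjoint ⟨w₀, hw₀⟩
  have hvT : ∀ j ∈ T, (v : Fin n → ℝ) j = w₀ j := by
    intro j hj
    have hu0 : ∀ j ∈ T, (u : Fin n → ℝ) j = 0 := by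
      intro j hj
      have := LinearMap.mem_ker.mp hu
      have := congrFun this j
      simpa [hL, hj] using this
    have := congrArg (fun x : ↥(Wrow U) => (x : Fin n → ℝ) j) huv
    simp at this
    rw [hu0 j hj] at this
    linarith [this]
  -- v is recovered by ψ from its T-coordinates
  have hvrec : ((v : ↥(Wrow U)) : Fin n → ℝ) = ψ (L v) := by
    have h1 := LinearMap.congr_fun hφ ⟨v, hv⟩
    simp only [LinearMap.coe_comp, Function.comp_apply, LinearMap.id_apply] at h1
    have h2 : L v = (L ∘ₗ Q.subtype) ⟨v, hv⟩ := rfl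
    rw [hψ]
    simp only [LinearMap.coe_comp, Function.comp_apply]
    rw [h2]
    simp only [LinearMap.coe_comp, Function.comp_apply]
    rw [h1]
    rfl
  have hLv : L v = ∑ k ∈ T, Pi.single k (w₀ k) := by
    funext j
    rw [Finset.sum_apply, Finset.sum_pi_single]
    by_cases h : j ∈ T <;> simp [hL, h]
    exact hvT j h
  have hsinf_le : sInf {s : ℝ | ∃ w ∈ Wrow U, (∀ j ∈ T, w j = w₀ j) ∧ s = ∑ j ∈ Tᶜ, (w j) ^ 2}
      ≤ ∑ j ∈ Tᶜ, ((v : Fin n → ℝ) j) ^ 2 := by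
    apply csInf_le ⟨0, fun s hs => costset_nonneg hs⟩
    exact ⟨(v : Fin n → ℝ), v.2, hvT, rfl⟩
  have hcost : ∑ j ∈ Tᶜ, ((v : Fin n → ℝ) j) ^ 2 ≤ (∑ k ∈ T, (w₀ k) ^ 2) * C := by
    have hvj : ∀ j, (v : Fin n → ℝ) j = ∑ k ∈ T, w₀ k * ψ (Pi.single k 1) j := by
      intro j
      rw [hvrec, hLv]
      have : ψ (∑ k ∈ T, Pi.single k (w₀ k)) = ∑ k ∈ T, w₀ k • ψ (Pi.single k 1) := by
        rw [map_sum]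
        apply Finset.sum_congr rfl
        intro k _
        rw [show (Pi.single k (w₀ k) : Fin n → ℝ) = w₀ k • (Pi.single k 1 : Fin n → ℝ) by
          funext j'; by_cases h : j' = k <;> simp [Pi.single_apply, h], _root_.map_smul]
      rw [this, Finset.sum_apply]
      simp
    calc ∑ j ∈ Tᶜ, ((v : Fin n → ℝ) j) ^ 2
        = ∑ j ∈ Tᶜ, (∑ k ∈ T, w₀ k * ψ (Pi.single k 1) j) ^ 2 := by
          exact Finset.sum_congr rfl fun j _ => by rw [hvj j]
      _ ≤ ∑ j ∈ Tᶜ, (∑ k ∈ T, (w₀ k) ^ 2) * (∑ k ∈ T, (ψ (Pi.single k 1) j) ^ 2) := by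
          apply Finset.sum_le_sum
          intro j _
          exact Finset.sum_mul_sq_le_sq_mul_sq T _ _
      _ = (∑ k ∈ T, (w₀ k) ^ 2) * C := by rw [hC, Finset.mul_sum]
  rw [div_le_iff₀ hq]
  calc sInf _ ≤ ∑ j ∈ Tᶜ, ((v : Fin n → ℝ) j) ^ 2 := hsinf_le
    _ ≤ (∑ k ∈ T, (w₀ k) ^ 2) * C := hcost
    _ = C * ∑ j ∈ T, (w₀ j) ^ 2 := mul_comm _ _

lemma rhoT_le_rho (U : Matrix (Fin d) (Fin n) ℝ) (T : Finset (Fin n)) :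
    rhoT (Wrow U) T ≤ rho U := by
  have : rho U = ⨆ T' : Finset (Fin n), rhoT (Wrow U) T' := rfl
  rw [this]
  exact le_ciSup (Set.Finite.bddAbove (Set.finite_range _)) T

lemma unit_vec_bound (U : Matrix (Fin d) (Fin n) ℝ) (T : Finset (Fin n))
    (ζ : Fin n → ℝ) (hζ : ∀ j, 0 < ζ j) (δ : ℝ) (hδ : 0 ≤ δ)
    (H : ∀ j ∈ Tᶜ, ∀ k ∈ T, rhoT (Wrow U) T * ζ j ≤ δ * ζ k)
    (w : Fin n → ℝ) (hw : w ∈ Wrow U)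
    (horth : ∀ g ∈ W0 U T, ∑ j, ζ j * (w j * g j) = 0)
    (hunit : ∑ j, ζ j * (w j) ^ 2 = 1) :
    ∑ j ∈ Tᶜ, ζ j * (w j) ^ 2 ≤ δ := by
  classical
  by_cases hBempty : Tᶜ = (∅ : Finset (Fin n))
  · rw [hBempty, Finset.sum_empty]; exact hδ
  -- w does not vanish on T
  have hTne : ∃ j ∈ T, w j ≠ 0 := by
    by_contra hcon
    push_neg at hcon
    have hwW0 : w ∈ W0 U T := ⟨hw, mem_K0.mpr hcon⟩
    have := horth w hwW0
    rw [show (∑ j, ζ j * (w j * w j)) = ∑ j, ζ j * (w j) ^ 2 from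
      Finset.sum_congr rfl fun j _ => by ring] at this
    rw [hunit] at this
    norm_num at this
  have hTsub : T.Nonempty := by
    obtain ⟨j₀, hj₀, -⟩ := hTne; exact ⟨j₀, hj₀⟩
  obtain ⟨kmin, hkmin, hkminle⟩ := Finset.exists_min_image T ζ hTsub
  obtain ⟨jmax, hjmax, hjmaxge⟩ := Finset.exists_max_image Tᶜ ζ
    (Finset.nonempty_iff_ne_empty.mpr hBempty)
  set q : ℝ := ∑ j ∈ T, (w j) ^ 2 with hqdef
  have hq : 0 < q := denom_pos hTne
  -- ζ kmin * q ≤ 1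
  have hk1 : ζ kmin * q ≤ 1 := by
    rw [hqdef, Finset.mul_sum]
    calc ∑ j ∈ T, ζ kmin * (w j) ^ 2
        ≤ ∑ j ∈ T, ζ j * (w j) ^ 2 := by
          apply Finset.sum_le_sum
          intro j hj
          exact mul_le_mul_of_nonneg_right (hkminle j hj) (sq_nonneg _)
      _ ≤ ∑ j, ζ j * (w j) ^ 2 := by
          apply Finset.sum_le_sum_of_subset_of_nonneg (Finset.subset_univ T)
          intro j _ _
          exact mul_nonneg (le_of_lt (hζ j)) (sq_nonneg _)
      _ = 1 := hunit
  set cs : Set ℝ :=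
    {s : ℝ | ∃ v ∈ Wrow U, (∀ j ∈ T, v j = w j) ∧ s = ∑ j ∈ Tᶜ, (v j) ^ 2} with hcs
  have hcsne : cs.Nonempty := ⟨∑ j ∈ Tᶜ, (w j) ^ 2, w, hw, fun _ _ => rfl, rfl⟩
  -- sInf cs ≤ rhoT * q
  have hsinf : sInf cs ≤ rhoT (Wrow U) T * q := by
    have hmem : sInf cs / q ∈ STset (Wrow U) T := ⟨w, hw, hTne, rfl⟩
    have := le_csSup (bddAbove_ST U T) hmem
    rw [← rhoT_eq] at this
    calc sInf cs = (sInf cs / q) * q := by field_simp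
      _ ≤ rhoT (Wrow U) T * q := mul_le_mul_of_nonneg_right this (le_of_lt hq)
  set A : ℝ := ∑ j ∈ Tᶜ, ζ j * (w j) ^ 2 with hA
  set α : ℝ := ζ jmax with hα
  have hα0 : 0 < α := hζ jmax
  -- minimality: A ≤ α * s for all s ∈ cs
  have hmin : ∀ s ∈ cs, A ≤ α * s := by
    rintro s ⟨v, hv, hvT, rfl⟩
    set g : Fin n → ℝ := v - w with hg
    have hgW0 : g ∈ W0 U T := by
      refine ⟨Submodule.sub_mem _ hv hw, mem_K0.mpr ?_⟩
      intro j hj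
      simp [hg, hvT j hj]
    have horthg := horth g hgW0
    -- ∑_{Tᶜ} ζ w g = 0  since g vanishes on T
    have hsplit : ∑ j ∈ Tᶜ, ζ j * (w j * g j) = 0 := by
      rw [← horthg, ← Finset.sum_add_sum_compl T (fun j => ζ j * (w j * g j))]
      have : ∑ j ∈ T, ζ j * (w j * g j) = 0 := by
        apply Finset.sum_eq_zero
        intro j hj
        have : g j = 0 := (mem_K0.mp hgW0.2) j hj
        rw [this]; ring
      rw [this, zero_add]
    have hexp : ∑ j ∈ Tᶜ, ζ j * (v j) ^ 2
        = A + 2 * (∑ j ∈ Tᶜ, ζ j * (w j * g j)) + ∑ j ∈ Tᶜ, ζ j * (g j) ^ 2 := by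
      rw [hA, Finset.mul_sum, ← Finset.sum_add_distrib, ← Finset.sum_add_distrib]
      apply Finset.sum_congr rfl
      intro j _
      have : v j = w j + g j := by simp [hg]
      rw [this]; ring
    have h1 : A ≤ ∑ j ∈ Tᶜ, ζ j * (v j) ^ 2 := by
      rw [hexp, hsplit]
      have : 0 ≤ ∑ j ∈ Tᶜ, ζ j * (g j) ^ 2 :=
        Finset.sum_nonneg fun j _ => mul_nonneg (le_of_lt (hζ j)) (sq_nonneg _)
      linarith
    calc A ≤ ∑ j ∈ Tᶜ, ζ j * (v j) ^ 2 := h1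
      _ ≤ ∑ j ∈ Tᶜ, α * (v j) ^ 2 := by
          apply Finset.sum_le_sum
          intro j hj
          exact mul_le_mul_of_nonneg_right (hjmaxge j hj) (sq_nonneg _)
      _ = α * ∑ j ∈ Tᶜ, (v j) ^ 2 := by rw [Finset.mul_sum]
  have h2 : A ≤ α * sInf cs := by
    have : A / α ≤ sInf cs := by
      apply le_csInf hcsne
      intro s hs
      rw [div_le_iff₀ hα0]
      calc A ≤ α * s := hmin s hs
        _ = s * α := mul_comm _ _
    calc A = α * (A / α) := by field_simp
      _ ≤ α * sInf cs := mul_le_mul_of_nonneg_left this (le_of_lt hα0)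
  calc A ≤ α * sInf cs := h2
    _ ≤ α * (rhoT (Wrow U) T * q) := mul_le_mul_of_nonneg_left hsinf (le_of_lt hα0)
    _ = (rhoT (Wrow U) T * α) * q := by ring
    _ ≤ (δ * ζ kmin) * q := mul_le_mul_of_nonneg_right
        (H jmax hjmax kmin hkmin) (le_of_lt hq)
    _ = δ * (ζ kmin * q) := by ring
    _ ≤ δ * 1 := mul_le_mul_of_nonneg_left hk1 hδ
    _ = δ := mul_one δ

lemma proj_norm_sq_basis (V' : Submodule ℝ (En n)) (x : En n) :
    ‖(Submodule.orthogonalProjectionOnto V' x : En n)‖ ^ 2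
      = ∑ i, ⟪x, ((stdOrthonormalBasis ℝ ↥V' i : ↥V') : En n)⟫ ^ 2 := by
  set b := stdOrthonormalBasis ℝ ↥V' with hb
  have hP : (Submodule.orthogonalProjectionOnto V' x : En n)
      = ∑ i, ⟪((b i : ↥V') : En n), x⟫ • ((b i : ↥V') : En n) := by
    rw [b.orthogonalProjectionOnto_apply_eq_sum x, Submodule.coe_sum]
    exact Finset.sum_congr rfl fun i _ => by simp
  rw [← real_inner_self_eq_norm_sq, proj_inner x _ (Submodule.coe_mem _), hP, inner_sum]
  apply Finset.sum_congr rfl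
  intro i _
  rw [real_inner_smul_right, real_inner_comm (((b i : ↥V') : En n)) x]
  ring

lemma proj_norm_sq_decomp (V0 V : Submodule ℝ (En n)) (h0 : V0 ≤ V) (x : En n) :
    ‖(Submodule.orthogonalProjectionOnto V x : En n)‖ ^ 2
      = ‖(Submodule.orthogonalProjectionOnto V0 x : En n)‖ ^ 2
        + ‖(Submodule.orthogonalProjectionOnto (V ⊓ V0ᗮ) x : En n)‖ ^ 2 := by
  set p0 : En n := (Submodule.orthogonalProjectionOnto V0 x : En n) with hp0
  set p1 : En n := (Submodule.orthogonalProjectionOnto (V ⊓ V0ᗮ) x : En n) with hp1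
  have hp0V0 : p0 ∈ V0 := Submodule.coe_mem _
  have hp1m : p1 ∈ V ⊓ V0ᗮ := Submodule.coe_mem _
  have hmem : p0 + p1 ∈ V := Submodule.add_mem _ (h0 hp0V0) hp1m.1
  have hperp : ∀ v ∈ V, ⟪x - (p0 + p1), v⟫ = 0 := by
    intro v hv
    set Pv : En n := (Submodule.orthogonalProjectionOnto V0 v : En n) with hPv
    have hPvV0 : Pv ∈ V0 := Submodule.coe_mem _
    have hv0 : v - Pv ∈ V ⊓ V0ᗮ := by
      rw [Submodule.mem_inf]
      refine ⟨Submodule.sub_mem _ hv (h0 hPvV0), ?_⟩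
      rw [Submodule.mem_orthogonal]
      intro u hu
      rw [real_inner_comm]
      exact Submodule.starProjection_inner_eq_zero v u hu
    have hdec : v = (v - Pv) + Pv := by abel
    have t1 : ⟪x - (p0 + p1), v - Pv⟫ = 0 := by
      have a1 : ⟪x - p1, v - Pv⟫ = 0 := Submodule.starProjection_inner_eq_zero x (v - Pv) hv0
      have a2 : ⟪p0, v - Pv⟫ = 0 := by
        have := (Submodule.mem_orthogonal _ _).mp hv0.2 p0 hp0V0
        exact this
      have : x - (p0 + p1) = (x - p1) - p0 := by abel
      rw [this, inner_sub_left, a1, a2, sub_zero]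
    have t2 : ⟪x - (p0 + p1), Pv⟫ = 0 := by
      have a1 : ⟪x - p0, Pv⟫ = 0 := Submodule.starProjection_inner_eq_zero x Pv hPvV0
      have a2 : ⟪p1, Pv⟫ = 0 := by
        rw [real_inner_comm]
        exact (Submodule.mem_orthogonal _ _).mp hp1m.2 Pv hPvV0
      have : x - (p0 + p1) = (x - p0) - p1 := by abel
      rw [this, inner_sub_left, a1, a2, sub_zero]
    calc ⟪x - (p0 + p1), v⟫ = ⟪x - (p0 + p1), (v - Pv) + Pv⟫ := by rw [← hdec]
      _ = ⟪x - (p0 + p1), v - Pv⟫ + ⟪x - (p0 + p1), Pv⟫ := inner_add_right _ _ _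
      _ = 0 := by rw [t1, t2]; ring
  rw [← Submodule.starProjection_apply, Submodule.eq_starProjection_of_mem_of_inner_eq_zero hmem hperp]
  have hinner : ⟪p0, p1⟫ = 0 :=
    (Submodule.mem_orthogonal _ _).mp hp1m.2 p0 hp0V0
  rw [norm_add_sq_real, hinner]
  ring

def V0E (U : Matrix (Fin d) (Fin n) ℝ) (T : Finset (Fin n)) (ζ : Fin n → ℝ) :
    Submodule ℝ (En n) :=
  (W0 U T).map (toE.toLinearMap ∘ₗ scaleL (sqw ζ))

lemma V0E_le_Vs (U : Matrix (Fin d) (Fin n) ℝ) (T : Finset (Fin n)) (ζ : Fin n → ℝ) :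
    V0E U T ζ ≤ Vs U ζ :=
  Submodule.map_mono inf_le_left

lemma mem_V0E {U : Matrix (Fin d) (Fin n) ℝ} {T : Finset (Fin n)} {ζ : Fin n → ℝ} {v : En n} :
    v ∈ V0E U T ζ ↔ ∃ g ∈ W0 U T, v = toE (scaleL (sqw ζ) g) := by
  constructor
  · rintro ⟨g, hg, rfl⟩; exact ⟨g, hg, rfl⟩
  · rintro ⟨g, hg, rfl⟩; exact ⟨g, hg, rfl⟩

def scaleEq (s : Fin n → ℝ) (hs : ∀ j, s j ≠ 0) : (Fin n → ℝ) ≃ₗ[ℝ] (Fin n → ℝ) :=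
  LinearEquiv.ofLinear (scaleL s) (scaleL fun j => (s j)⁻¹)
    (by
      apply LinearMap.ext; intro x; funext j
      simp only [LinearMap.comp_apply, scaleL_apply, LinearMap.id_apply]
      rw [← mul_assoc, mul_inv_cancel₀ (hs j), one_mul])
    (by
      apply LinearMap.ext; intro x; funext j
      simp only [LinearMap.comp_apply, scaleL_apply, LinearMap.id_apply]
      rw [← mul_assoc, inv_mul_cancel₀ (hs j), one_mul])

lemma finrank_V0E (U : Matrix (Fin d) (Fin n) ℝ) (T : Finset (Fin n))
    (ζ : Fin n → ℝ) (hζ : ∀ j, 0 < ζ j) :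
    Module.finrank ℝ ↥(V0E U T ζ) = Module.finrank ℝ ↥(W0 U T) := by
  have hs : ∀ j, sqw ζ j ≠ 0 := fun j => ne_of_gt (Real.sqrt_pos.mpr (hζ j))
  have h : V0E U T ζ
      = (W0 U T).map (((scaleEq (sqw ζ) hs).trans toE : (Fin n → ℝ) ≃ₗ[ℝ] En n) :
          (Fin n → ℝ) →ₗ[ℝ] En n) := rfl
  rw [h]
  exact LinearEquiv.finrank_map_eq _ _

lemma sum_proj0 (U : Matrix (Fin d) (Fin n) ℝ) (T : Finset (Fin n))
    (ζ : Fin n → ℝ) (hζ : ∀ j, 0 < ζ j) :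
    ∑ j ∈ Tᶜ, ‖(Submodule.orthogonalProjectionOnto (V0E U T ζ) (EuclideanSpace.single j (1:ℝ)) : En n)‖ ^ 2
      = (Module.finrank ℝ ↥(W0 U T) : ℝ) := by
  rw [← finrank_V0E U T ζ hζ]
  set b := stdOrthonormalBasis ℝ ↥(V0E U T ζ) with hb
  have hvan : ∀ i, ∀ j ∈ T, ((b i : ↥(V0E U T ζ)) : En n) j = 0 := by
    intro i j hj
    obtain ⟨g, hg, hrep⟩ := mem_V0E.mp (Submodule.coe_mem (b i))
    rw [hrep]
    have : g j = 0 := (mem_K0.mp hg.2) j hj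
    simp [this]
  have hnorm : ∀ i, ∑ j, (((b i : ↥(V0E U T ζ)) : En n) j) ^ 2 = 1 := by
    intro i
    rw [← norm_sq_En]
    have : ‖((b i : ↥(V0E U T ζ)) : En n)‖ = 1 := by
      have := (b.orthonormal).1 i
      exact this
    rw [this]; norm_num
  calc ∑ j ∈ Tᶜ, ‖(Submodule.orthogonalProjectionOnto (V0E U T ζ) (EuclideanSpace.single j (1:ℝ)) : En n)‖ ^ 2
      = ∑ j ∈ Tᶜ, ∑ i, (((b i : ↥(V0E U T ζ)) : En n) j) ^ 2 := by
        apply Finset.sum_congr rfl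
        intro j _
        rw [proj_norm_sq_basis]
        exact Finset.sum_congr rfl fun i _ => by rw [inner_single]
    _ = ∑ i, ∑ j ∈ Tᶜ, (((b i : ↥(V0E U T ζ)) : En n) j) ^ 2 := Finset.sum_comm
    _ = ∑ i : Fin (Module.finrank ℝ ↥(V0E U T ζ)), (1:ℝ) := by
        apply Finset.sum_congr rfl
        intro i _
        have hsplit := Finset.sum_add_sum_compl T (fun j => (((b i : ↥(V0E U T ζ)) : En n) j) ^ 2)
        have hT0 : ∑ j ∈ T, (((b i : ↥(V0E U T ζ)) : En n) j) ^ 2 = 0 :=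
          Finset.sum_eq_zero fun j hj => by rw [hvan i j hj]; ring
        rw [hT0, zero_add] at hsplit
        rw [hsplit, hnorm i]
    _ = (Module.finrank ℝ ↥(V0E U T ζ) : ℝ) := by simp

lemma sumB_ge (U : Matrix (Fin d) (Fin n) ℝ) (hU : U.rank = d) (T : Finset (Fin n))
    (ζ : Fin n → ℝ) (hζ : ∀ j, 0 < ζ j) :
    (Module.finrank ℝ ↥(W0 U T) : ℝ) ≤ ∑ j ∈ Tᶜ, lev U ζ j := by
  rw [← sum_proj0 U T ζ hζ]
  apply Finset.sum_le_sum
  intro j _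
  rw [lev_eq_proj U hU ζ hζ j,
    proj_norm_sq_decomp (V0E U T ζ) (Vs U ζ) (V0E_le_Vs U T ζ)]
  exact le_add_of_nonneg_right (sq_nonneg _)

lemma finrank_Vs_le (U : Matrix (Fin d) (Fin n) ℝ) (ζ : Fin n → ℝ) :
    Module.finrank ℝ ↥(Vs U ζ) ≤ d := by
  calc Module.finrank ℝ ↥(Vs U ζ) ≤ Module.finrank ℝ ↥(Wrow U) :=
        Submodule.finrank_map_le _ _
    _ ≤ Module.finrank ℝ (Fin d → ℝ) := LinearMap.finrank_range_le _
    _ = d := Module.finrank_fin_fun ℝ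

lemma sumB_le (U : Matrix (Fin d) (Fin n) ℝ) (hU : U.rank = d) (T : Finset (Fin n))
    (ζ : Fin n → ℝ) (hζ : ∀ j, 0 < ζ j) (δ : ℝ) (hδ : 0 ≤ δ)
    (H : ∀ j ∈ Tᶜ, ∀ k ∈ T, rhoT (Wrow U) T * ζ j ≤ δ * ζ k) :
    ∑ j ∈ Tᶜ, lev U ζ j ≤ (Module.finrank ℝ ↥(W0 U T) : ℝ) + d * δ := by
  classical
  set V1 : Submodule ℝ (En n) := Vs U ζ ⊓ (V0E U T ζ)ᗮ with hV1
  have hdecomp : ∑ j ∈ Tᶜ, lev U ζ j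
      = (∑ j ∈ Tᶜ, ‖(Submodule.orthogonalProjectionOnto (V0E U T ζ) (EuclideanSpace.single j (1:ℝ)) : En n)‖ ^ 2)
      + ∑ j ∈ Tᶜ, ‖(Submodule.orthogonalProjectionOnto V1 (EuclideanSpace.single j (1:ℝ)) : En n)‖ ^ 2 := by
    rw [← Finset.sum_add_distrib]
    apply Finset.sum_congr rfl
    intro j _
    rw [lev_eq_proj U hU ζ hζ j,
      proj_norm_sq_decomp (V0E U T ζ) (Vs U ζ) (V0E_le_Vs U T ζ)]
  rw [hdecomp, sum_proj0 U T ζ hζ]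
  have hbound : ∑ j ∈ Tᶜ, ‖(Submodule.orthogonalProjectionOnto V1 (EuclideanSpace.single j (1:ℝ)) : En n)‖ ^ 2
      ≤ d * δ := by
    set b := stdOrthonormalBasis ℝ ↥V1 with hb
    have hswap : ∑ j ∈ Tᶜ, ‖(Submodule.orthogonalProjectionOnto V1 (EuclideanSpace.single j (1:ℝ)) : En n)‖ ^ 2
        = ∑ i, ∑ j ∈ Tᶜ, (((b i : ↥V1) : En n) j) ^ 2 := by
      rw [← Finset.sum_comm]
      apply Finset.sum_congr rfl
      intro j _
      rw [proj_norm_sq_basis]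
      exact Finset.sum_congr rfl fun i _ => by rw [inner_single]
    rw [hswap]
    have hper : ∀ i, ∑ j ∈ Tᶜ, (((b i : ↥V1) : En n) j) ^ 2 ≤ δ := by
      intro i
      set c : En n := ((b i : ↥V1) : En n) with hc
      have hcm : c ∈ V1 := Submodule.coe_mem _
      obtain ⟨w, hwW, hrep⟩ := mem_Vs.mp hcm.1
      have hcj : ∀ j, c j = Real.sqrt (ζ j) * w j := by
        intro j; rw [hrep]; rfl
      have hcsq : ∀ j, (c j) ^ 2 = ζ j * (w j) ^ 2 := by
        intro j
        rw [hcj j, mul_pow, Real.sq_sqrt (le_of_lt (hζ j))]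
      have hunit : ∑ j, ζ j * (w j) ^ 2 = 1 := by
        rw [← Finset.sum_congr rfl fun j (_ : j ∈ Finset.univ) => hcsq j, ← norm_sq_En]
        have hn : ‖c‖ = 1 := by
          have := (b.orthonormal).1 i
          exact this
        rw [hn]; norm_num
      have horth : ∀ g ∈ W0 U T, ∑ j, ζ j * (w j * g j) = 0 := by
        intro g hg
        have hgmem : toE (scaleL (sqw ζ) g) ∈ V0E U T ζ := mem_V0E.mpr ⟨g, hg, rfl⟩
        have h0 := (Submodule.mem_orthogonal _ _).mp hcm.2 _ hgmem
        rw [inner_En] at h0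
        rw [← h0]
        apply Finset.sum_congr rfl
        intro j _
        rw [hcj j]
        simp only [toE_apply, scaleL_apply, sqw]
        rw [show Real.sqrt (ζ j) * g j * (Real.sqrt (ζ j) * w j)
            = (Real.sqrt (ζ j) * Real.sqrt (ζ j)) * (w j * g j) by ring,
          Real.mul_self_sqrt (le_of_lt (hζ j))]
      have := unit_vec_bound U T ζ hζ δ hδ H w hwW horth hunit
      calc ∑ j ∈ Tᶜ, (c j) ^ 2 = ∑ j ∈ Tᶜ, ζ j * (w j) ^ 2 :=
            Finset.sum_congr rfl fun j _ => hcsq j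
        _ ≤ δ := this
    calc ∑ i, ∑ j ∈ Tᶜ, (((b i : ↥V1) : En n) j) ^ 2
        ≤ ∑ _i : Fin (Module.finrank ℝ ↥V1), δ := Finset.sum_le_sum fun i _ => hper i
      _ = (Module.finrank ℝ ↥V1 : ℝ) * δ := by
          rw [Finset.sum_const, Finset.card_univ, Fintype.card_fin, nsmul_eq_mul]
      _ ≤ d * δ := by
          apply mul_le_mul_of_nonneg_right _ hδ
          have h1 : Module.finrank ℝ ↥V1 ≤ Module.finrank ℝ ↥(Vs U ζ) :=
            Submodule.finrank_mono inf_le_left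
          have h2 := finrank_Vs_le U ζ
          exact_mod_cast le_trans h1 h2
  linarith

lemma step_bound (U : Matrix (Fin d) (Fin n) ℝ) (hU : U.rank = d)
    (T : Finset (Fin n)) (ζ : Fin n → ℝ) (hζ : ∀ j, 0 < ζ j)
    (γ : ℝ) (hγ : 1 ≤ γ) (δ : ℝ) (hδ : 0 ≤ δ)
    (H : ∀ j ∈ Tᶜ, ∀ k ∈ T, rhoT (Wrow U) T * (γ * ζ j) ≤ δ * ζ k) :
    ∑ j, |lev U ζ j - lev U (fun k => if k ∈ T then ζ k else γ * ζ k) j|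
      ≤ 2 * d * δ := by
  classical
  have hγ0 : (0:ℝ) < γ := lt_of_lt_of_le zero_lt_one hγ
  set ζ' := fun k => if k ∈ T then ζ k else γ * ζ k with hζ'def
  have hζ' : ∀ k, 0 < ζ' k := by
    intro k
    by_cases h : k ∈ T <;> simp only [hζ'def, h, if_true, if_false]
    · exact hζ k
    · exact mul_pos hγ0 (hζ k)
  obtain ⟨hmonoT, hmonoB⟩ := lev_mono_s16 U hU ζ hζ T γ hγ
  have hsum : ∑ j, lev U ζ j = (d:ℝ) := sum_lev U hU ζ hζ
  have hsum' : ∑ j, lev U ζ' j = (d:ℝ) := sum_lev U hU ζ' hζ'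
  have H' : ∀ j ∈ Tᶜ, ∀ k ∈ T, rhoT (Wrow U) T * ζ' j ≤ δ * ζ' k := by
    intro j hj k hk
    have hjT : j ∉ T := Finset.mem_compl.mp hj
    have h1 : ζ' j = γ * ζ j := by simp [hζ'def, hjT]
    have h2 : ζ' k = ζ k := by simp [hζ'def, hk]
    rw [h1, h2]
    exact H j hj k hk
  have hup := sumB_le U hU T ζ' hζ' δ hδ H'
  have hlo := sumB_ge U hU T ζ hζ
  have hT : ∑ j ∈ T, |lev U ζ j - lev U ζ' j| = ∑ j ∈ T, (lev U ζ j - lev U ζ' j) := by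
    apply Finset.sum_congr rfl
    intro j hj
    exact abs_of_nonneg (sub_nonneg.mpr (hmonoT j hj))
  have hB : ∑ j ∈ Tᶜ, |lev U ζ j - lev U ζ' j|
      = ∑ j ∈ Tᶜ, (lev U ζ' j - lev U ζ j) := by
    apply Finset.sum_congr rfl
    intro j hj
    rw [abs_sub_comm]
    exact abs_of_nonneg (sub_nonneg.mpr (hmonoB j (Finset.mem_compl.mp hj)))
  have hsplitabs := Finset.sum_add_sum_compl T (fun j => |lev U ζ j - lev U ζ' j|)
  have hsplit1 := Finset.sum_add_sum_compl T (fun j => lev U ζ j)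
  have hsplit2 := Finset.sum_add_sum_compl T (fun j => lev U ζ' j)
  have hTsub : ∑ j ∈ T, (lev U ζ j - lev U ζ' j)
      = ∑ j ∈ T, lev U ζ j - ∑ j ∈ T, lev U ζ' j := Finset.sum_sub_distrib _ _
  have hBsub : ∑ j ∈ Tᶜ, (lev U ζ' j - lev U ζ j)
      = ∑ j ∈ Tᶜ, lev U ζ' j - ∑ j ∈ Tᶜ, lev U ζ j := Finset.sum_sub_distrib _ _
  rw [← hsplitabs, hT, hB, hTsub, hBsub]
  rw [hsum] at hsplit1
  rw [hsum'] at hsplit2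
  linarith

/-- positions of sorted "bad gaps" -/
noncomputable def badSet (κ : ℝ) (σ : Equiv.Perm (Fin n)) (ζ : Fin n → ℝ) : Finset (Fin n) :=
  @Finset.filter _
    (fun i => ∃ h : (i:ℕ)+1 < n, κ * ζ (σ i) < ζ (σ ⟨(i:ℕ)+1, h⟩))
    (Classical.decPred _) Finset.univ

lemma mem_badSet {κ : ℝ} {σ : Equiv.Perm (Fin n)} {ζ : Fin n → ℝ} {i : Fin n} :
    i ∈ badSet κ σ ζ ↔ ∃ h : (i:ℕ)+1 < n, κ * ζ (σ i) < ζ (σ ⟨(i:ℕ)+1, h⟩) := by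
  unfold badSet
  rw [@Finset.mem_filter _ _ (Classical.decPred _)]
  simp

lemma driver (U : Matrix (Fin d) (Fin n) ℝ) (hU : U.rank = d)
    (δ : ℝ) (hδ0 : 0 < δ) (hδ1 : δ ≤ 1) (σ : Equiv.Perm (Fin n)) :
    ∀ N : ℕ, ∀ ζ : Fin n → ℝ, (∀ j, 0 < ζ j) →
      Monotone (fun a => ζ (σ a)) →
      (badSet (max (rho U) 1 / δ) σ ζ).card ≤ N →
      ∃ zh : Fin n → ℝ, (∀ j, 0 < zh j) ∧
        (∑ j, |lev U ζ j - lev U zh j|) ≤ 2 * d * δ * N ∧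
        (∀ j k, zh j / zh k ≤ (max (rho U) 1 / δ) ^ n) := by
  classical
  set ρb : ℝ := max (rho U) 1 with hρb
  set κ : ℝ := ρb / δ with hκ
  have hρb1 : (1:ℝ) ≤ ρb := le_max_right _ _
  have hρb0 : (0:ℝ) < ρb := lt_of_lt_of_le zero_lt_one hρb1
  have hκ1 : (1:ℝ) ≤ κ := by
    rw [hκ, le_div_iff₀ hδ0, one_mul]
    exact le_trans hδ1 hρb1
  have hκ0 : (0:ℝ) < κ := lt_of_lt_of_le zero_lt_one hκ1
  intro N
  induction N with
  | zero =>
    intro ζ hζ hmono hcard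
    refine ⟨ζ, hζ, by simp, ?_⟩
    have hempty : badSet κ σ ζ = ∅ := Finset.card_eq_zero.mp (Nat.le_zero.mp hcard)
    have hgood : ∀ (t : ℕ) (ht : t + 1 < n),
        ζ (σ ⟨t+1, ht⟩) ≤ κ * ζ (σ ⟨t, lt_trans (Nat.lt_succ_self t) ht⟩) := by
      intro t ht
      by_contra hlt
      push_neg at hlt
      have hmem : (⟨t, lt_trans (Nat.lt_succ_self t) ht⟩ : Fin n) ∈ badSet κ σ ζ :=
        mem_badSet.mpr ⟨ht, hlt⟩
      rw [hempty] at hmem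
      exact absurd hmem (Finset.notMem_empty _)
    intro j k
    have h0 : 0 < n := j.pos
    have hchain : ∀ (t : ℕ) (ht : t < n), ζ (σ ⟨t, ht⟩) ≤ κ ^ t * ζ (σ ⟨0, h0⟩) := by
      intro t
      induction t with
      | zero => intro ht; simp
      | succ t ih =>
        intro ht
        have ht' : t < n := lt_trans (Nat.lt_succ_self t) ht
        calc ζ (σ ⟨t+1, ht⟩) ≤ κ * ζ (σ ⟨t, ht'⟩) := hgood t ht
          _ ≤ κ * (κ ^ t * ζ (σ ⟨0, h0⟩)) :=
              mul_le_mul_of_nonneg_left (ih ht') (le_of_lt hκ0)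
          _ = κ ^ (t+1) * ζ (σ ⟨0, h0⟩) := by ring
    have hlast : (n:ℕ) - 1 < n := Nat.pred_lt (Nat.pos_iff_ne_zero.mp h0)
    have hj : ζ j ≤ κ ^ (n-1) * ζ (σ ⟨0, h0⟩) := by
      have h1 : ζ j = ζ (σ (σ.symm j)) := by rw [Equiv.apply_symm_apply]
      rw [h1]
      calc ζ (σ (σ.symm j)) ≤ ζ (σ ⟨n-1, hlast⟩) := by
            apply hmono
            rw [Fin.le_def]
            exact Nat.le_pred_of_lt (σ.symm j).isLt
        _ ≤ κ ^ (n-1) * ζ (σ ⟨0, h0⟩) := hchain (n-1) hlast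
    have hk : ζ (σ ⟨0, h0⟩) ≤ ζ k := by
      have h1 : ζ k = ζ (σ (σ.symm k)) := by rw [Equiv.apply_symm_apply]
      rw [h1]
      apply hmono
      rw [Fin.le_def]
      exact Nat.zero_le _
    rw [div_le_iff₀ (hζ k)]
    calc ζ j ≤ κ ^ (n-1) * ζ (σ ⟨0, h0⟩) := hj
      _ ≤ κ ^ (n-1) * ζ k := mul_le_mul_of_nonneg_left hk (le_of_lt (pow_pos hκ0 _))
      _ ≤ κ ^ n * ζ k := by
          apply mul_le_mul_of_nonneg_right _ (le_of_lt (hζ k))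
          exact pow_le_pow_right₀ hκ1 (Nat.sub_le n 1)
  | succ N ih =>
    intro ζ hζ hmono hcard
    by_cases hc : (badSet κ σ ζ).card ≤ N
    · obtain ⟨zh, h1, h2, h3⟩ := ih ζ hζ hmono hc
      refine ⟨zh, h1, le_trans h2 ?_, h3⟩
      have : (0:ℝ) ≤ 2 * d * δ := by positivity
      push_cast
      nlinarith
    · -- there is a bad gap
      have hne : (badSet κ σ ζ).Nonempty := by
        rw [Finset.nonempty_iff_ne_empty]
        intro hemp
        rw [hemp] at hc
        simp at hc
      obtain ⟨i, hi⟩ := hne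
      obtain ⟨hi1, hbad⟩ := mem_badSet.mp hi
      set isucc : Fin n := ⟨(i:ℕ)+1, hi1⟩ with hisucc
      set T : Finset (Fin n) := Finset.univ.filter (fun j => i < σ.symm j) with hT
      have mem_T : ∀ j, j ∈ T ↔ i < σ.symm j := by
        intro j; rw [hT, Finset.mem_filter]; simp
      have mem_Tc : ∀ j, j ∈ Tᶜ ↔ σ.symm j ≤ i := by
        intro j
        rw [Finset.mem_compl, mem_T, not_lt]
      set γ : ℝ := ζ (σ isucc) / (κ * ζ (σ i)) with hγ
      have hden : 0 < κ * ζ (σ i) := mul_pos hκ0 (hζ _)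
      have hγ1 : 1 ≤ γ := by
        rw [hγ, le_div_iff₀ hden, one_mul]
        exact le_of_lt hbad
      have hγ0 : (0:ℝ) < γ := lt_of_lt_of_le zero_lt_one hγ1
      have hγsi : γ * ζ (σ i) = ζ (σ isucc) / κ := by
        rw [hγ]
        rw [div_mul_eq_mul_div, mul_div_mul_right _ _ (ne_of_gt (hζ (σ i)))]
      set ζ₁ : Fin n → ℝ := fun k => if k ∈ T then ζ k else γ * ζ k with hζ₁
      have hζ₁pos : ∀ k, 0 < ζ₁ k := by
        intro k
        by_cases h : k ∈ T <;> simp only [hζ₁, h, if_true, if_false]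
        · exact hζ k
        · exact mul_pos hγ0 (hζ k)
      have hval : ∀ a : Fin n, ζ₁ (σ a) = if i < a then ζ (σ a) else γ * ζ (σ a) := by
        intro a
        simp only [hζ₁, mem_T]
        rw [Equiv.symm_apply_apply]
      -- the step hypothesis
      have Hstep : ∀ j ∈ Tᶜ, ∀ k ∈ T, rhoT (Wrow U) T * (γ * ζ j) ≤ δ * ζ k := by
        intro j hj k hk
        have hjv : ζ j ≤ ζ (σ i) := by
          have h1 : ζ j = ζ (σ (σ.symm j)) := by rw [Equiv.apply_symm_apply]
          rw [h1]
          exact hmono ((mem_Tc j).mp hj)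
        have hkv : ζ (σ isucc) ≤ ζ k := by
          have h1 : ζ k = ζ (σ (σ.symm k)) := by rw [Equiv.apply_symm_apply]
          rw [h1]
          apply hmono
          rw [Fin.le_def]
          exact (mem_T k).mp hk
        have hrho_le : rhoT (Wrow U) T ≤ ρb := le_trans (rhoT_le_rho U T) (le_max_left _ _)
        have hrho0 : 0 ≤ rhoT (Wrow U) T := rhoT_nonneg _ _
        have hstep1 : γ * ζ j ≤ ζ (σ isucc) / κ := by
          rw [← hγsi]
          exact mul_le_mul_of_nonneg_left hjv (le_of_lt hγ0)
        have hstep2 : ρb * (ζ (σ isucc) / κ) = δ * ζ (σ isucc) := by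
          rw [hκ]
          field_simp
        calc rhoT (Wrow U) T * (γ * ζ j) ≤ ρb * (γ * ζ j) :=
              mul_le_mul_of_nonneg_right hrho_le
                (le_of_lt (mul_pos hγ0 (hζ j)))
          _ ≤ ρb * (ζ (σ isucc) / κ) :=
              mul_le_mul_of_nonneg_left hstep1 (le_of_lt hρb0)
          _ = δ * ζ (σ isucc) := hstep2
          _ ≤ δ * ζ k := mul_le_mul_of_nonneg_left hkv (le_of_lt hδ0)
      have hstepbound := step_bound U hU T ζ hζ γ hγ1 δ (le_of_lt hδ0) Hstep
      -- monotonicity of the new vector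
      have hmono₁ : Monotone (fun a => ζ₁ (σ a)) := by
        intro a b hab
        simp only [hval]
        by_cases ha : i < a
        · have hb : i < b := lt_of_lt_of_le ha hab
          simp only [ha, hb, if_true]
          exact hmono hab
        · by_cases hb : i < b
          · simp only [ha, hb, if_true, if_false]
            have h1 : γ * ζ (σ a) ≤ γ * ζ (σ i) :=
              mul_le_mul_of_nonneg_left (hmono (not_lt.mp ha)) (le_of_lt hγ0)
            have h2 : ζ (σ isucc) ≤ ζ (σ b) := by
              apply hmono
              rw [Fin.le_def]
              exact hb
            have h3 : ζ (σ isucc) / κ ≤ ζ (σ isucc) :=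
              div_le_self (le_of_lt (hζ _)) hκ1
            rw [hγsi] at h1
            linarith
          · simp only [ha, hb, if_false]
            exact mul_le_mul_of_nonneg_left (hmono hab) (le_of_lt hγ0)
      -- the bad set shrinks
      have hsubset : badSet κ σ ζ₁ ⊆ (badSet κ σ ζ).erase i := by
        intro g hg
        obtain ⟨hg1, hg2⟩ := mem_badSet.mp hg
        set gsucc : Fin n := ⟨(g:ℕ)+1, hg1⟩ with hgsucc
        rcases lt_trichotomy g i with hlt | heq | hgt
        · -- g < i
          have hgs_le : ¬ i < gsucc := by
            rw [not_lt, Fin.le_def]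
            exact Fin.lt_iff_val_lt_val.mp hlt
          have hg_le : ¬ i < g := not_lt.mpr (le_of_lt hlt)
          rw [hval g, hval gsucc] at hg2
          simp only [hg_le, hgs_le, if_false] at hg2
          have hg2' : κ * ζ (σ g) < ζ (σ gsucc) := by
            have h := hg2
            rw [show κ * (γ * ζ (σ g)) = γ * (κ * ζ (σ g)) by ring] at h
            exact lt_of_mul_lt_mul_left h (le_of_lt hγ0)
          exact Finset.mem_erase.mpr ⟨ne_of_lt hlt, mem_badSet.mpr ⟨hg1, hg2'⟩⟩
        · -- g = i : impossible
          exfalso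
          have h1 : ¬ i < g := by rw [heq]; exact lt_irrefl i
          have h2 : i < gsucc := by
            rw [Fin.lt_iff_val_lt_val]
            have e1 : ((gsucc : Fin n) : ℕ) = (g:ℕ)+1 := rfl
            have e2 : (g:ℕ) = (i:ℕ) := by rw [heq]
            omega
          rw [hval g, hval gsucc] at hg2
          simp only [h1, h2, if_true, if_false] at hg2
          have hgs : gsucc = isucc := by
            rw [Fin.ext_iff]
            have e1 : ((gsucc : Fin n) : ℕ) = (g:ℕ)+1 := rfl
            have e2 : ((isucc : Fin n) : ℕ) = (i:ℕ)+1 := rfl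
            have e3 : (g:ℕ) = (i:ℕ) := by rw [heq]
            omega
          have hgi : ζ (σ g) = ζ (σ i) := by rw [heq]
          rw [hgs, hgi, hγsi] at hg2
          rw [show κ * (ζ (σ isucc) / κ) = ζ (σ isucc) by field_simp] at hg2
          exact lt_irrefl _ hg2
        · -- i < g
          have h1 : i < g := hgt
          have h2 : i < gsucc := by
            rw [Fin.lt_iff_val_lt_val]
            calc (i:ℕ) < g := Fin.lt_iff_val_lt_val.mp hgt
              _ < (g:ℕ)+1 := Nat.lt_succ_self _
          rw [hval g, hval gsucc] at hg2
          simp only [h1, h2, if_true] at hg2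
          exact Finset.mem_erase.mpr ⟨ne_of_gt hgt, mem_badSet.mpr ⟨hg1, hg2⟩⟩
      have hcard₁ : (badSet κ σ ζ₁).card ≤ N := by
        calc (badSet κ σ ζ₁).card ≤ ((badSet κ σ ζ).erase i).card :=
              Finset.card_le_card hsubset
          _ = (badSet κ σ ζ).card - 1 := Finset.card_erase_of_mem hi
          _ ≤ N := by omega
      obtain ⟨zh, hz1, hz2, hz3⟩ := ih ζ₁ hζ₁pos hmono₁ hcard₁
      refine ⟨zh, hz1, ?_, hz3⟩
      calc ∑ j, |lev U ζ j - lev U zh j|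
          ≤ ∑ j, (|lev U ζ j - lev U ζ₁ j| + |lev U ζ₁ j - lev U zh j|) := by
            apply Finset.sum_le_sum
            intro j _
            exact abs_sub_le _ _ _
        _ = (∑ j, |lev U ζ j - lev U ζ₁ j|) + ∑ j, |lev U ζ₁ j - lev U zh j| :=
            Finset.sum_add_distrib
        _ ≤ 2 * d * δ + 2 * d * δ * N := add_le_add hstepbound hz2
        _ = 2 * d * δ * (N + 1) := by ring
        _ = 2 * d * δ * ((N:ℕ)+1 : ℕ) := by push_cast; ring

/-- Regularization: any scaling can be replaced by one of bounded multiplicative range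
`(max{ρ(U),1}/δ)^n` while changing the leverage scores by at most `2ndδ` in `ℓ¹`. -/
theorem regularization {d n : ℕ} (U : Matrix (Fin d) (Fin n) ℝ) (hU : U.rank = d)
    (z : Fin n → ℝ) (hz : ∀ j, 0 < z j) (δ : ℝ) (hδ0 : 0 < δ) (hδ1 : δ ≤ 1) :
    ∃ zhat : Fin n → ℝ, (∀ j, 0 < zhat j) ∧
      (∑ j, |lev U z j - lev U zhat j|) ≤ 2 * n * d * δ ∧
      (∀ j k, zhat j / zhat k ≤ (max (rho U) 1 / δ) ^ n) := by
  set σ := Tuple.sort z with hσ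
  have hmono : Monotone (fun a => z (σ a)) := Tuple.monotone_sort z
  obtain ⟨zh, h1, h2, h3⟩ := driver U hU δ hδ0 hδ1 σ
    ((badSet (max (rho U) 1 / δ) σ z).card) z hz hmono le_rfl
  refine ⟨zh, h1, ?_, h3⟩
  have hcard : ((badSet (max (rho U) 1 / δ) σ z).card : ℝ) ≤ (n : ℝ) := by
    have := Finset.card_le_card (Finset.subset_univ (badSet (max (rho U) 1 / δ) σ z))
    rw [Finset.card_univ, Fintype.card_fin] at this
    exact_mod_cast this
  have hpos : (0:ℝ) ≤ 2 * d * δ := by positivity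
  calc ∑ j, |lev U z j - lev U zh j|
      ≤ 2 * d * δ * ((badSet (max (rho U) 1 / δ) σ z).card : ℝ) := h2
    _ ≤ 2 * d * δ * (n : ℝ) := mul_le_mul_of_nonneg_left hcard hpos
    _ = 2 * n * d * δ := by ring
end RegAux
end
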